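/- arXiv:2605.18783 — 3 statements merged into one kernel-verified Lean document; each statement's English description precedes it below -/
import Mathlib

section
/- Vizing's Adjacency Lemma: Let G be a Class 2 graph with maximum degree Δ and let e = xy be a critical edge of G (i.e., χ'(G − e) < χ'(G)). Then x has at least Δ − d_G(y) + 1 neighbors of degree Δ in V(G) \ {y}. -/
open SimpleGraph

/-- A proper `k`-edge-coloring of `G` with colors in `{1,…,k}`: every edge receives a color
in `{1,…,k}` and distinct edges sharing a vertex receive distinct colors. -/
def IsProperEdgeColoring {V : Type*} (G : SimpleGraph V) (k : ℕ) (c : Sym2 V → ℕ) : Prop :=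
  (∀ e ∈ G.edgeSet, c e ∈ Finset.Icc 1 k) ∧
  ∀ e ∈ G.edgeSet, ∀ f ∈ G.edgeSet, e ≠ f → (∃ v, v ∈ e ∧ v ∈ f) → c e ≠ c f

/-- `G` admits a proper `k`-edge-coloring. -/
def EdgeColorable {V : Type*} (G : SimpleGraph V) (k : ℕ) : Prop :=
  ∃ c, IsProperEdgeColoring G k c

/-- The chromatic index of `G`: the least `k` such that `G` is `k`-edge-colorable. -/
noncomputable def chromIndex {V : Type*} (G : SimpleGraph V) : ℕ :=
  sInf {k | EdgeColorable G k}


section VAL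
set_option linter.unusedSectionVars false

variable {V : Type*} [Fintype V]

open Classical in
noncomputable def colorsAt (G' : SimpleGraph V) (c : Sym2 V → ℕ) (w : V) : Finset ℕ :=
  (Finset.univ.filter fun v => G'.Adj w v).image fun v => c s(w, v)

noncomputable def missC (G' : SimpleGraph V) (k : ℕ) (c : Sym2 V → ℕ) (w : V) : Finset ℕ :=
  (Finset.Icc 1 k) \ colorsAt G' c w

lemma mem_colorsAt {G' : SimpleGraph V} {c : Sym2 V → ℕ} {w : V} {γ : ℕ} :
    γ ∈ colorsAt G' c w ↔ ∃ v, G'.Adj w v ∧ c s(w, v) = γ := by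
  classical
  simp [colorsAt]

lemma mem_missC {G' : SimpleGraph V} {k : ℕ} {c : Sym2 V → ℕ} {w : V} {γ : ℕ} :
    γ ∈ missC G' k c w ↔ γ ∈ Finset.Icc 1 k ∧ ∀ v, G'.Adj w v → c s(w, v) ≠ γ := by
  simp only [missC, Finset.mem_sdiff, mem_colorsAt]
  push_neg
  constructor
  · rintro ⟨h1, h2⟩; exact ⟨h1, fun v hv => h2 v hv⟩
  · rintro ⟨h1, h2⟩; exact ⟨h1, fun v hv => h2 v hv⟩

lemma missC_subset_Icc {G' : SimpleGraph V} {k : ℕ} {c : Sym2 V → ℕ} {w : V} {γ : ℕ}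
    (h : γ ∈ missC G' k c w) : γ ∈ Finset.Icc 1 k := (Finset.mem_sdiff.1 h).1

/-- distinct edges at a vertex get distinct colors -/
lemma proper_at {G' : SimpleGraph V} {k : ℕ} {c : Sym2 V → ℕ}
    (h : IsProperEdgeColoring G' k c) {w a b : V} (ha : G'.Adj w a) (hb : G'.Adj w b)
    (hab : a ≠ b) : c s(w, a) ≠ c s(w, b) := by
  apply h.2 _ ((G'.mem_edgeSet).2 ha) _ ((G'.mem_edgeSet).2 hb)
  · intro he
    rcases Sym2.eq_iff.1 he with ⟨-, h2⟩ | ⟨h1, h2⟩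
    · exact hab h2
    · exact hab (h2.trans h1)
  · exact ⟨w, Sym2.mem_mk_left _ _, Sym2.mem_mk_left _ _⟩

open Classical in
lemma card_missC {G' : SimpleGraph V} {k : ℕ} {c : Sym2 V → ℕ} (w : V) :
    k - (Finset.univ.filter fun v => G'.Adj w v).card ≤ (missC G' k c w).card := by
  have h1 : (colorsAt G' c w).card ≤ (Finset.univ.filter fun v => G'.Adj w v).card := by
    classical
    have := Finset.card_image_le (s := Finset.univ.filter fun v => G'.Adj w v)
      (f := fun v => c s(w, v))
    simpa [colorsAt] using this
  have h2 : (Finset.Icc 1 k).card - (colorsAt G' c w).card ≤ (missC G' k c w).card :=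
    Finset.le_card_sdiff _ _
  have h3 : (Finset.Icc 1 k).card = k := by simp
  omega


/-! ### Fan chains -/

variable {G : SimpleGraph V} {x y : V}

/-- A fan chain `[z_t, …, z_1, y]`: each element is a neighbor of `x`, and the color of the
edge from `x` to an element is missing at the next element. -/
def FanChain (G : SimpleGraph V) (x y : V) (k : ℕ) (c : Sym2 V → ℕ) : List V → Prop
  | [] => False
  | [v] => v = y
  | v :: w :: r => G.Adj x v ∧ v ≠ y ∧ c s(x, v) ∈ missC (G.deleteEdges {s(x, y)}) k c w ∧
      FanChain G x y k c (w :: r)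

variable {k : ℕ} {c : Sym2 V → ℕ}

lemma gd_adj {a b : V} : (G.deleteEdges {s(x, y)}).Adj a b ↔ G.Adj a b ∧ s(a, b) ≠ s(x, y) := by
  simp [deleteEdges_adj]

lemma gd_adj_x {z : V} (hz : G.Adj x z) (hzy : z ≠ y) : (G.deleteEdges {s(x, y)}).Adj x z := by
  rw [gd_adj]
  refine ⟨hz, fun h => ?_⟩
  rcases Sym2.eq_iff.1 h with ⟨-, h2⟩ | ⟨h1, h2⟩
  · exact hzy h2
  · exact hz.ne' h2

lemma fanChain_ne_nil {l : List V} (h : FanChain G x y k c l) : l ≠ [] := by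
  rintro rfl; exact h

lemma fanChain_mem {l : List V} (h : FanChain G x y k c l) :
    ∀ z ∈ l, z = y ∨ (G.Adj x z ∧ z ≠ y) := by
  induction l with
  | nil => exact absurd h (by simp [FanChain])
  | cons v r ih =>
    intro z hz
    match r, h with
    | [], h => rcases List.mem_singleton.1 hz with rfl; exact Or.inl h
    | w :: r', ⟨h1, h2, h3, h4⟩ =>
      rcases List.mem_cons.1 hz with rfl | hz
      · exact Or.inr ⟨h1, h2⟩
      · exact ih h4 z hz

lemma fanChain_mem_ne_x (hxy : G.Adj x y) {l : List V} (h : FanChain G x y k c l) :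
    ∀ z ∈ l, z ≠ x := by
  intro z hz
  rcases fanChain_mem h z hz with rfl | ⟨ha, -⟩
  · exact hxy.ne'
  · exact ha.ne'

lemma fanChain_mem_adj (hxy : G.Adj x y) {l : List V} (h : FanChain G x y k c l) :
    ∀ z ∈ l, G.Adj x z := by
  intro z hz
  rcases fanChain_mem h z hz with rfl | ⟨ha, -⟩
  · exact hxy
  · exact ha

lemma fanChain_tail {v : V} {r : List V} (h : FanChain G x y k c (v :: r)) (hr : r ≠ []) :
    FanChain G x y k c r := by
  match r, h with
  | [], h => exact absurd rfl hr
  | w :: r', ⟨h1, h2, h3, h4⟩ => exact h4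

lemma fanChain_suffix {l l' : List V} (h : FanChain G x y k c l) (hs : l' <:+ l)
    (hne : l' ≠ []) : FanChain G x y k c l' := by
  obtain ⟨l₁, rfl⟩ := hs
  induction l₁ with
  | nil => exact h
  | cons a t ih =>
    apply ih
    apply fanChain_tail h
    intro hn
    exact hne (by simpa using (List.append_eq_nil_iff.1 hn).2)

lemma fanChain_last {l : List V} (h : FanChain G x y k c l) (hne : l ≠ []) :
    l.getLast hne = y := by
  induction l with
  | nil => exact absurd h (by simp [FanChain])
  | cons v r ih =>
    match r, h with
    | [], h => exact h
    | w :: r', ⟨h1, h2, h3, h4⟩ => rw [List.getLast_cons (by simp)]; exact ih h4 (by simp)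

lemma fanChain_y_mem {l : List V} (h : FanChain G x y k c l) : y ∈ l := by
  have hne := fanChain_ne_nil h
  rw [← fanChain_last h hne]
  exact List.getLast_mem hne

lemma fanChain_decomp {l l₁ l₂ : List V} {v w : V} (h : FanChain G x y k c l)
    (hd : l = l₁ ++ v :: w :: l₂) :
    G.Adj x v ∧ v ≠ y ∧ c s(x, v) ∈ missC (G.deleteEdges {s(x, y)}) k c w ∧
      FanChain G x y k c (w :: l₂) := by
  subst hd
  have := fanChain_suffix h (l' := v :: w :: l₂) ⟨l₁, rfl⟩ (by simp)
  exact this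

/-- an element of a fan chain is the head of a suffix fan chain -/
lemma fanChain_to_head {l : List V} (h : FanChain G x y k c l) {z : V} (hz : z ∈ l) :
    ∃ l', l' <:+ l ∧ l'.head? = some z ∧ FanChain G x y k c l' := by
  obtain ⟨s, t, rfl⟩ := List.append_of_mem hz
  exact ⟨z :: t, ⟨s, rfl⟩, rfl, fanChain_suffix h ⟨s, rfl⟩ (by simp)⟩


/-! ### The shift recoloring along a fan chain -/

lemma sxz_inj {x a b : V} (ha : a ≠ x) (hb : b ≠ x) : s(x, a) = s(x, b) ↔ a = b := by
  constructor
  · intro h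
    rcases Sym2.eq_iff.1 h with ⟨-, h2⟩ | ⟨h1, h2⟩
    · exact h2
    · exact absurd h2 ha
  · rintro rfl; rfl

lemma next_unique {β : Type*} {v z b : β} :
    ∀ {l₁ l₁' : List β} {l₂ l₂' : List β}, (l₁ ++ v :: z :: l₂).Nodup →
      l₁ ++ v :: z :: l₂ = l₁' ++ v :: b :: l₂' → z = b
  | [], [], l₂, l₂', _, h2 => by
    simp only [List.nil_append, List.cons.injEq] at h2
    exact h2.2.1
  | [], a :: t', l₂, l₂', hnd, h2 => by
    simp only [List.nil_append, List.cons_append] at h2 hnd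
    injection h2 with h3 h4
    exfalso
    have hv : v ∈ z :: l₂ := by rw [h4]; simp
    exact (List.nodup_cons.1 hnd).1 hv
  | a :: t, [], l₂, l₂', hnd, h2 => by
    simp only [List.nil_append, List.cons_append] at h2 hnd
    injection h2 with h3 h4
    exfalso
    have hv : a ∈ t ++ v :: z :: l₂ := by rw [h3]; simp
    exact (List.nodup_cons.1 hnd).1 hv
  | a :: t, a' :: t', l₂, l₂', hnd, h2 => by
    simp only [List.cons_append] at h2 hnd
    injection h2 with h3 h4
    exact next_unique (List.nodup_cons.1 hnd).2 h4

open Classical in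
noncomputable def shiftC (x : V) (c : Sym2 V → ℕ) : ℕ → List V → Sym2 V → ℕ
  | _, [], e => c e
  | γ, v :: r, e => if e = s(x, v) then γ else shiftC x c (c s(x, v)) r e

lemma shiftC_notmem {x : V} {c : Sym2 V → ℕ} {γ : ℕ} {l : List V} {e : Sym2 V}
    (h : ∀ z ∈ l, e ≠ s(x, z)) : shiftC x c γ l e = c e := by
  induction l generalizing γ with
  | nil => rfl
  | cons v r ih =>
    rw [shiftC, if_neg (h v (by simp))]
    exact ih fun z hz => h z (by simp [hz])

lemma shiftC_head {x : V} {c : Sym2 V → ℕ} {γ : ℕ} {v : V} {r : List V} :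
    shiftC x c γ (v :: r) s(x, v) = γ := by
  rw [shiftC, if_pos rfl]

lemma shiftC_pred {x : V} {c : Sym2 V → ℕ} {γ : ℕ} {l l₁ l₂ : List V} {v w : V}
    (hx : ∀ z ∈ l, z ≠ x) (hnd : l.Nodup) (hd : l = l₁ ++ v :: w :: l₂) :
    shiftC x c γ l s(x, w) = c s(x, v) := by
  subst hd
  induction l₁ generalizing γ with
  | nil =>
    simp only [List.nil_append]
    have hvw : v ≠ w := by
      simp only [List.nil_append, List.nodup_cons] at hnd
      intro h; exact hnd.1 (h ▸ by simp)
    rw [shiftC, if_neg (fun h => hvw ((sxz_inj (hx w (by simp)) (hx v (by simp))).1 h).symm)]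
    exact shiftC_head
  | cons a t ih =>
    have haw : a ≠ w := by
      simp only [List.cons_append, List.nodup_cons] at hnd
      intro h; exact hnd.1 (h ▸ by simp)
    rw [List.cons_append, shiftC,
      if_neg (fun h => haw ((sxz_inj (hx w (by simp)) (hx a (by simp))).1 h).symm)]
    exact ih (fun z hz => hx z (by simp [hz])) (by
      simp only [List.cons_append, List.nodup_cons] at hnd; exact hnd.2)


/-- Shifting the colors along a fan chain whose head misses a color also missed by `x`
produces a proper `k`-edge-coloring of all of `G`. -/
lemma ext_colorable (hxy : G.Adj x y)
    (hp : IsProperEdgeColoring (G.deleteEdges {s(x, y)}) k c)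
    {l : List V} (hl : FanChain G x y k c l) (hnd : l.Nodup) {u : V} (hu : l.head? = some u)
    {α : ℕ} (hαx : α ∈ missC (G.deleteEdges {s(x, y)}) k c x)
    (hαu : α ∈ missC (G.deleteEdges {s(x, y)}) k c u) :
    EdgeColorable G k := by
  classical
  set G' := G.deleteEdges {s(x, y)} with hG'
  obtain ⟨t, rfl⟩ : ∃ t, l = u :: t := by
    cases l with
    | nil => simp at hu
    | cons a t => simp at hu; exact ⟨t, by rw [hu]⟩
  set c₂ := shiftC x c α (u :: t) with hc₂
  have hxne : ∀ z ∈ (u :: t), z ≠ x := fanChain_mem_ne_x hxy hl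
  have hadj : ∀ z ∈ (u :: t), G.Adj x z := fanChain_mem_adj hxy hl
  have hym : y ∈ (u :: t) := fanChain_y_mem hl
  have hGd : ∀ {z : V}, G.Adj x z → z ≠ y → G'.Adj x z := fun ha hz => gd_adj_x ha hz
  have hvu : c₂ s(x, u) = α := shiftC_head
  have hval : ∀ z ∈ (u :: t), z ≠ u → ∃ v l₁ l₂, (u :: t : List V) = l₁ ++ v :: z :: l₂ ∧
      c₂ s(x, z) = c s(x, v) ∧ G.Adj x v ∧ v ≠ y ∧ c s(x, v) ∈ missC G' k c z ∧
      v ∈ (u :: t) := by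
    intro z hz hzu
    have hzt : z ∈ t := by
      rcases List.mem_cons.1 hz with rfl | h
      · exact absurd rfl hzu
      · exact h
    obtain ⟨s1, s2, hst⟩ := List.append_of_mem hzt
    rcases List.eq_nil_or_concat s1 with rfl | ⟨L, v, rfl⟩
    · have hdec : (u :: t : List V) = [] ++ u :: z :: s2 := by rw [hst]; simp
      obtain ⟨h1, h2, h3, -⟩ := fanChain_decomp hl hdec
      exact ⟨u, [], s2, hdec, shiftC_pred hxne hnd hdec, h1, h2, h3, by simp⟩
    · have hdec : (u :: t : List V) = (u :: L) ++ v :: z :: s2 := by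
        rw [hst]; simp [List.concat_eq_append]
      obtain ⟨h1, h2, h3, -⟩ := fanChain_decomp hl hdec
      refine ⟨v, u :: L, s2, hdec, shiftC_pred hxne hnd hdec, h1, h2, h3, ?_⟩
      rw [hst]; simp [List.concat_eq_append]
  have key : ∀ z ∈ (u :: t), ∀ f ∈ G.edgeSet, f ≠ s(x, z) → (∃ m, m ∈ s(x, z) ∧ m ∈ f) →
      c₂ s(x, z) ≠ c₂ f := by
    intro z hz f hf hnef hshare
    by_cases hxf : x ∈ f
    · obtain ⟨b, rfl⟩ := Sym2.mem_iff_exists.1 hxf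
      have hAb : G.Adj x b := (G.mem_edgeSet).1 hf
      have hbx : b ≠ x := hAb.ne'
      have hbz : b ≠ z := fun h => hnef (by rw [h])
      by_cases hbl : b ∈ (u :: t)
      · by_cases hzu : z = u
        · subst hzu
          obtain ⟨v, l₁, l₂, hdec, hvalb, hAv, hvy, hmiss, hvmem⟩ := hval b hbl hbz
          rw [hvu, hvalb]
          exact fun h => (mem_missC.1 hαx).2 v (hGd hAv hvy) h.symm
        · obtain ⟨v, l₁, l₂, hdec, hvale, hAv, hvy, hmiss, hvmem⟩ := hval z hz hzu
          by_cases hbu : b = u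
          · subst hbu
            rw [hvale, hvu]
            exact fun h => (mem_missC.1 hαx).2 v (hGd hAv hvy) h
          · obtain ⟨v', l₁', l₂', hdec', hvalb, hAv', hvy', hmiss', hvmem'⟩ := hval b hbl hbu
            rw [hvale, hvalb]
            have hvv : v ≠ v' := by
              intro h
              subst h
              exact hbz (next_unique (hdec ▸ hnd) (hdec ▸ hdec')).symm
            exact proper_at hp (hGd hAv hvy) (hGd hAv' hvy') hvv
      · have hval_f : c₂ s(x, b) = c s(x, b) :=
          shiftC_notmem (fun w hw hh => hbl (((sxz_inj hbx (hxne w hw)).1 hh) ▸ hw))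
        have hby : b ≠ y := fun h => hbl (h ▸ hym)
        have hGb : G'.Adj x b := hGd hAb hby
        by_cases hzu : z = u
        · subst hzu
          rw [hvu, hval_f]
          exact fun h => (mem_missC.1 hαx).2 b hGb h.symm
        · obtain ⟨v, l₁, l₂, hdec, hvale, hAv, hvy, hmiss, hvmem⟩ := hval z hz hzu
          rw [hvale, hval_f]
          exact proper_at hp (hGd hAv hvy) hGb (fun h => hbl (h ▸ hvmem))
    · obtain ⟨m, hm1, hm2⟩ := hshare
      have hmz : m = z := by
        rcases Sym2.mem_iff.1 hm1 with rfl | rfl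
        · exact absurd hm2 hxf
        · rfl
      subst hmz
      obtain ⟨b, rfl⟩ := Sym2.mem_iff_exists.1 hm2
      have hAzb : G.Adj m b := (G.mem_edgeSet).1 hf
      have hfy : s(m, b) ≠ s(x, y) := fun h => hxf (h ▸ Sym2.mem_mk_left x y)
      have hGzb : G'.Adj m b := gd_adj.2 ⟨hAzb, hfy⟩
      have hval_f : c₂ s(m, b) = c s(m, b) :=
        shiftC_notmem (fun w hw hh => hxf (hh ▸ Sym2.mem_mk_left x w))
      by_cases hzu : m = u
      · subst hzu
        rw [hvu, hval_f]
        exact fun h => (mem_missC.1 hαu).2 b hGzb h.symm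
      · obtain ⟨v, l₁, l₂, hdec, hvale, hAv, hvy, hmiss, hvmem⟩ := hval m hz hzu
        rw [hvale, hval_f]
        exact fun h => (mem_missC.1 hmiss).2 b hGzb h.symm
  have hG'edge : ∀ {e : Sym2 V}, e ∈ G.edgeSet → e ≠ s(x, y) → e ∈ G'.edgeSet := by
    intro e he hne
    rw [hG', edgeSet_deleteEdges]
    exact ⟨he, by simpa using hne⟩
  refine ⟨c₂, ?_, ?_⟩
  · intro e he
    by_cases hfan : ∃ z ∈ (u :: t), e = s(x, z)
    · obtain ⟨z, hz, rfl⟩ := hfan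
      by_cases hzu : z = u
      · subst hzu; rw [hvu]; exact missC_subset_Icc hαx
      · obtain ⟨v, l₁, l₂, hdec, hvale, hAv, hvy, hmiss, hvmem⟩ := hval z hz hzu
        rw [hvale]
        exact hp.1 _ ((G'.mem_edgeSet).2 (hGd hAv hvy))
    · push_neg at hfan
      rw [hc₂, shiftC_notmem hfan]
      exact hp.1 _ (hG'edge he (hfan y hym))
  · intro e he f hf hef hsh
    by_cases hfe : ∃ z ∈ (u :: t), e = s(x, z)
    · obtain ⟨z, hz, rfl⟩ := hfe
      exact key z hz f hf (Ne.symm hef) hsh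
    · by_cases hff : ∃ z ∈ (u :: t), f = s(x, z)
      · obtain ⟨z, hz, rfl⟩ := hff
        obtain ⟨m, hm1, hm2⟩ := hsh
        exact (key z hz e he hef ⟨m, hm2, hm1⟩).symm
      · push_neg at hfe hff
        rw [hc₂, shiftC_notmem hfe, shiftC_notmem hff]
        exact hp.2 e (hG'edge he (hfe y hym)) f (hG'edge hf (hff y hym)) hef hsh


/-- C1: a color missing at `x` is not missing at any fan-chain vertex. -/
lemma fan_no_common_miss (hxy : G.Adj x y) (hnc : ¬ EdgeColorable G k)
    (hp : IsProperEdgeColoring (G.deleteEdges {s(x, y)}) k c)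
    {l : List V} (hl : FanChain G x y k c l) (hnd : l.Nodup) {u : V} (hu : l.head? = some u)
    {α : ℕ} (hαx : α ∈ missC (G.deleteEdges {s(x, y)}) k c x) :
    α ∉ missC (G.deleteEdges {s(x, y)}) k c u :=
  fun hαu => hnc (ext_colorable hxy hp hl hnd hu hαx hαu)

/-! ### Kempe chains and the color swap -/

/-- The subgraph of edges colored `α` or `β`. -/
def KG (G' : SimpleGraph V) (c : Sym2 V → ℕ) (α β : ℕ) : SimpleGraph V where
  Adj a b := G'.Adj a b ∧ (c s(a, b) = α ∨ c s(a, b) = β)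
  symm := ⟨by
    rintro a b ⟨h1, h2⟩
    exact ⟨h1.symm, by rwa [Sym2.eq_swap]⟩⟩
  loopless := ⟨fun a h => G'.irrefl h.1⟩

lemma kg_adj {G' : SimpleGraph V} {c : Sym2 V → ℕ} {α β : ℕ} {a b : V} :
    (KG G' c α β).Adj a b ↔ G'.Adj a b ∧ (c s(a, b) = α ∨ c s(a, b) = β) := Iff.rfl

def swapFn (α β γ : ℕ) : ℕ := if γ = α then β else if γ = β then α else γ

lemma swapFn_invol {α β : ℕ} (hαβ : α ≠ β) (γ : ℕ) : swapFn α β (swapFn α β γ) = γ := by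
  unfold swapFn
  split_ifs with h1 h2 h3 h4 h5 h6 h7 <;> simp_all

lemma swapFn_not_mem {α β γ : ℕ} (h1 : γ ≠ α) (h2 : γ ≠ β) : swapFn α β γ = γ := by
  simp [swapFn, h1, h2]

lemma swapFn_mem_iff {α β γ : ℕ} : (swapFn α β γ = α ∨ swapFn α β γ = β) ↔ (γ = α ∨ γ = β) := by
  unfold swapFn
  split_ifs with h1 h2 <;> simp_all

open Classical in
noncomputable def swapC (G' : SimpleGraph V) (c : Sym2 V → ℕ) (α β : ℕ) (u₀ : V) :
    Sym2 V → ℕ := fun e =>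
  if e ∈ (KG G' c α β).edgeSet ∧ (∃ a ∈ e, (KG G' c α β).Reachable u₀ a) then
    swapFn α β (c e) else c e

section Swap

variable {G' : SimpleGraph V} {c : Sym2 V → ℕ} {α β : ℕ} {u₀ : V}

lemma kg_edge_color {e : Sym2 V} (he : e ∈ (KG G' c α β).edgeSet) : c e = α ∨ c e = β := by
  induction e with
  | _ p q => exact ((KG G' c α β).mem_edgeSet.1 he).2

/-- if one endpoint of a Kempe edge is reachable, all vertices of the edge are -/
lemma kg_reach_all {e : Sym2 V} (he : e ∈ (KG G' c α β).edgeSet)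
    (h : ∃ a ∈ e, (KG G' c α β).Reachable u₀ a) :
    ∀ a ∈ e, (KG G' c α β).Reachable u₀ a := by
  induction e with
  | _ p q =>
    obtain ⟨a, ha, hra⟩ := h
    have hpq : (KG G' c α β).Adj p q := (KG G' c α β).mem_edgeSet.1 he
    intro b hb
    rcases Sym2.mem_iff.1 ha with rfl | rfl <;> rcases Sym2.mem_iff.1 hb with rfl | rfl
    · exact hra
    · exact hra.trans hpq.reachable
    · exact hra.trans hpq.symm.reachable
    · exact hra

lemma swapC_eq_of_not_reach {a b : V} (hna : ¬ (KG G' c α β).Reachable u₀ a) :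
    swapC G' c α β u₀ s(a, b) = c s(a, b) := by
  classical
  rw [swapC, if_neg]
  rintro ⟨he, hex⟩
  exact hna (kg_reach_all he hex a (Sym2.mem_mk_left a b))

lemma swapC_eq_of_reach {a b : V} (hadj : G'.Adj a b) (h : (KG G' c α β).Reachable u₀ a) :
    swapC G' c α β u₀ s(a, b) = swapFn α β (c s(a, b)) := by
  classical
  by_cases hc : c s(a, b) = α ∨ c s(a, b) = β
  · rw [swapC, if_pos]
    exact ⟨(KG G' c α β).mem_edgeSet.2 ⟨hadj, hc⟩, ⟨a, Sym2.mem_mk_left a b, h⟩⟩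
  · push_neg at hc
    rw [swapC, if_neg, swapFn_not_mem hc.1 hc.2]
    rintro ⟨he, -⟩
    exact hc.elim (fun h1 h2 => ((KG G' c α β).mem_edgeSet.1 he).2.elim h1 h2)

lemma swapC_mem_swapped {e : Sym2 V} (h : e ∈ G'.edgeSet)
    (hs : swapC G' c α β u₀ e ≠ c e) :
    (c e = α ∨ c e = β) ∧ ∀ a ∈ e, (KG G' c α β).Reachable u₀ a := by
  classical
  rw [swapC] at hs
  split_ifs at hs with hcond
  · exact ⟨kg_edge_color hcond.1, kg_reach_all hcond.1 hcond.2⟩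
  · exact absurd rfl hs


lemma swap_proper {k : ℕ} (hp : IsProperEdgeColoring G' k c) (hαβ : α ≠ β)
    (hα : α ∈ Finset.Icc 1 k) (hβ : β ∈ Finset.Icc 1 k) :
    IsProperEdgeColoring G' k (swapC G' c α β u₀) := by
  classical
  set c' := swapC G' c α β u₀ with hc'
  have hrange : ∀ e ∈ G'.edgeSet, c' e ∈ Finset.Icc 1 k := by
    intro e he
    by_cases h : c' e = c e
    · rw [h]; exact hp.1 e he
    · obtain ⟨hcol, -⟩ := swapC_mem_swapped he h
      have : c' e = swapFn α β (c e) := by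
        rw [hc', swapC]
        split_ifs with hcond
        · rfl
        · exact absurd rfl (by rw [hc', swapC, if_neg hcond] at h; exact h)
      rw [this]
      simp only [Finset.mem_Icc] at hα hβ ⊢
      rcases hcol with h1 | h1 <;> rw [h1] <;> unfold swapFn <;> split_ifs <;> omega
  refine ⟨hrange, ?_⟩
  have aux : ∀ e ∈ G'.edgeSet, ∀ f ∈ G'.edgeSet, e ≠ f → (∃ v, v ∈ e ∧ v ∈ f) →
      c' e ≠ c e → c' f = c f → c' e ≠ c' f := by
    intro e he f hf hef hsh hse hsf
    obtain ⟨hcol, hreach⟩ := swapC_mem_swapped he hse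
    have hce : c' e = swapFn α β (c e) := by
      rw [hc', swapC]
      split_ifs with hcond
      · rfl
      · exact absurd rfl (by rw [hc', swapC, if_neg hcond] at hse; exact hse)
    intro hcontra
    have hcf : c f = α ∨ c f = β := by
      rw [hsf] at hcontra
      rw [← hcontra, hce]
      have h2 : swapFn α β (c e) = c f := by rw [← hce, hcontra]
      rcases hcol with h1 | h1
      · rw [h1] at h2
        simp [swapFn] at h2
        exact Or.inr (by omega)
      · rw [h1] at h2
        simp [swapFn, Ne.symm hαβ] at h2
        exact Or.inl (by omega)
    -- then f is a Kempe edge with a reachable endpoint, so it would be swapped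
    obtain ⟨v, hve, hvf⟩ := hsh
    have hfK : f ∈ (KG G' c α β).edgeSet := by
      induction f with
      | _ p q => exact (KG G' c α β).mem_edgeSet.2 ⟨G'.mem_edgeSet.1 hf, hcf⟩
    have hvr : (KG G' c α β).Reachable u₀ v := hreach v hve
    have : c' f = swapFn α β (c f) := by
      rw [hc', swapC, if_pos ⟨hfK, v, hvf, hvr⟩]
    rw [this] at hsf
    rcases hcf with h1 | h1 <;> rw [h1] at hsf <;> simp [swapFn, hαβ, Ne.symm hαβ] at hsf <;>
      omega
  intro e he f hf hef hsh
  by_cases hse : c' e = c e <;> by_cases hsf : c' f = c f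
  · rw [hse, hsf]; exact hp.2 e he f hf hef hsh
  · obtain ⟨v, hv1, hv2⟩ := hsh
    exact fun h => aux f hf e he (Ne.symm hef) ⟨v, hv2, hv1⟩ hsf hse h.symm
  · exact aux e he f hf hef hsh hse hsf
  · -- both swapped
    obtain ⟨hcole, -⟩ := swapC_mem_swapped he hse
    obtain ⟨hcolf, -⟩ := swapC_mem_swapped hf hsf
    have hce : c' e = swapFn α β (c e) := by
      rw [hc', swapC]; split_ifs with hcond
      · rfl
      · exact absurd rfl (by rw [hc', swapC, if_neg hcond] at hse; exact hse)
    have hcf : c' f = swapFn α β (c f) := by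
      rw [hc', swapC]; split_ifs with hcond
      · rfl
      · exact absurd rfl (by rw [hc', swapC, if_neg hcond] at hsf; exact hsf)
    rw [hce, hcf]
    intro hcontra
    have : c e = c f := by
      have := congrArg (swapFn α β) hcontra
      rwa [swapFn_invol hαβ, swapFn_invol hαβ] at this
    exact hp.2 e he f hf hef hsh this

lemma colorsAt_swap_not_reach {w : V} (h : ¬ (KG G' c α β).Reachable u₀ w) :
    colorsAt G' (swapC G' c α β u₀) w = colorsAt G' c w := by
  classical
  apply Finset.ext
  intro γ
  rw [mem_colorsAt, mem_colorsAt]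
  exact exists_congr fun v => by rw [swapC_eq_of_not_reach h]

lemma colorsAt_swap_reach {w : V} (h : (KG G' c α β).Reachable u₀ w) :
    colorsAt G' (swapC G' c α β u₀) w = (colorsAt G' c w).image (swapFn α β) := by
  classical
  apply Finset.ext
  intro γ
  rw [mem_colorsAt, Finset.mem_image]
  constructor
  · rintro ⟨v, hv, rfl⟩
    exact ⟨c s(w, v), mem_colorsAt.2 ⟨v, hv, rfl⟩, (swapC_eq_of_reach hv h).symm⟩
  · rintro ⟨δ, hδ, rfl⟩
    obtain ⟨v, hv, rfl⟩ := mem_colorsAt.1 hδ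
    exact ⟨v, hv, swapC_eq_of_reach hv h⟩

lemma mem_image_swapFn (hαβ : α ≠ β) {A : Finset ℕ} {γ : ℕ} :
    γ ∈ A.image (swapFn α β) ↔ swapFn α β γ ∈ A := by
  classical
  rw [Finset.mem_image]
  constructor
  · rintro ⟨δ, hδ, rfl⟩
    rwa [swapFn_invol hαβ]
  · intro h
    exact ⟨swapFn α β γ, h, swapFn_invol hαβ γ⟩

end Swap


/-! ### Walks in graphs of maximum degree two -/

open Classical in
noncomputable def Hdeg (H : SimpleGraph V) (w : V) : ℕ :=
  (Finset.univ.filter fun v => H.Adj w v).card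

open Classical in
lemma two_le_Hdeg {H : SimpleGraph V} {m z w : V} (hz : H.Adj m z) (hw : H.Adj m w)
    (hzw : z ≠ w) : 2 ≤ Hdeg H m := by
  classical
  have hsub : ({z, w} : Finset V) ⊆ Finset.univ.filter fun v => H.Adj m v := by
    intro a ha
    rcases Finset.mem_insert.1 ha with rfl | ha
    · simp [hz]
    · rw [Finset.mem_singleton.1 ha]; simp [hw]
  calc 2 = ({z, w} : Finset V).card := by rw [Finset.card_insert_of_notMem (by simp [hzw]),
      Finset.card_singleton]
  _ ≤ _ := Finset.card_le_card hsub

open Classical in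
lemma Hdeg_unique {H : SimpleGraph V} {m z w : V} (hd : Hdeg H m ≤ 1) (hz : H.Adj m z)
    (hw : H.Adj m w) : z = w := by
  by_contra hzw
  exact absurd (le_trans (two_le_Hdeg hz hw hzw) hd) (by norm_num)

lemma walk_aux (H : SimpleGraph V) (hdeg2 : ∀ v, Hdeg H v ≤ 2) :
    ∀ n {a b c' : V} (p : H.Walk a b) (q : H.Walk a c'), p.length ≤ n → p.IsPath → q.IsPath →
    (∀ z w, H.Adj a z → H.Adj a w → z ∈ p.support → w ∈ q.support → z = w) →
    b ∈ q.support ∨ c' ∈ p.support := by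
  intro n
  induction n with
  | zero =>
    intro a b c' p q hlen hp hq hinv
    cases p with
    | nil => exact Or.inl q.start_mem_support
    | cons h p' => simp at hlen
  | succ n ih =>
    intro a b c' p q hlen hp hq hinv
    cases p with
    | nil => exact Or.inl q.start_mem_support
    | cons h p' =>
      rename_i a₁
      cases q with
      | nil => exact Or.inr (SimpleGraph.Walk.start_mem_support _)
      | cons h' q' =>
        rename_i a₂
        have ha12 : a₁ = a₂ := hinv a₁ a₂ h h' (by simp) (by simp)
        subst ha12
        have hp' : p'.IsPath := (SimpleGraph.Walk.cons_isPath_iff h p').1 hp |>.1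
        have hanp : a ∉ p'.support := (SimpleGraph.Walk.cons_isPath_iff h p').1 hp |>.2
        have hq' : q'.IsPath := (SimpleGraph.Walk.cons_isPath_iff h' q').1 hq |>.1
        have hanq : a ∉ q'.support := (SimpleGraph.Walk.cons_isPath_iff h' q').1 hq |>.2
        have hinv' : ∀ z w, H.Adj a₁ z → H.Adj a₁ w → z ∈ p'.support → w ∈ q'.support →
            z = w := by
          intro z w hz hw hzp hwq
          by_contra hne
          have hza : z ≠ a := fun hh => hanp (hh ▸ hzp)
          have hwa : w ≠ a := fun hh => hanq (hh ▸ hwq)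
          classical
          have hsub : ({a, z, w} : Finset V) ⊆ Finset.univ.filter fun v => H.Adj a₁ v := by
            intro m hm
            simp only [Finset.mem_insert, Finset.mem_singleton] at hm
            rcases hm with rfl | rfl | rfl
            · simp [h.symm]
            · simp [hz]
            · simp [hw]
          have hcard : ({a, z, w} : Finset V).card = 3 := by
            rw [Finset.card_insert_of_notMem (by simp [Ne.symm hza, Ne.symm hwa]),
              Finset.card_insert_of_notMem (by simp [hne]), Finset.card_singleton]
          have := Finset.card_le_card hsub
          rw [hcard] at this
          exact absurd (le_trans this (hdeg2 a₁)) (by norm_num)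
        rcases ih p' q' (Nat.le_of_succ_le_succ (by simpa using hlen)) hp' hq' hinv' with
          hb | hc
        · exact Or.inl (by simp [SimpleGraph.Walk.support_cons, hb])
        · exact Or.inr (by simp [SimpleGraph.Walk.support_cons, hc])

lemma internal_deg (H : SimpleGraph V) :
    ∀ {a c' : V} (q : H.Walk a c') {m : V}, q.IsPath → m ∈ q.support → m ≠ a → m ≠ c' →
      2 ≤ Hdeg H m := by
  intro a c' q
  induction q with
  | nil =>
    intro m hq hm hma hmc
    simp [SimpleGraph.Walk.support_nil] at hm
    exact absurd hm hma
  | cons h q' ih =>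
    rename_i u v w
    intro m hq hm hma hmc
    have hm' : m ∈ q'.support := by
      rcases (by simpa [SimpleGraph.Walk.support_cons] using hm : m = u ∨ m ∈ q'.support) with
        rfl | hh
      · exact absurd rfl hma
      · exact hh
    by_cases hmv : m = v
    · subst hmv
      cases q' with
      | nil => exact absurd rfl hmc
      | cons h₂ q'' =>
        rename_i v₂
        have hu2 : u ≠ v₂ := by
          have hns := ((SimpleGraph.Walk.cons_isPath_iff h _).1 hq).2
          intro hh
          apply hns
          rw [hh, SimpleGraph.Walk.support_cons]
          exact List.mem_cons_of_mem _ q''.start_mem_support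
        exact two_le_Hdeg h.symm h₂ hu2
    · exact ih ((SimpleGraph.Walk.cons_isPath_iff h q').1 hq).1 hm' hmv hmc

lemma three_ends (H : SimpleGraph V) (hdeg2 : ∀ v, Hdeg H v ≤ 2) {a b c' : V}
    (hab : a ≠ b) (hac : a ≠ c') (hbc : b ≠ c') (hda : Hdeg H a ≤ 1) (hdb : Hdeg H b ≤ 1)
    (hdc : Hdeg H c' ≤ 1) (h1 : H.Reachable a b) (h2 : H.Reachable a c') : False := by
  classical
  obtain ⟨p₀⟩ := h1
  obtain ⟨q₀⟩ := h2
  set p := p₀.bypass with hpdef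
  set q := q₀.bypass with hqdef
  have hp : p.IsPath := SimpleGraph.Walk.bypass_isPath p₀
  have hq : q.IsPath := SimpleGraph.Walk.bypass_isPath q₀
  have hinv : ∀ z w, H.Adj a z → H.Adj a w → z ∈ p.support → w ∈ q.support → z = w :=
    fun z w hz hw _ _ => Hdeg_unique hda hz hw
  rcases walk_aux H hdeg2 p.length p q le_rfl hp hq hinv with hb | hc
  · exact absurd (internal_deg H q hq hb (Ne.symm hab) hbc) (by omega)
  · exact absurd (internal_deg H p hp hc (Ne.symm hac) (Ne.symm hbc)) (by omega)


/-! ### Degree bounds in the Kempe subgraph -/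

open Classical in
lemma Hdeg_KG_le_one {G' : SimpleGraph V} {k : ℕ} {c : Sym2 V → ℕ} {α β : ℕ} {w : V}
    (hp : IsProperEdgeColoring G' k c) (hm : β ∈ missC G' k c w) :
    Hdeg (KG G' c α β) w ≤ 1 := by
  classical
  rw [Hdeg]
  apply Finset.card_le_one.2
  intro a ha b hb
  simp only [Finset.mem_filter] at ha hb
  obtain ⟨-, ha1, ha2⟩ := ha
  obtain ⟨-, hb1, hb2⟩ := hb
  have hmiss := (mem_missC.1 hm).2
  have hca : c s(w, a) = α := ha2.resolve_right (hmiss a ha1)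
  have hcb : c s(w, b) = α := hb2.resolve_right (hmiss b hb1)
  by_contra hab
  exact proper_at hp ha1 hb1 hab (hca.trans hcb.symm)

lemma kg_comm {G' : SimpleGraph V} {c : Sym2 V → ℕ} {α β : ℕ} :
    KG G' c α β = KG G' c β α := by
  ext a b
  rw [kg_adj, kg_adj, or_comm]

open Classical in
lemma Hdeg_KG_le_two {G' : SimpleGraph V} {k : ℕ} {c : Sym2 V → ℕ} {α β : ℕ}
    (hp : IsProperEdgeColoring G' k c) (w : V) :
    Hdeg (KG G' c α β) w ≤ 2 := by
  classical
  rw [Hdeg]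
  have hsub : (Finset.univ.filter fun v => (KG G' c α β).Adj w v) ⊆
      (Finset.univ.filter fun v => G'.Adj w v ∧ c s(w, v) = α) ∪
      (Finset.univ.filter fun v => G'.Adj w v ∧ c s(w, v) = β) := by
    intro v hv
    simp only [Finset.mem_filter, Finset.mem_union] at hv ⊢
    rcases hv.2.2 with h | h
    · exact Or.inl ⟨hv.1, hv.2.1, h⟩
    · exact Or.inr ⟨hv.1, hv.2.1, h⟩
  have h1 : ∀ γ : ℕ, (Finset.univ.filter fun v => G'.Adj w v ∧ c s(w, v) = γ).card ≤ 1 := by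
    intro γ
    apply Finset.card_le_one.2
    intro a ha b hb
    simp only [Finset.mem_filter] at ha hb
    by_contra hab
    exact proper_at hp ha.2.1 hb.2.1 hab (ha.2.2.trans hb.2.2.symm)
  calc (Finset.univ.filter fun v => (KG G' c α β).Adj w v).card ≤ _ :=
      Finset.card_le_card hsub
  _ ≤ _ := Finset.card_union_le _ _
  _ ≤ 2 := by have := h1 α; have := h1 β; omega

/-! ### The no-escape lemma -/

lemma fanChain_break {c c' : Sym2 V → ℕ} (hx : ∀ b, c' s(x, b) = c s(x, b)) :
    ∀ {l : List V}, FanChain G x y k c l → ¬ FanChain G x y k c' l →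
    ∃ v w r, (v :: w :: r) <:+ l ∧
      c s(x, v) ∈ missC (G.deleteEdges {s(x, y)}) k c w ∧
      c s(x, v) ∉ missC (G.deleteEdges {s(x, y)}) k c' w ∧
      FanChain G x y k c (w :: r) := by
  intro l
  induction l with
  | nil => intro h1 _; exact absurd h1 (by simp [FanChain])
  | cons v r ih =>
    intro h1 h2
    match r, h1 with
    | [], h1 => exact absurd h1 h2
    | w :: r', ⟨ha, hy, hm, hrest⟩ =>
      by_cases hmm : c s(x, v) ∈ missC (G.deleteEdges {s(x, y)}) k c' w
      · have hrest' : ¬ FanChain G x y k c' (w :: r') := by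
          intro hh
          exact h2 ⟨ha, hy, by rw [hx v]; exact hmm, hh⟩
        obtain ⟨v₁, w₁, r₁, hsuf, a1, a2, a3⟩ := ih hrest hrest'
        exact ⟨v₁, w₁, r₁, hsuf.trans ⟨[v], rfl⟩, a1, a2, a3⟩
      · exact ⟨v, w, r', ⟨[], rfl⟩, hm, hmm, hrest⟩

lemma noEscape (hxy : G.Adj x y) (hnc : ¬ EdgeColorable G k)
    (hp : IsProperEdgeColoring (G.deleteEdges {s(x, y)}) k c) :
    ∀ n, ∀ {l : List V} {u : V} {α β : ℕ}, FanChain G x y k c l → l.Nodup →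
      l.head? = some u → α ∈ missC (G.deleteEdges {s(x, y)}) k c x →
      β ∈ missC (G.deleteEdges {s(x, y)}) k c u → l.length ≤ n →
      (KG (G.deleteEdges {s(x, y)}) c α β).Reachable u x := by
  set G' := G.deleteEdges {s(x, y)} with hG'
  intro n
  induction n with
  | zero =>
    intro l u α β hl hnd hu hαx hβu hlen
    have := fanChain_ne_nil hl
    cases l with
    | nil => exact absurd rfl this
    | cons a t => simp at hlen
  | succ n ih =>
    intro l u α β hl hnd hu hαx hβu hlen
    by_contra hux
    have hαu : α ∉ missC G' k c u := fan_no_common_miss hxy hnc hp hl hnd hu hαx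
    have hαβ : α ≠ β := fun h => hαu (h ▸ hβu)
    have hαI : α ∈ Finset.Icc 1 k := missC_subset_Icc hαx
    have hβI : β ∈ Finset.Icc 1 k := missC_subset_Icc hβu
    set c' := swapC G' c α β u with hc'def
    have hp' : IsProperEdgeColoring G' k c' := swap_proper hp hαβ hαI hβI
    have hxx : ∀ b, c' s(x, b) = c s(x, b) := fun b => swapC_eq_of_not_reach hux
    have hmissx : missC G' k c' x = missC G' k c x := by
      rw [missC, missC, colorsAt_swap_not_reach hux]
    have hαu' : α ∈ missC G' k c' u := by
      rw [missC, Finset.mem_sdiff]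
      refine ⟨hαI, ?_⟩
      rw [colorsAt_swap_reach (SimpleGraph.Reachable.refl u), mem_image_swapFn hαβ]
      have : swapFn α β α = β := by simp [swapFn]
      rw [this]
      exact (Finset.mem_sdiff.1 hβu).2
    by_cases hch : FanChain G x y k c' l
    · exact (fan_no_common_miss hxy hnc hp' hch hnd hu (hmissx ▸ hαx)) hαu'
    · obtain ⟨v, w, r, hsuf, hmem, hnmem, hchw⟩ := fanChain_break hxx hl hch
      have hwr_nd : (w :: r).Nodup :=
        hnd.sublist ((List.sublist_cons_self v (w :: r)).trans hsuf.sublist)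
      have hγI : c s(x, v) ∈ Finset.Icc 1 k := missC_subset_Icc hmem
      have hγnotin : c s(x, v) ∉ colorsAt G' c w := (Finset.mem_sdiff.1 hmem).2
      have hγin' : c s(x, v) ∈ colorsAt G' c' w := by
        by_contra h
        exact hnmem (Finset.mem_sdiff.2 ⟨hγI, h⟩)
      have hwreach : (KG G' c α β).Reachable u w := by
        by_contra h
        rw [hc'def, colorsAt_swap_not_reach h] at hγin'
        exact hγnotin hγin'
      rw [hc'def, colorsAt_swap_reach hwreach, mem_image_swapFn hαβ] at hγin'
      have hγab : c s(x, v) = α ∨ c s(x, v) = β := by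
        by_contra h
        push_neg at h
        rw [swapFn_not_mem h.1 h.2] at hγin'
        exact hγnotin hγin'
      rcases hγab with h | h
      · rw [h] at hmem
        exact (fan_no_common_miss hxy hnc hp hchw hwr_nd rfl hαx) hmem
      · rw [h] at hmem
        have hlen' : (w :: r).length ≤ n := by
          have h1 := hsuf.length_le
          simp only [List.length_cons] at h1 hlen ⊢
          omega
        exact hux (hwreach.trans (ih hchw hwr_nd rfl hαx hmem hlen'))


/-- C2: two distinct fan-chain vertices cannot miss a common color. -/
lemma fan_disjoint_miss (hxy : G.Adj x y) (hnc : ¬ EdgeColorable G k)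
    (hp : IsProperEdgeColoring (G.deleteEdges {s(x, y)}) k c)
    {l l' : List V} {u w : V} (hl : FanChain G x y k c l) (hnd : l.Nodup)
    (hu : l.head? = some u) (hl' : FanChain G x y k c l') (hnd' : l'.Nodup)
    (hw : l'.head? = some w) (huw : u ≠ w) {α β : ℕ}
    (hαx : α ∈ missC (G.deleteEdges {s(x, y)}) k c x)
    (hβu : β ∈ missC (G.deleteEdges {s(x, y)}) k c u)
    (hβw : β ∈ missC (G.deleteEdges {s(x, y)}) k c w) : False := by
  set G' := G.deleteEdges {s(x, y)} with hG'
  have R1 : (KG G' c α β).Reachable u x :=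
    noEscape hxy hnc hp l.length hl hnd hu hαx hβu le_rfl
  have R2 : (KG G' c α β).Reachable w x :=
    noEscape hxy hnc hp l'.length hl' hnd' hw hαx hβw le_rfl
  have hdeg2 : ∀ v, Hdeg (KG G' c α β) v ≤ 2 := Hdeg_KG_le_two hp
  have hdu : Hdeg (KG G' c α β) u ≤ 1 := Hdeg_KG_le_one hp hβu
  have hdw : Hdeg (KG G' c α β) w ≤ 1 := Hdeg_KG_le_one hp hβw
  have hdx : Hdeg (KG G' c α β) x ≤ 1 := by
    rw [kg_comm]
    exact Hdeg_KG_le_one hp hαx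
  have hux : u ≠ x := by
    have := fanChain_mem_ne_x hxy hl
    exact this u (List.mem_of_mem_head? hu)
  have hwx : w ≠ x := by
    have := fanChain_mem_ne_x hxy hl'
    exact this w (List.mem_of_mem_head? hw)
  exact three_ends (KG G' c α β) hdeg2 (Ne.symm hux) (Ne.symm hwx) huw hdx hdu hdw R1.symm
    R2.symm

/-! ### Basic colorability facts -/

lemma edgeColorable_mono {H : SimpleGraph V} {k₁ k₂ : ℕ} (h : EdgeColorable H k₁)
    (hk : k₁ ≤ k₂) : EdgeColorable H k₂ := by
  obtain ⟨c, h1, h2⟩ := h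
  exact ⟨c, fun e he => Finset.Icc_subset_Icc_right hk (h1 e he), h2⟩

lemma edgeColorable_exists (H : SimpleGraph V) : ∃ m, EdgeColorable H m := by
  classical
  let eq := Fintype.equivFin (Sym2 V)
  refine ⟨Fintype.card (Sym2 V), fun e => (eq e).val + 1, fun e _ => ?_, fun e _ f _ hef _ => ?_⟩
  · simp only [Finset.mem_Icc]
    constructor
    · omega
    · have := (eq e).isLt
      omega
  · intro hcontra
    apply hef
    apply eq.injective
    apply Fin.ext
    simp only at hcontra
    omega

end VAL

/-- Vizing's Adjacency Lemma: if `G` is Class 2 and `xy` is a critical edge,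
then `x` has at least `Δ − d_G(y) + 1` neighbors of degree `Δ` other than `y`. -/
theorem stmt_5 {V : Type*} [Fintype V] (G : SimpleGraph V) [DecidableRel G.Adj]
    (hclass2 : chromIndex G = G.maxDegree + 1) (x y : V) (hxy : G.Adj x y)
    (hcrit : chromIndex (G.deleteEdges {s(x, y)}) < chromIndex G) :
    G.maxDegree - G.degree y + 1 ≤
      {z | G.Adj x z ∧ z ≠ y ∧ G.degree z = G.maxDegree}.ncard := by
  classical
  set Δ := G.maxDegree with hΔ
  set G' := G.deleteEdges {s(x, y)} with hG'
  have hnonempty : {k | EdgeColorable G' k}.Nonempty := edgeColorable_exists G'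
  have hmemc : EdgeColorable G' (chromIndex G') := Nat.sInf_mem hnonempty
  have hlt : chromIndex G' ≤ Δ := by rw [hclass2] at hcrit; omega
  obtain ⟨c, hp⟩ : EdgeColorable G' Δ := edgeColorable_mono hmemc hlt
  have hnc : ¬ EdgeColorable G Δ := by
    intro h
    have h2 : chromIndex G ≤ Δ := Nat.sInf_le h
    omega
  have hxyne : x ≠ y := hxy.ne
  have hdy1 : 1 ≤ G.degree y := G.degree_pos_iff_exists_adj y |>.2 ⟨x, hxy.symm⟩
  have hdx1 : 1 ≤ G.degree x := G.degree_pos_iff_exists_adj x |>.2 ⟨y, hxy⟩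
  have hdyΔ : G.degree y ≤ Δ := G.degree_le_maxDegree y
  have hdxΔ : G.degree x ≤ Δ := G.degree_le_maxDegree x
  have hdeg_eq : ∀ w : V, (Finset.univ.filter fun v => G.Adj w v).card = G.degree w := by
    intro w
    rw [SimpleGraph.degree, SimpleGraph.neighborFinset_eq_filter]
  have hfw : ∀ w : V, w ≠ x → w ≠ y →
      (Finset.univ.filter fun v => G'.Adj w v).card = G.degree w := by
    intro w hw1 hw2
    rw [← hdeg_eq w]
    congr 1
    ext v
    simp only [Finset.mem_filter, Finset.mem_univ, true_and]
    constructor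
    · intro h; exact (gd_adj.1 h).1
    · intro h
      refine gd_adj.2 ⟨h, fun heq => ?_⟩
      rcases Sym2.eq_iff.1 heq with ⟨h1, -⟩ | ⟨h1, -⟩
      · exact hw1 h1
      · exact hw2 h1
  have hfx : (Finset.univ.filter fun v => G'.Adj x v).card = G.degree x - 1 := by
    have hset : (Finset.univ.filter fun v => G'.Adj x v) =
        (Finset.univ.filter fun v => G.Adj x v).erase y := by
      ext v
      simp only [Finset.mem_erase, Finset.mem_filter, Finset.mem_univ, true_and]
      constructor
      · intro h
        obtain ⟨h1, h2⟩ := gd_adj.1 h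
        exact ⟨fun hv => h2 (by rw [hv]), h1⟩
      · rintro ⟨h1, h2⟩
        exact gd_adj_x h2 h1
    rw [hset, Finset.card_erase_of_mem (by simp [hxy]), hdeg_eq]
  have hfy : (Finset.univ.filter fun v => G'.Adj y v).card = G.degree y - 1 := by
    have hset : (Finset.univ.filter fun v => G'.Adj y v) =
        (Finset.univ.filter fun v => G.Adj y v).erase x := by
      ext v
      simp only [Finset.mem_erase, Finset.mem_filter, Finset.mem_univ, true_and]
      constructor
      · intro h
        obtain ⟨h1, h2⟩ := gd_adj.1 h
        refine ⟨fun hv => h2 ?_, h1⟩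
        rw [hv, Sym2.eq_swap]
      · rintro ⟨h1, h2⟩
        refine gd_adj.2 ⟨h2, fun heq => ?_⟩
        rcases Sym2.eq_iff.1 heq with ⟨h3, -⟩ | ⟨-, h4⟩
        · exact hxyne h3.symm
        · exact h1 h4
    rw [hset, Finset.card_erase_of_mem (by simp [hxy.symm]), hdeg_eq]
  have hmy : Δ - G.degree y + 1 ≤ (missC G' Δ c y).card := by
    have h : Δ - (Finset.univ.filter fun v => G'.Adj y v).card ≤ (missC G' Δ c y).card := by
      convert card_missC (G' := G') (k := Δ) (c := c) y
    rw [hfy] at h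
    omega
  have hmx : 0 < (missC G' Δ c x).card := by
    have h : Δ - (Finset.univ.filter fun v => G'.Adj x v).card ≤ (missC G' Δ c x).card := by
      convert card_missC (G' := G') (k := Δ) (c := c) x
    rw [hfx] at h
    omega
  obtain ⟨α, hαx⟩ := Finset.card_pos.1 hmx
  set S : Finset V := Finset.univ.filter
    (fun u => ∃ l, FanChain G x y Δ c l ∧ l.Nodup ∧ l.head? = some u) with hS
  have hyS : y ∈ S := by
    rw [hS, Finset.mem_filter]
    exact ⟨Finset.mem_univ y, [y], by simp [FanChain], List.nodup_singleton y, rfl⟩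
  have hSmem : ∀ u ∈ S, ∃ l, FanChain G x y Δ c l ∧ l.Nodup ∧ l.head? = some u :=
    fun u hu => (Finset.mem_filter.1 hu).2
  have hSclosure : ∀ u ∈ S, ∀ v, G.Adj x v → v ≠ y → c s(x, v) ∈ missC G' Δ c u → v ∈ S := by
    intro u hu v hadj hvy hmiss
    obtain ⟨l, hl, hnd, hhd⟩ := hSmem u hu
    by_cases hvl : v ∈ l
    · obtain ⟨l', hsuf, hhd', hch⟩ := fanChain_to_head hl hvl
      exact Finset.mem_filter.2 ⟨Finset.mem_univ _, l', hch, hnd.sublist hsuf.sublist, hhd'⟩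
    · refine Finset.mem_filter.2 ⟨Finset.mem_univ _, v :: l, ?_, List.nodup_cons.2 ⟨hvl, hnd⟩,
        rfl⟩
      cases l with
      | nil => exact absurd hhd (by simp)
      | cons a t =>
        have ha : a = u := by simpa using hhd
        subst ha
        exact ⟨hadj, hvy, hmiss, hl⟩
  have hSadj : ∀ u ∈ S, u ≠ y → G.Adj x u := by
    intro u hu huy
    obtain ⟨l, hl, hnd, hhd⟩ := hSmem u hu
    rcases fanChain_mem hl u (List.mem_of_mem_head? hhd) with rfl | ⟨h, -⟩
    · exact absurd rfl huy
    · exact h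
  have hC1 : ∀ u ∈ S, ∀ γ ∈ missC G' Δ c u, γ ∈ colorsAt G' c x := by
    intro u hu γ hγ
    by_contra h
    have hγx : γ ∈ missC G' Δ c x := Finset.mem_sdiff.2 ⟨missC_subset_Icc hγ, h⟩
    obtain ⟨l, hl, hnd, hhd⟩ := hSmem u hu
    exact fan_no_common_miss hxy hnc hp hl hnd hhd hγx hγ
  have hC2 : ∀ u ∈ S, ∀ w ∈ S, u ≠ w → Disjoint (missC G' Δ c u) (missC G' Δ c w) := by
    intro u hu w hw huw
    rw [Finset.disjoint_left]
    intro β hβu hβw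
    obtain ⟨l, hl, hnd, hhd⟩ := hSmem u hu
    obtain ⟨l', hl', hnd', hhd'⟩ := hSmem w hw
    exact fan_disjoint_miss hxy hnc hp hl hnd hhd hl' hnd' hhd' huw hαx hβu hβw
  set M := S.biUnion (fun u => missC G' Δ c u) with hM
  have hMcard : M.card = ∑ u ∈ S, (missC G' Δ c u).card := Finset.card_biUnion hC2
  have hinj : M.card ≤ (S.erase y).card := by
    have hchoice : ∀ γ ∈ M, ∃ v, G'.Adj x v ∧ c s(x, v) = γ ∧ v ∈ S.erase y := by
      intro γ hγ
      obtain ⟨u, hu, hγu⟩ := Finset.mem_biUnion.1 hγ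
      obtain ⟨v, hv, hcv⟩ := mem_colorsAt.1 (hC1 u hu γ hγu)
      have hvy : v ≠ y := by
        intro h
        subst h
        exact (gd_adj.1 hv).2 rfl
      have hvS : v ∈ S := hSclosure u hu v (gd_adj.1 hv).1 hvy (by rw [hcv]; exact hγu)
      exact ⟨v, hv, hcv, Finset.mem_erase.2 ⟨hvy, hvS⟩⟩
    set f : ℕ → V := fun γ =>
      if h : ∃ v, G'.Adj x v ∧ c s(x, v) = γ ∧ v ∈ S.erase y then h.choose else x with hf
    have hfspec : ∀ γ ∈ M, G'.Adj x (f γ) ∧ c s(x, f γ) = γ ∧ f γ ∈ S.erase y := by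
      intro γ hγ
      have h := hchoice γ hγ
      rw [hf]
      simp only [dif_pos h]
      exact h.choose_spec
    apply Finset.card_le_card_of_injOn f (fun γ hγ => (hfspec γ hγ).2.2)
    intro γ₁ h1 γ₂ h2 heq
    have e1 := (hfspec γ₁ (by exact h1)).2.1
    have e2 := (hfspec γ₂ (by exact h2)).2.1
    rw [← e1, ← e2, heq]
  have hsum_split : ∑ u ∈ S, (missC G' Δ c u).card =
      (missC G' Δ c y).card + ∑ u ∈ S.erase y, (missC G' Δ c u).card :=
    (Finset.add_sum_erase S _ hyS).symm
  have hbound : ∀ u ∈ S.erase y, Δ - G.degree u ≤ (missC G' Δ c u).card := by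
    intro u hu
    obtain ⟨huy, huS⟩ := Finset.mem_erase.1 hu
    have hux : u ≠ x := (hSadj u huS huy).ne'
    have h : Δ - (Finset.univ.filter fun v => G'.Adj u v).card ≤ (missC G' Δ c u).card := by
      convert card_missC (G' := G') (k := Δ) (c := c) u
    rw [hfw u hux huy] at h
    exact h
  set T := (S.erase y).filter (fun u => G.degree u = Δ) with hT
  have hTsub : T ⊆ S.erase y := Finset.filter_subset _ _
  have hsum_lb : (S.erase y).card - T.card ≤ ∑ u ∈ S.erase y, (missC G' Δ c u).card := by
    have hc1 : ((S.erase y) \ T).card = (S.erase y).card - T.card :=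
      Finset.card_sdiff_of_subset hTsub
    have hc2 : ((S.erase y) \ T).card ≤ ∑ u ∈ (S.erase y) \ T, (missC G' Δ c u).card := by
      rw [Finset.card_eq_sum_ones]
      apply Finset.sum_le_sum
      intro u hu
      obtain ⟨hu1, hu2⟩ := Finset.mem_sdiff.1 hu
      have hne : G.degree u ≠ Δ := by
        intro h
        exact hu2 (Finset.mem_filter.2 ⟨hu1, h⟩)
      have hle : G.degree u ≤ Δ := G.degree_le_maxDegree u
      have := hbound u hu1
      omega
    have hc3 : ∑ u ∈ (S.erase y) \ T, (missC G' Δ c u).card ≤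
        ∑ u ∈ S.erase y, (missC G' Δ c u).card :=
      Finset.sum_le_sum_of_subset (Finset.sdiff_subset)
    omega
  have hTcard : Δ - G.degree y + 1 ≤ T.card := by
    have h1 := hinj
    rw [hMcard, hsum_split] at h1
    have h3 : T.card ≤ (S.erase y).card := Finset.card_le_card hTsub
    omega
  have hTtarget : ↑T ⊆ {z | G.Adj x z ∧ z ≠ y ∧ G.degree z = Δ} := by
    intro z hz
    rw [Finset.mem_coe, hT, Finset.mem_filter] at hz
    obtain ⟨hz1, hz2⟩ := hz
    obtain ⟨hzy, hzS⟩ := Finset.mem_erase.1 hz1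
    exact ⟨hSadj z hzS hzy, hzy, hz2⟩
  calc Δ - G.degree y + 1 ≤ T.card := hTcard
  _ = (↑T : Set V).ncard := (Set.ncard_coe_finset T).symm
  _ ≤ _ := Set.ncard_le_ncard hTtarget (Set.toFinite _)
end

section
/- Let G be a Class 2 graph with critical edge e₁ = xy₁, let φ be a proper Δ-edge-coloring of G − e₁, and let F = (x, e₁, y₁, …, e_p, y_p) be a multi-fan at x with respect to e₁ and φ. Then V(F) is φ-elementary, i.e., the missing color sets of distinct vertices of F are pairwise disjoint. -/
open SimpleGraph

/-- The set of colors of `{1,…,k}` missing at `v` under the coloring `c`, i.e. not assigned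
to any edge of `G` incident with `v`. -/
def missing {V : Type*} (G : SimpleGraph V) (k : ℕ) (c : Sym2 V → ℕ) (v : V) : Set ℕ :=
  {α | α ∈ Finset.Icc 1 k ∧ ¬ ∃ u, G.Adj v u ∧ c s(v, u) = α}


namespace VizingAux

open Classical

variable {V : Type*}

lemma mem_missing_iff {H : SimpleGraph V} {k : ℕ} {c : Sym2 V → ℕ} {v : V} {a : ℕ} :
    a ∈ missing H k c v ↔ a ∈ Finset.Icc 1 k ∧ ¬ ∃ u, H.Adj v u ∧ c s(v, u) = a :=
  Iff.rfl

lemma sym2_eq_iff_of_ne {x a b : V} (hxa : x ≠ a) :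
    s(x, a) = s(x, b) ↔ a = b := by
  constructor
  · intro h
    rw [Sym2.eq_iff] at h
    rcases h with ⟨-, h⟩ | ⟨h1, h2⟩
    · exact h
    · exact absurd h2.symm hxa
  · rintro rfl; rfl

lemma proper_ne_of_shared {H : SimpleGraph V} {k : ℕ} {c : Sym2 V → ℕ}
    (hc : IsProperEdgeColoring H k c) {u a b : V} (hab : a ≠ b)
    (ha : H.Adj u a) (hb : H.Adj u b) : c s(u, a) ≠ c s(u, b) := by
  apply hc.2 _ ha _ hb
  · intro h
    exact hab ((sym2_eq_iff_of_ne ha.ne).mp h)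
  · exact ⟨u, by simp, by simp⟩

lemma missing_congr {H : SimpleGraph V} {k : ℕ} {c₁ c₂ : Sym2 V → ℕ} {v : V}
    (h : ∀ u, H.Adj v u → c₁ s(v, u) = c₂ s(v, u)) :
    missing H k c₁ v = missing H k c₂ v := by
  ext a
  simp only [mem_missing_iff]
  constructor
  · rintro ⟨hIcc, hne⟩
    exact ⟨hIcc, fun ⟨u, hu, hcu⟩ => hne ⟨u, hu, (h u hu).trans hcu⟩⟩
  · rintro ⟨hIcc, hne⟩
    exact ⟨hIcc, fun ⟨u, hu, hcu⟩ => hne ⟨u, hu, (h u hu).symm.trans hcu⟩⟩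

/-- updating the color of one edge `s(a,b)` to a color missing at both `a` and `b`
keeps the coloring proper. -/
lemma proper_update {H : SimpleGraph V} {k : ℕ} {c : Sym2 V → ℕ}
    (hc : IsProperEdgeColoring H k c) {a b : V} (hab : H.Adj a b) {β : ℕ}
    (hβ : β ∈ Finset.Icc 1 k)
    (hma : ¬ ∃ u, H.Adj a u ∧ c s(a, u) = β)
    (hmb : ¬ ∃ u, H.Adj b u ∧ c s(b, u) = β) :
    IsProperEdgeColoring H k (Function.update c s(a, b) β) := by
  classical
  constructor
  · intro e he
    by_cases h : e = s(a, b)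
    · subst h; rw [Function.update_self]; exact hβ
    · rw [Function.update_of_ne h]; exact hc.1 e he
  · intro e he f hf hef ⟨z, hze, hzf⟩
    by_cases he' : e = s(a, b) <;> by_cases hf' : f = s(a, b)
    · exact absurd (he'.trans hf'.symm) hef
    · subst he'
      rw [Function.update_self, Function.update_of_ne hf']
      -- z ∈ s(a,b), f = s(z, other)
      intro hcon
      obtain hw := Sym2.other_spec hzf
      have hadjf : H.Adj z (Sym2.Mem.other hzf) := by
        rw [← SimpleGraph.mem_edgeSet, hw]; exact hf
      rcases Sym2.mem_iff.mp hze with rfl | rfl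
      · exact hma ⟨_, hadjf, by rw [hw]; exact hcon.symm⟩
      · exact hmb ⟨_, hadjf, by rw [hw]; exact hcon.symm⟩
    · subst hf'
      rw [Function.update_self, Function.update_of_ne he']
      intro hcon
      obtain hw := Sym2.other_spec hze
      have hadje : H.Adj z (Sym2.Mem.other hze) := by
        rw [← SimpleGraph.mem_edgeSet, hw]; exact he
      rcases Sym2.mem_iff.mp hzf with rfl | rfl
      · exact hma ⟨_, hadje, by rw [hw]; exact hcon⟩
      · exact hmb ⟨_, hadje, by rw [hw]; exact hcon⟩
    · rw [Function.update_of_ne he', Function.update_of_ne hf']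
      exact hc.2 e he f hf hef ⟨z, hze, hzf⟩

end VizingAux

namespace VizingAux2
variable {V : Type*} {S : SimpleGraph V}

/-- an interior vertex of a path has two distinct neighbors on the path. -/
lemma interior_two_neighbors :
    ∀ {a b : V} (q : S.Walk a b), q.IsPath → ∀ z ∈ q.support, z ≠ a → z ≠ b →
      ∃ s t, s ≠ t ∧ S.Adj z s ∧ S.Adj z t ∧ s ∈ q.support ∧ t ∈ q.support := by
  intro a b q
  induction q with
  | nil =>
    intro _ z hz hza _
    simp only [SimpleGraph.Walk.support_nil, List.mem_singleton] at hz
    exact absurd hz hza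
  | @cons a a₁ b h q' IH =>
    intro hp z hz hza hzb
    rw [SimpleGraph.Walk.support_cons, List.mem_cons] at hz
    rcases hz with rfl | hz
    · exact absurd rfl hza
    by_cases hz1 : z = a₁
    · subst hz1
      cases q' with
      | nil => exact absurd rfl hzb
      | @cons _ a₂ _ h' q'' =>
        refine ⟨a, a₂, ?_, h.symm, h', ?_, ?_⟩
        · intro hcon
          have := (SimpleGraph.Walk.cons_isPath_iff _ _).mp hp
          exact this.2 (by rw [hcon]; simp [SimpleGraph.Walk.support_cons])
        · simp [SimpleGraph.Walk.support_cons]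
        · simp [SimpleGraph.Walk.support_cons]
    · have hp' := ((SimpleGraph.Walk.cons_isPath_iff _ _).mp hp).1
      obtain ⟨s, t, hst, hs, ht, hss, hts⟩ := IH hp' z hz hz1 hzb
      exact ⟨s, t, hst, hs, ht, by simp [SimpleGraph.Walk.support_cons, hss],
        by simp [SimpleGraph.Walk.support_cons, hts]⟩

/-- from a degree-one endpoint of a nonnil path, any neighbor lies on the path. -/
lemma endpoint_neighbor_mem {a b : V} (q : S.Walk a b) (hab : a ≠ b)
    (hdeg : ∀ t₁ t₂, S.Adj a t₁ → S.Adj a t₂ → t₁ = t₂) {t : V} (ht : S.Adj a t) :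
    t ∈ q.support := by
  cases q with
  | nil => exact absurd rfl hab
  | @cons _ a₁ _ h q' =>
    have : t = a₁ := hdeg t a₁ ht h
    subst this
    simp [SimpleGraph.Walk.support_cons, SimpleGraph.Walk.start_mem_support]

/-- support of a path between two degree-one vertices (in a max-degree-two graph)
is closed under adjacency. -/
lemma support_closed {u w : V} (q : S.Walk u w) (hq : q.IsPath) (huw : u ≠ w)
    (hdeg2 : ∀ z t₁ t₂ t₃, S.Adj z t₁ → S.Adj z t₂ → S.Adj z t₃ →
      t₁ = t₂ ∨ t₁ = t₃ ∨ t₂ = t₃)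
    (hu : ∀ t₁ t₂, S.Adj u t₁ → S.Adj u t₂ → t₁ = t₂)
    (hw : ∀ t₁ t₂, S.Adj w t₁ → S.Adj w t₂ → t₁ = t₂) :
    ∀ z ∈ q.support, ∀ t, S.Adj z t → t ∈ q.support := by
  intro z hz t ht
  by_cases hzu : z = u
  · subst hzu; exact endpoint_neighbor_mem q huw hu ht
  by_cases hzw : z = w
  · subst hzw
    have := endpoint_neighbor_mem q.reverse (Ne.symm huw) hw ht
    rwa [SimpleGraph.Walk.support_reverse, List.mem_reverse] at this
  obtain ⟨s₁, t₁, hst, hs, ht₁, hss, hts⟩ := interior_two_neighbors q hq z hz hzu hzw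
  rcases hdeg2 z t s₁ t₁ ht hs ht₁ with rfl | rfl | h
  · exact hss
  · exact hts
  · exact absurd h hst

lemma reachable_mem_support {u w : V} (q : S.Walk u w)
    (hclosed : ∀ z ∈ q.support, ∀ t, S.Adj z t → t ∈ q.support) :
    ∀ {a z : V} (r : S.Walk a z), a ∈ q.support → z ∈ q.support := by
  intro a z r
  induction r with
  | nil => exact fun h => h
  | @cons a a₁ z h r' IH => exact fun ha => IH (hclosed a ha a₁ h)

/-- Three distinct degree-one vertices cannot be pairwise reachable in a
graph of maximum degree at most two. -/
lemma three_endpoints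
    (hdeg2 : ∀ z t₁ t₂ t₃, S.Adj z t₁ → S.Adj z t₂ → S.Adj z t₃ →
      t₁ = t₂ ∨ t₁ = t₃ ∨ t₂ = t₃)
    {x u w : V}
    (hx : ∀ t₁ t₂, S.Adj x t₁ → S.Adj x t₂ → t₁ = t₂)
    (hu : ∀ t₁ t₂, S.Adj u t₁ → S.Adj u t₂ → t₁ = t₂)
    (hw : ∀ t₁ t₂, S.Adj w t₁ → S.Adj w t₂ → t₁ = t₂)
    (hxu : x ≠ u) (hxw : x ≠ w) (huw : u ≠ w)
    (hru : S.Reachable u x) (hrw : S.Reachable w x) : False := by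
  classical
  have huw' : S.Reachable u w := hru.trans hrw.symm
  obtain ⟨q₀⟩ := huw'
  let q := q₀.toPath
  have hq : (q : S.Walk u w).IsPath := q.2
  have hclosed := support_closed q hq huw hdeg2 hu hw
  obtain ⟨r⟩ := hru
  have hxmem : x ∈ (q : S.Walk u w).support :=
    reachable_mem_support _ hclosed r (SimpleGraph.Walk.start_mem_support _)
  obtain ⟨s₁, t₁, hst, hs, ht₁, -, -⟩ :=
    interior_two_neighbors (q : S.Walk u w) hq x hxmem (Ne.symm hxu).symm hxw
  exact hst (hx s₁ t₁ hs ht₁)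

end VizingAux2

namespace VizingAux3
variable {V : Type*}

lemma missing_congr {H : SimpleGraph V} {k : ℕ} {c₁ c₂ : Sym2 V → ℕ} {v : V}
    (h : ∀ u, H.Adj v u → c₁ s(v, u) = c₂ s(v, u)) :
    missing H k c₁ v = missing H k c₂ v := by
  ext a
  constructor
  · rintro ⟨hIcc, hne⟩
    exact ⟨hIcc, fun ⟨u, hu, hcu⟩ => hne ⟨u, hu, (h u hu).trans hcu⟩⟩
  · rintro ⟨hIcc, hne⟩
    exact ⟨hIcc, fun ⟨u, hu, hcu⟩ => hne ⟨u, hu, (h u hu).symm.trans hcu⟩⟩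

/-- The subgraph of `H` consisting of edges colored `α` or `β`. -/
def colorSub (H : SimpleGraph V) (c : Sym2 V → ℕ) (α β : ℕ) : SimpleGraph V where
  Adj a b := H.Adj a b ∧ (c s(a, b) = α ∨ c s(a, b) = β)
  symm := by
    refine ⟨fun a b ⟨h1, h2⟩ => ?_⟩
    exact ⟨h1.symm, by rwa [Sym2.eq_swap]⟩
  loopless := ⟨fun a ⟨h, _⟩ => H.irrefl h⟩

lemma colorSub_adj {H : SimpleGraph V} {c : Sym2 V → ℕ} {α β : ℕ} {a b : V} :
    (colorSub H c α β).Adj a b ↔ H.Adj a b ∧ (c s(a, b) = α ∨ c s(a, b) = β) := Iff.rfl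

/-- The Kempe-chain predicate: `e` is an `α/β` edge in the component of `v`. -/
def inQ (H : SimpleGraph V) (c : Sym2 V → ℕ) (α β : ℕ) (v : V) (e : Sym2 V) : Prop :=
  ∃ a b, e = s(a, b) ∧ (colorSub H c α β).Adj a b ∧ (colorSub H c α β).Reachable v a

open Classical in
/-- The coloring obtained from `c` by swapping `α` and `β` on the component of `v`. -/
noncomputable def swapped (H : SimpleGraph V) (c : Sym2 V → ℕ) (α β : ℕ) (v : V) :
    Sym2 V → ℕ := fun e =>
  if inQ H c α β v e then (if c e = α then β else α) else c e

variable {H : SimpleGraph V} {c : Sym2 V → ℕ} {α β : ℕ} {v : V}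

lemma inQ_of {a b : V} (hadj : (colorSub H c α β).Adj a b)
    (hr : (colorSub H c α β).Reachable v a) : inQ H c α β v (s(a, b)) :=
  ⟨a, b, rfl, hadj, hr⟩

lemma inQ_elim {a b : V} (h : inQ H c α β v (s(a, b))) :
    (colorSub H c α β).Adj a b ∧ (colorSub H c α β).Reachable v a := by
  obtain ⟨a', b', heq, hadj, hr⟩ := h
  rw [Sym2.eq_iff] at heq
  rcases heq with ⟨rfl, rfl⟩ | ⟨rfl, rfl⟩
  · exact ⟨hadj, hr⟩
  · exact ⟨hadj.symm, hr.trans hadj.reachable⟩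

lemma swapped_eq_of_inQ {e : Sym2 V} (h : inQ H c α β v e) :
    swapped H c α β v e = if c e = α then β else α := by
  unfold swapped; rw [if_pos h]

lemma swapped_eq_of_not_inQ {e : Sym2 V} (h : ¬ inQ H c α β v e) :
    swapped H c α β v e = c e := by
  unfold swapped; rw [if_neg h]

lemma swapped_eq_of_not_reach {a b : V} (h : ¬ (colorSub H c α β).Reachable v a) :
    swapped H c α β v (s(a, b)) = c s(a, b) := by
  apply swapped_eq_of_not_inQ
  intro hQ
  exact h (inQ_elim hQ).2

/-- missing sets at vertices outside the component are unchanged. -/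
lemma missing_swapped_of_not_reach {k : ℕ} {u : V}
    (h : ¬ (colorSub H c α β).Reachable v u) :
    missing H k (swapped H c α β v) u = missing H k c u :=
  missing_congr fun t _ => swapped_eq_of_not_reach h

/-- The swap preserves properness. -/
lemma swapped_proper {k : ℕ} (hc : IsProperEdgeColoring H k c) (hαβ : α ≠ β)
    (hα : α ∈ Finset.Icc 1 k) (hβ : β ∈ Finset.Icc 1 k) :
    IsProperEdgeColoring H k (swapped H c α β v) := by
  constructor
  · intro e he
    by_cases hQ : inQ H c α β v e
    · rw [swapped_eq_of_inQ hQ]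
      split <;> assumption
    · rw [swapped_eq_of_not_inQ hQ]; exact hc.1 e he
  · intro e he f hf hef ⟨z, hze, hzf⟩
    -- represent e = s(z, a), f = s(z, b)
    obtain hwe := Sym2.other_spec hze
    obtain hwf := Sym2.other_spec hzf
    set a := Sym2.Mem.other hze with ha
    set b := Sym2.Mem.other hzf with hb
    have hadja : H.Adj z a := by rw [← SimpleGraph.mem_edgeSet, hwe]; exact he
    have hadjb : H.Adj z b := by rw [← SimpleGraph.mem_edgeSet, hwf]; exact hf
    have hcef : c e ≠ c f := hc.2 e he f hf hef ⟨z, hze, hzf⟩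
    by_cases hQe : inQ H c α β v e <;> by_cases hQf : inQ H c α β v f
    · -- both in component: colors in {α, β} and swapped
      rw [swapped_eq_of_inQ hQe, swapped_eq_of_inQ hQf]
      have he2 : c e = α ∨ c e = β := by
        have := (colorSub_adj.mp (inQ_elim (hwe ▸ hQe)).1).2
        rwa [hwe] at this
      have hf2 : c f = α ∨ c f = β := by
        have := (colorSub_adj.mp (inQ_elim (hwf ▸ hQf)).1).2
        rwa [hwf] at this
      rcases he2 with h1 | h1 <;> rcases hf2 with h2 | h2
      · exact absurd (h1.trans h2.symm) hcef
      · rw [if_pos h1, if_neg (h2 ▸ (Ne.symm hαβ) : ¬ c f = α)]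
        exact Ne.symm hαβ
      · rw [if_neg (h1 ▸ (Ne.symm hαβ) : ¬ c e = α), if_pos h2]
        exact hαβ
      · exact absurd (h1.trans h2.symm) hcef
    · -- e in component, f not
      rw [swapped_eq_of_inQ hQe, swapped_eq_of_not_inQ hQf]
      have hrz : (colorSub H c α β).Reachable v z := (inQ_elim (hwe ▸ hQe)).2
      intro hcon
      have hcf : c f = α ∨ c f = β := by
        by_cases h1 : c e = α
        · rw [if_pos h1] at hcon; exact Or.inr hcon.symm
        · rw [if_neg h1] at hcon; exact Or.inl hcon.symm
      apply hQf
      rw [← hwf]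
      exact inQ_of (colorSub_adj.mpr ⟨hadjb, by rwa [hwf]⟩) hrz
    · -- f in component, e not
      rw [swapped_eq_of_not_inQ hQe, swapped_eq_of_inQ hQf]
      have hrz : (colorSub H c α β).Reachable v z := (inQ_elim (hwf ▸ hQf)).2
      intro hcon
      have hce : c e = α ∨ c e = β := by
        by_cases h1 : c f = α
        · rw [if_pos h1] at hcon; exact Or.inr hcon
        · rw [if_neg h1] at hcon; exact Or.inl hcon
      apply hQe
      rw [← hwe]
      exact inQ_of (colorSub_adj.mpr ⟨hadja, by rwa [hwe]⟩) hrz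
    · rw [swapped_eq_of_not_inQ hQe, swapped_eq_of_not_inQ hQf]
      exact hcef

/-- At a vertex of the component missing `α`, after the swap `β` is missing. -/
lemma swapped_endpoint {k : ℕ} (hαβ : α ≠ β) (hβ : β ∈ Finset.Icc 1 k) {u : V}
    (hru : (colorSub H c α β).Reachable v u)
    (hv : ¬ ∃ t, H.Adj u t ∧ c s(u, t) = α) :
    β ∈ missing H k (swapped H c α β v) u := by
  refine ⟨hβ, ?_⟩
  rintro ⟨t, hadj, hcol⟩
  by_cases hQ : inQ H c α β v (s(u, t))
  · rw [swapped_eq_of_inQ hQ] at hcol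
    by_cases h1 : c s(u, t) = α
    · exact hv ⟨t, hadj, h1⟩
    · rw [if_neg h1] at hcol; exact hαβ hcol
  · rw [swapped_eq_of_not_inQ hQ] at hcol
    exact hQ (inQ_of (colorSub_adj.mpr ⟨hadj, Or.inr hcol⟩) hru)

/-- Colors other than `α`, `β` that are missing stay missing after the swap. -/
lemma swapped_missing_other {k : ℕ} {γ : ℕ} (hγα : γ ≠ α) (hγβ : γ ≠ β) {u : V}
    (h : γ ∈ missing H k c u) : γ ∈ missing H k (swapped H c α β v) u := by
  refine ⟨h.1, ?_⟩
  rintro ⟨t, hadj, hcol⟩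
  by_cases hQ : inQ H c α β v (s(u, t))
  · rw [swapped_eq_of_inQ hQ] at hcol
    by_cases h1 : c s(u, t) = α
    · rw [if_pos h1] at hcol; exact hγβ hcol.symm
    · rw [if_neg h1] at hcol; exact hγα hcol.symm
  · rw [swapped_eq_of_not_inQ hQ] at hcol
    exact h.2 ⟨t, hadj, hcol⟩

end VizingAux3

namespace VizingAux4
open VizingAux VizingAux2 VizingAux3

variable {V : Type*} [Fintype V] {G : SimpleGraph V} [DecidableRel G.Adj] {x y₀ : V}

lemma not_colorable (hclass2 : chromIndex G = G.maxDegree + 1) :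
    ¬ EdgeColorable G G.maxDegree := by
  intro h
  have h2 : chromIndex G ≤ G.maxDegree := Nat.sInf_le h
  rw [hclass2] at h2
  omega

lemma H_adj_x (hxy : G.Adj x y₀) {u : V} (hu : u ≠ y₀) (h : G.Adj x u) :
    (G.deleteEdges {s(x, y₀)}).Adj x u := by
  rw [SimpleGraph.deleteEdges_adj]
  refine ⟨h, ?_⟩
  simp only [Set.mem_singleton_iff]
  rw [sym2_eq_iff_of_ne h.ne]
  exact hu

lemma no_common_missing_xy0 (hclass2 : chromIndex G = G.maxDegree + 1)
    (hxy : G.Adj x y₀) {c : Sym2 V → ℕ}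
    (hc : IsProperEdgeColoring (G.deleteEdges {s(x, y₀)}) G.maxDegree c) {β : ℕ}
    (hβx : β ∈ missing (G.deleteEdges {s(x, y₀)}) G.maxDegree c x)
    (hβy : β ∈ missing (G.deleteEdges {s(x, y₀)}) G.maxDegree c y₀) : False := by
  classical
  set H := G.deleteEdges {s(x, y₀)} with hH
  have hH_edge : ∀ g ∈ G.edgeSet, g ≠ s(x, y₀) → g ∈ H.edgeSet := by
    intro g hg hg'
    rw [hH, SimpleGraph.edgeSet_deleteEdges]
    exact ⟨hg, hg'⟩
  apply not_colorable hclass2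
  refine ⟨Function.update c s(x, y₀) β, ?_, ?_⟩
  · intro e he
    by_cases h : e = s(x, y₀)
    · subst h; rw [Function.update_self]; exact hβx.1
    · rw [Function.update_of_ne h]
      exact hc.1 e (hH_edge e he h)
  · intro e he f hf hef ⟨z, hze, hzf⟩
    by_cases he' : e = s(x, y₀) <;> by_cases hf' : f = s(x, y₀)
    · exact absurd (he'.trans hf'.symm) hef
    · subst he'
      rw [Function.update_self, Function.update_of_ne hf']
      intro hcon
      obtain hw := Sym2.other_spec hzf
      have hadjf : H.Adj z (Sym2.Mem.other hzf) := by
        rw [← SimpleGraph.mem_edgeSet, hw]; exact hH_edge f hf hf'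
      rcases Sym2.mem_iff.mp hze with rfl | rfl
      · exact hβx.2 ⟨_, hadjf, by rw [hw]; exact hcon.symm⟩
      · exact hβy.2 ⟨_, hadjf, by rw [hw]; exact hcon.symm⟩
    · subst hf'
      rw [Function.update_self, Function.update_of_ne he']
      intro hcon
      obtain hw := Sym2.other_spec hze
      have hadje : H.Adj z (Sym2.Mem.other hze) := by
        rw [← SimpleGraph.mem_edgeSet, hw]; exact hH_edge e he he'
      rcases Sym2.mem_iff.mp hzf with rfl | rfl
      · exact hβx.2 ⟨_, hadje, by rw [hw]; exact hcon⟩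
      · exact hβy.2 ⟨_, hadje, by rw [hw]; exact hcon⟩
    · rw [Function.update_of_ne he', Function.update_of_ne hf']
      exact hc.2 e (hH_edge e he he') f (hH_edge f hf hf') hef ⟨z, hze, hzf⟩

lemma exists_missing_x (hxy : G.Adj x y₀) {c : Sym2 V → ℕ}
    (hc : IsProperEdgeColoring (G.deleteEdges {s(x, y₀)}) G.maxDegree c) :
    ∃ β, β ∈ missing (G.deleteEdges {s(x, y₀)}) G.maxDegree c x := by
  classical
  set H := G.deleteEdges {s(x, y₀)} with hH
  set P : Finset ℕ :=
    (Finset.univ.filter (fun u => H.Adj x u)).image (fun u => c s(x, u)) with hP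
  have hsub : Finset.univ.filter (fun u => H.Adj x u) ⊆ (G.neighborFinset x).erase y₀ := by
    intro u hu
    simp only [Finset.mem_filter, Finset.mem_univ, true_and] at hu
    rw [hH, SimpleGraph.deleteEdges_adj] at hu
    rw [Finset.mem_erase, SimpleGraph.mem_neighborFinset]
    refine ⟨?_, hu.1⟩
    rintro rfl
    exact hu.2 rfl
  have hdegpos : 1 ≤ G.degree x := by
    rw [← SimpleGraph.card_neighborFinset_eq_degree]
    exact Finset.card_pos.mpr ⟨y₀, by rwa [SimpleGraph.mem_neighborFinset]⟩
  have hdegle : G.degree x ≤ G.maxDegree := SimpleGraph.degree_le_maxDegree G x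
  have hcard : P.card < (Finset.Icc 1 G.maxDegree).card := by
    have h1 : P.card ≤ (Finset.univ.filter (fun u => H.Adj x u)).card :=
      Finset.card_image_le
    have h2 := Finset.card_le_card hsub
    have h3 : ((G.neighborFinset x).erase y₀).card = G.degree x - 1 := by
      rw [Finset.card_erase_of_mem (by rwa [SimpleGraph.mem_neighborFinset]),
        SimpleGraph.card_neighborFinset_eq_degree]
    rw [Nat.card_Icc]
    omega
  have : ¬ (Finset.Icc 1 G.maxDegree ⊆ P) := fun h => by
    have := Finset.card_le_card h; omega
  obtain ⟨β, hβIcc, hβP⟩ := Finset.not_subset.mp this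
  refine ⟨β, hβIcc, ?_⟩
  rintro ⟨u, hu, hcu⟩
  exact hβP (Finset.mem_image.mpr ⟨u, Finset.mem_filter.mpr ⟨Finset.mem_univ u, hu⟩, hcu⟩)

end VizingAux4

namespace VizingAux4
variable {V : Type*} [Fintype V] {G : SimpleGraph V} [DecidableRel G.Adj] {x y₀ : V}
open VizingAux VizingAux2 VizingAux3

/-- No color can be missing at both `x` and a vertex of a multi-fan. -/
lemma fan_x_contra (hclass2 : chromIndex G = G.maxDegree + 1)
    {p : ℕ} (y : Fin (p + 1) → V) (h0 : y 0 = y₀)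
    (hadj : ∀ i, G.Adj x (y i)) (hinj : Function.Injective y) :
    ∀ (n : ℕ) (hn : n < p + 1) (c : Sym2 V → ℕ),
      IsProperEdgeColoring (G.deleteEdges {s(x, y₀)}) G.maxDegree c →
      (∀ i : Fin (p + 1), 0 < (i : ℕ) → (i : ℕ) ≤ n → ∃ j : Fin (p + 1),
        (j : ℕ) < (i : ℕ) ∧
        c s(x, y i) ∈ missing (G.deleteEdges {s(x, y₀)}) G.maxDegree c (y j)) →
      ∀ β, β ∈ missing (G.deleteEdges {s(x, y₀)}) G.maxDegree c x →
        β ∈ missing (G.deleteEdges {s(x, y₀)}) G.maxDegree c (y ⟨n, hn⟩) → False := by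
  classical
  have hxy : G.Adj x y₀ := h0 ▸ hadj 0
  set H := G.deleteEdges {s(x, y₀)} with hH
  intro n
  induction n using Nat.strong_induction_on with
  | _ n IH =>
  intro hn c hc hfan β hβx hβy
  rcases Nat.eq_zero_or_pos n with rfl | hpos
  · have h00 : (⟨0, hn⟩ : Fin (p + 1)) = 0 := by ext; simp
    rw [h00, h0] at hβy
    exact no_common_missing_xy0 hclass2 hxy hc hβx hβy
  · set i : Fin (p + 1) := ⟨n, hn⟩ with hidef
    obtain ⟨j, hj, hmem⟩ := hfan i hpos le_rfl
    have hjn : (j : ℕ) < n := hj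
    set γ := c s(x, y i) with hγ
    have hi0 : y i ≠ y₀ := by
      rw [← h0]
      intro h
      have := hinj h
      rw [hidef] at this
      have : n = 0 := by
        have := congrArg Fin.val this; simpa using this
      omega
    have hadjH : H.Adj x (y i) := H_adj_x hxy hi0 (hadj i)
    have hγIcc : γ ∈ Finset.Icc 1 G.maxDegree :=
      hc.1 _ ((H.mem_edgeSet).mpr hadjH)
    have hβγ : β ≠ γ := by
      rintro rfl
      exact hβx.2 ⟨y i, hadjH, rfl⟩
    set c' := Function.update c s(x, y i) β with hc'def
    have hc' : IsProperEdgeColoring H G.maxDegree c' :=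
      proper_update hc hadjH hβx.1 hβx.2 hβy.2
    -- the edge s(x, y i') for i' ≠ i keeps its color
    have hkeep : ∀ i' : Fin (p + 1), i' ≠ i → c' s(x, y i') = c s(x, y i') := by
      intro i' hi'
      apply Function.update_of_ne
      intro h
      rw [sym2_eq_iff_of_ne (hadj i').ne] at h
      exact hi' (hinj h)
    -- missing sets away from x and y i are unchanged
    have hmiss : ∀ v : V, v ≠ x → v ≠ y i →
        missing H G.maxDegree c' v = missing H G.maxDegree c v := by
      intro v hvx hvi
      apply VizingAux.missing_congr
      intro u hu
      apply Function.update_of_ne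
      intro h
      rw [Sym2.eq_iff] at h
      rcases h with ⟨h1, -⟩ | ⟨h1, h2⟩
      · exact hvx h1
      · exact hvi h1
    -- the fan condition for c', up to j
    have hfan' : ∀ i' : Fin (p + 1), 0 < (i' : ℕ) → (i' : ℕ) ≤ (j : ℕ) →
        ∃ j' : Fin (p + 1), (j' : ℕ) < (i' : ℕ) ∧
          c' s(x, y i') ∈ missing H G.maxDegree c' (y j') := by
      intro i' hi'pos hi'le
      obtain ⟨j', hj', hmem'⟩ := hfan i' hi'pos (by omega)
      have hi'ne : i' ≠ i := by
        intro h; rw [h] at hi'le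
        have h2 : n ≤ (j : ℕ) := hi'le
        omega
      have hj'ne : y j' ≠ y i := by
        intro h
        have h2 : (j' : ℕ) = n := congrArg Fin.val (hinj h)
        omega
      have hj'x : y j' ≠ x := (hadj j').ne'
      refine ⟨j', hj', ?_⟩
      rw [hkeep i' hi'ne, hmiss (y j') hj'x hj'ne]
      exact hmem'
    -- γ is missing at x under c'
    have hγx : γ ∈ missing H G.maxDegree c' x := by
      refine ⟨hγIcc, ?_⟩
      rintro ⟨u, hu, hcu⟩
      by_cases h : u = y i
      · subst h
        rw [hc'def, Function.update_self] at hcu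
        exact hβγ hcu
      · have : c' s(x, u) = c s(x, u) := by
          apply Function.update_of_ne
          intro hh
          rw [sym2_eq_iff_of_ne hu.ne] at hh
          exact h hh
        rw [this] at hcu
        exact proper_ne_of_shared hc h hu hadjH hcu
    -- γ is missing at y j under c'
    have hji : y j ≠ y i := by
      intro h
      have h2 : (j : ℕ) = n := congrArg Fin.val (hinj h)
      omega
    have hγj : γ ∈ missing H G.maxDegree c' (y j) := by
      rw [hmiss (y j) (hadj j).ne' hji]
      exact hmem
    have hjeta : y ⟨(j : ℕ), j.2⟩ = y j := by congr 1
    exact IH (j : ℕ) (by omega) j.2 c' hc' hfan' γ hγx (hjeta ▸ hγj)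

end VizingAux4

namespace VizingAux4
variable {V : Type*} [Fintype V] {G : SimpleGraph V} [DecidableRel G.Adj] {x y₀ : V}
open VizingAux VizingAux2 VizingAux3

lemma elementary (hclass2 : chromIndex G = G.maxDegree + 1) :
    ∀ (p : ℕ) (y : Fin (p + 1) → V), y 0 = y₀ → (∀ i, G.Adj x (y i)) →
    Function.Injective y →
    ∀ c : Sym2 V → ℕ, IsProperEdgeColoring (G.deleteEdges {s(x, y₀)}) G.maxDegree c →
    (∀ i : Fin (p + 1), 0 < (i : ℕ) → ∃ j : Fin (p + 1), (j : ℕ) < (i : ℕ) ∧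
      c s(x, y i) ∈ missing (G.deleteEdges {s(x, y₀)}) G.maxDegree c (y j)) →
    ∀ u w, u ∈ insert x (Set.range y) → w ∈ insert x (Set.range y) → u ≠ w →
      missing (G.deleteEdges {s(x, y₀)}) G.maxDegree c u ∩
        missing (G.deleteEdges {s(x, y₀)}) G.maxDegree c w = ∅ := by
  classical
  intro p
  induction p using Nat.strong_induction_on with
  | _ p IH =>
  intro y h0 hadj hinj c hc hfan u w hu hw huw
  set H := G.deleteEdges {s(x, y₀)} with hHdef
  have hxy : G.Adj x y₀ := h0 ▸ hadj 0
  by_contra hcon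
  obtain ⟨α, hαu, hαw⟩ : ∃ α, α ∈ missing H G.maxDegree c u ∧
      α ∈ missing H G.maxDegree c w := by
    rcases Set.eq_empty_or_nonempty
      (missing H G.maxDegree c u ∩ missing H G.maxDegree c w) with h | ⟨α, hα⟩
    · exact absurd h hcon
    · exact ⟨α, hα.1, hα.2⟩
  have xpair : ∀ (b : Fin (p + 1)) (β : ℕ), β ∈ missing H G.maxDegree c x →
      β ∈ missing H G.maxDegree c (y b) → False := by
    intro b β h1 h2
    have hb : y ⟨(b : ℕ), b.2⟩ = y b := by congr 1
    exact fan_x_contra hclass2 y h0 hadj hinj (b : ℕ) b.2 c hc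
      (fun i hi _ => hfan i hi) β h1 (hb ▸ h2)
  have core : ∀ (a b : Fin (p + 1)), (a : ℕ) < (b : ℕ) →
      α ∈ missing H G.maxDegree c (y a) → α ∈ missing H G.maxDegree c (y b) →
      False := by
    intro a b hab hαa hαb
    have hp : p ≠ 0 := by
      intro h
      subst h
      have ha2 := a.isLt
      have hb2 := b.isLt
      omega
    obtain ⟨q, rfl⟩ := Nat.exists_eq_succ_of_ne_zero hp
    -- the prefix fan (y 0, …, y q) is elementary by induction
    have h0' : y (Fin.castSucc 0) = y₀ := by
      rw [show Fin.castSucc (0 : Fin (q + 1)) = (0 : Fin (q + 2)) by ext; simp]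
      exact h0
    have hadj' : ∀ i : Fin (q + 1), G.Adj x (y (Fin.castSucc i)) := fun i => hadj _
    have hinj' : Function.Injective (fun i : Fin (q + 1) => y (Fin.castSucc i)) :=
      fun i j h => Fin.castSucc_injective _ (hinj h)
    have hfan' : ∀ i : Fin (q + 1), 0 < (i : ℕ) → ∃ j : Fin (q + 1),
        (j : ℕ) < (i : ℕ) ∧ c s(x, y (Fin.castSucc i)) ∈
          missing H G.maxDegree c (y (Fin.castSucc j)) := by
      intro i hi
      obtain ⟨j, hj, hmem⟩ := hfan (Fin.castSucc i) (by simpa using hi)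
      have hjval : (j : ℕ) < (i : ℕ) := by simpa using hj
      refine ⟨⟨(j : ℕ), by omega⟩, hjval, ?_⟩
      have hyj : y (Fin.castSucc ⟨(j : ℕ), by omega⟩) = y j :=
        congrArg y (Fin.ext (by simp))
      rw [hyj]
      exact hmem
    have prefixElem := IH q (by omega) (fun i => y (Fin.castSucc i)) h0' hadj'
      hinj' c hc hfan'
    have prefixPair : ∀ (a' b' : Fin (q + 2)), (a' : ℕ) ≤ q → (b' : ℕ) ≤ q →
        a' ≠ b' → ∀ γ, γ ∈ missing H G.maxDegree c (y a') →
        γ ∈ missing H G.maxDegree c (y b') → False := by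
      intro a' b' ha' hb' hne γ h1 h2
      have e1 : (fun i : Fin (q + 1) => y (Fin.castSucc i)) ⟨(a' : ℕ), by omega⟩
          = y a' := congrArg y (Fin.ext (by simp))
      have e2 : (fun i : Fin (q + 1) => y (Fin.castSucc i)) ⟨(b' : ℕ), by omega⟩
          = y b' := congrArg y (Fin.ext (by simp))
      have hm1 : y a' ∈ insert x (Set.range (fun i : Fin (q+1) => y (Fin.castSucc i))) :=
        Set.mem_insert_of_mem _ ⟨⟨(a' : ℕ), by omega⟩, e1⟩
      have hm2 : y b' ∈ insert x (Set.range (fun i : Fin (q+1) => y (Fin.castSucc i))) :=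
        Set.mem_insert_of_mem _ ⟨⟨(b' : ℕ), by omega⟩, e2⟩
      have hnev : y a' ≠ y b' := fun h => hne (hinj h)
      have hres := prefixElem (y a') (y b') hm1 hm2 hnev
      rw [Set.eq_empty_iff_forall_notMem] at hres
      exact hres γ ⟨h1, h2⟩
    have habne : y a ≠ y b := fun h => (Nat.ne_of_lt hab) (congrArg Fin.val (hinj h))
    by_cases hble : (b : ℕ) ≤ q
    · exact prefixPair a b (by omega) hble
        (fun h => (Nat.ne_of_lt hab) (congrArg Fin.val h)) α hαa hαb
    have hbval : (b : ℕ) = q + 1 := by have := b.isLt; omega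
    have haq : (a : ℕ) ≤ q := by omega
    by_cases hαx : α ∈ missing H G.maxDegree c x
    · exact xpair a α hαx hαa
    obtain ⟨β, hβx⟩ := exists_missing_x hxy hc
    by_cases hβb : β ∈ missing H G.maxDegree c (y b)
    · exact xpair b β hβx hβb
    by_cases hβa : β ∈ missing H G.maxDegree c (y a)
    · exact xpair a β hβx hβa
    have hαβ : α ≠ β := fun h => hαx (h ▸ hβx)
    have hαIcc : α ∈ Finset.Icc 1 G.maxDegree := hαa.1
    have hβIcc : β ∈ Finset.Icc 1 G.maxDegree := hβx.1
    set S := colorSub H c α β with hS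
    have hne0 : ∀ i : Fin (q + 2), 0 < (i : ℕ) → y i ≠ y₀ := by
      intro i hi h
      rw [← h0] at h
      have h2 : (i : ℕ) = ((0 : Fin (q + 2)) : ℕ) := congrArg Fin.val (hinj h)
      rw [Fin.val_zero] at h2
      omega
    -- degree-one facts in the α/β-subgraph
    have degx : ∀ t₁ t₂, S.Adj x t₁ → S.Adj x t₂ → t₁ = t₂ := by
      intro t₁ t₂ h1 h2
      obtain ⟨ha1, hc1⟩ := colorSub_adj.mp h1
      obtain ⟨ha2, hc2⟩ := colorSub_adj.mp h2
      have e1 : c s(x, t₁) = α := hc1.resolve_right (fun hb => hβx.2 ⟨t₁, ha1, hb⟩)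
      have e2 : c s(x, t₂) = α := hc2.resolve_right (fun hb => hβx.2 ⟨t₂, ha2, hb⟩)
      by_contra hne
      exact proper_ne_of_shared hc hne ha1 ha2 (e1.trans e2.symm)
    have dega : ∀ t₁ t₂, S.Adj (y a) t₁ → S.Adj (y a) t₂ → t₁ = t₂ := by
      intro t₁ t₂ h1 h2
      obtain ⟨ha1, hc1⟩ := colorSub_adj.mp h1
      obtain ⟨ha2, hc2⟩ := colorSub_adj.mp h2
      have e1 : c s(y a, t₁) = β := hc1.resolve_left (fun hb => hαa.2 ⟨t₁, ha1, hb⟩)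
      have e2 : c s(y a, t₂) = β := hc2.resolve_left (fun hb => hαa.2 ⟨t₂, ha2, hb⟩)
      by_contra hne
      exact proper_ne_of_shared hc hne ha1 ha2 (e1.trans e2.symm)
    have degb : ∀ t₁ t₂, S.Adj (y b) t₁ → S.Adj (y b) t₂ → t₁ = t₂ := by
      intro t₁ t₂ h1 h2
      obtain ⟨ha1, hc1⟩ := colorSub_adj.mp h1
      obtain ⟨ha2, hc2⟩ := colorSub_adj.mp h2
      have e1 : c s(y b, t₁) = β := hc1.resolve_left (fun hb' => hαb.2 ⟨t₁, ha1, hb'⟩)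
      have e2 : c s(y b, t₂) = β := hc2.resolve_left (fun hb' => hαb.2 ⟨t₂, ha2, hb'⟩)
      by_contra hne
      exact proper_ne_of_shared hc hne ha1 ha2 (e1.trans e2.symm)
    have hdeg2 : ∀ z t₁ t₂ t₃, S.Adj z t₁ → S.Adj z t₂ → S.Adj z t₃ →
        t₁ = t₂ ∨ t₁ = t₃ ∨ t₂ = t₃ := by
      intro z t₁ t₂ t₃ h1 h2 h3
      by_contra hcc
      push_neg at hcc
      obtain ⟨n12, n13, n23⟩ := hcc
      obtain ⟨ha1, hc1⟩ := colorSub_adj.mp h1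
      obtain ⟨ha2, hc2⟩ := colorSub_adj.mp h2
      obtain ⟨ha3, hc3⟩ := colorSub_adj.mp h3
      have d12 := proper_ne_of_shared hc n12 ha1 ha2
      have d13 := proper_ne_of_shared hc n13 ha1 ha3
      have d23 := proper_ne_of_shared hc n23 ha2 ha3
      rcases hc1 with e1 | e1 <;> rcases hc2 with e2 | e2 <;>
        rcases hc3 with e3 | e3 <;>
        first
          | exact d12 (e1.trans e2.symm)
          | exact d13 (e1.trans e3.symm)
          | exact d23 (e2.trans e3.symm)
    by_cases hra : S.Reachable (y a) x
    · by_cases hrb : S.Reachable (y b) x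
      · -- x, y a, y b are three degree-one vertices in one component
        exact VizingAux2.three_endpoints hdeg2 degx dega degb
          (hadj a).ne (hadj b).ne habne hra hrb
      · -- swap the component of (y b); the full fan survives
        set c' := swapped H c α β (y b) with hc'def
        have hc'p : IsProperEdgeColoring H G.maxDegree c' :=
          swapped_proper hc hαβ hαIcc hβIcc
        have hkeepx : ∀ t : V, c' s(x, t) = c s(x, t) :=
          fun t => swapped_eq_of_not_reach hrb
        have hfan'' : ∀ i : Fin (q + 2), 0 < (i : ℕ) → (i : ℕ) ≤ (b : ℕ) →
            ∃ j : Fin (q + 2), (j : ℕ) < (i : ℕ) ∧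
            c' s(x, y i) ∈ missing H G.maxDegree c' (y j) := by
          intro i hi hile
          obtain ⟨j, hj, hmem⟩ := hfan i hi
          refine ⟨j, hj, ?_⟩
          rw [hkeepx (y i)]
          by_cases hrj : S.Reachable (y b) (y j)
          · have hadjHi : H.Adj x (y i) := H_adj_x hxy (hne0 i hi) (hadj i)
            by_cases hγβ : c s(x, y i) = β
            · exact absurd (hβx.2 ⟨y i, hadjHi, hγβ⟩) (fun h => h)
            by_cases hγα : c s(x, y i) = α
            · exfalso
              have hαj : α ∈ missing H G.maxDegree c (y j) := hγα ▸ hmem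
              by_cases hja : (j : ℕ) = (a : ℕ)
              · have hyja : y j = y a := congrArg y (Fin.ext hja)
                exact hrb ((hyja ▸ hrj).trans hra)
              · exact prefixPair j a (by omega) haq
                  (fun h => hja (congrArg Fin.val h)) α hαj hαa
            · exact swapped_missing_other hγα hγβ hmem
          · rw [missing_swapped_of_not_reach hrj]
            exact hmem
        have hβx' : β ∈ missing H G.maxDegree c' x := by
          rw [hc'def, missing_swapped_of_not_reach hrb]
          exact hβx
        have hβb' : β ∈ missing H G.maxDegree c' (y b) :=
          swapped_endpoint hαβ hβIcc (SimpleGraph.Reachable.refl _) hαb.2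
        have hbeta : y ⟨(b : ℕ), b.2⟩ = y b := by congr 1
        exact fan_x_contra hclass2 y h0 hadj hinj (b : ℕ) b.2 c' hc'p hfan''
          β hβx' (hbeta ▸ hβb')
    · -- swap the component of (y a); the truncated fan up to a survives
      set c' := swapped H c α β (y a) with hc'def
      have hc'p : IsProperEdgeColoring H G.maxDegree c' :=
        swapped_proper hc hαβ hαIcc hβIcc
      have hkeepx : ∀ t : V, c' s(x, t) = c s(x, t) :=
        fun t => swapped_eq_of_not_reach hra
      have hale : (a : ℕ) + 1 ≤ q + 2 := by omega
      have h0'' : y (Fin.castLE hale 0) = y₀ := by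
        rw [show Fin.castLE hale (0 : Fin ((a : ℕ) + 1)) = (0 : Fin (q + 2)) by ext; simp]
        exact h0
      have hadj'' : ∀ i : Fin ((a : ℕ) + 1), G.Adj x (y (Fin.castLE hale i)) :=
        fun i => hadj _
      have hinj'' : Function.Injective (fun i : Fin ((a : ℕ) + 1) => y (Fin.castLE hale i)) :=
        fun i j h => Fin.castLE_injective hale (hinj h)
      have hfan'' : ∀ i : Fin ((a : ℕ) + 1), 0 < (i : ℕ) → (i : ℕ) ≤ (a : ℕ) →
          ∃ j : Fin ((a : ℕ) + 1), (j : ℕ) < (i : ℕ) ∧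
          c' s(x, y (Fin.castLE hale i)) ∈
            missing H G.maxDegree c' (y (Fin.castLE hale j)) := by
        intro i hi hile
        obtain ⟨j, hj, hmem⟩ := hfan (Fin.castLE hale i) (by simpa using hi)
        have hjval : (j : ℕ) < (i : ℕ) := by simpa using hj
        refine ⟨⟨(j : ℕ), by omega⟩, hjval, ?_⟩
        have hyj : y (Fin.castLE hale ⟨(j : ℕ), by omega⟩) = y j :=
          congrArg y (Fin.ext (by simp))
        rw [hyj, hkeepx (y (Fin.castLE hale i))]
        have hipos : 0 < ((Fin.castLE hale i : Fin (q + 2)) : ℕ) := by simpa using hi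
        by_cases hrj : S.Reachable (y a) (y j)
        · have hadjHi : H.Adj x (y (Fin.castLE hale i)) :=
            H_adj_x hxy (hne0 _ hipos) (hadj _)
          by_cases hγβ : c s(x, y (Fin.castLE hale i)) = β
          · exact absurd (hβx.2 ⟨_, hadjHi, hγβ⟩) (fun h => h)
          by_cases hγα : c s(x, y (Fin.castLE hale i)) = α
          · exfalso
            have hαj : α ∈ missing H G.maxDegree c (y j) := hγα ▸ hmem
            have hja : (j : ℕ) ≠ (a : ℕ) := by
              have : (i : ℕ) ≤ (a : ℕ) := hile
              omega
            exact prefixPair j a (by omega) haq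
              (fun h => hja (congrArg Fin.val h)) α hαj hαa
          · exact swapped_missing_other hγα hγβ hmem
        · rw [missing_swapped_of_not_reach hrj]
          exact hmem
      have hβx' : β ∈ missing H G.maxDegree c' x := by
        rw [hc'def, missing_swapped_of_not_reach hra]
        exact hβx
      have hβa' : β ∈ missing H G.maxDegree c' (y a) :=
        swapped_endpoint hαβ hβIcc (SimpleGraph.Reachable.refl _) hαa.2
      have haeta : y (Fin.castLE hale ⟨(a : ℕ), Nat.lt_succ_self _⟩) = y a :=
        congrArg y (Fin.ext (by simp))
      refine fan_x_contra hclass2 (fun i => y (Fin.castLE hale i)) h0'' hadj'' hinj''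
        (a : ℕ) (Nat.lt_succ_self _) c' hc'p hfan'' β hβx' ?_
      have hres := hβa'
      rw [show y a = (fun i : Fin ((a : ℕ) + 1) => y (Fin.castLE hale i))
          ⟨(a : ℕ), Nat.lt_succ_self _⟩ from (congrArg y (Fin.ext (by simp))).symm] at hres
      exact hres
  -- dispatch on the membership of u and w
  rcases Set.mem_insert_iff.mp hu with rfl | ⟨a, rfl⟩
  · rcases Set.mem_insert_iff.mp hw with rfl | ⟨b, rfl⟩
    · exact huw rfl
    · exact xpair b α hαu hαw
  · rcases Set.mem_insert_iff.mp hw with rfl | ⟨b, rfl⟩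
    · exact xpair a α hαw hαu
    · rcases lt_trichotomy ((a : ℕ)) ((b : ℕ)) with h | h | h
      · exact core a b h hαu hαw
      · exact huw (congrArg y (Fin.ext h))
      · exact core b a h hαw hαu

end VizingAux4

-- CHUNK7

/-- if `G` is Class 2 with critical edge `e₁ = x(y 0)`, `c` is a proper
`Δ`-edge-coloring of `G − e₁`, and `(x, e₁, y 0, …, y p)` is a multi-fan at `x` (distinct
edges `x(y i)`, and for `i ≥ 1` the color of `x(y i)` is missing at some earlier `y j`),
then the vertex set of the fan is elementary: missing color sets of distinct fan vertices
are disjoint. -/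
theorem stmt_6 {V : Type*} [Fintype V] (G : SimpleGraph V) [DecidableRel G.Adj]
    (hclass2 : chromIndex G = G.maxDegree + 1) (x : V) (p : ℕ) (y : Fin (p + 1) → V)
    (hadj : ∀ i, G.Adj x (y i)) (hinj : Function.Injective y)
    (hcrit : chromIndex (G.deleteEdges {s(x, y 0)}) < chromIndex G)
    (c : Sym2 V → ℕ)
    (hc : IsProperEdgeColoring (G.deleteEdges {s(x, y 0)}) G.maxDegree c)
    (hfan : ∀ i : Fin (p + 1), 0 < (i : ℕ) → ∃ j : Fin (p + 1), (j : ℕ) < (i : ℕ) ∧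
      c s(x, y i) ∈ missing (G.deleteEdges {s(x, y 0)}) G.maxDegree c (y j)) :
    ∀ u w, u ∈ insert x (Set.range y) → w ∈ insert x (Set.range y) → u ≠ w →
      missing (G.deleteEdges {s(x, y 0)}) G.maxDegree c u ∩
        missing (G.deleteEdges {s(x, y 0)}) G.maxDegree c w = ∅ := by
  exact VizingAux4.elementary (x := x) (y₀ := y 0) hclass2 p y rfl hadj hinj c hc hfan
end

section
/- Let G be a Class 2 graph with critical edge e₁ = y₀y₁, φ ∈ C^Δ(G − e₁), and let K = (y₀, e₁, y₁, e₂, y₂, e₃, y₃) be a Kierstead path with respect to e₁ and φ. If min{d_G(y₁), d_G(y₂)} < Δ, then V(K) = {y₀, y₁, y₂, y₃} is φ-elementary. -/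
open SimpleGraph

namespace KPaux
attribute [local instance] Classical.propDecidable
variable {V : Type*}
lemma mem_missing {H : SimpleGraph V} {k : ℕ} {c : Sym2 V → ℕ} {v : V} {α : ℕ} :
    α ∈ missing H k c v ↔ α ∈ Finset.Icc 1 k ∧ ¬ ∃ u, H.Adj v u ∧ c s(v, u) = α := Iff.rfl
lemma not_missing_of_adj {H : SimpleGraph V} {k : ℕ} {c : Sym2 V → ℕ} {v u : V}
    (h : H.Adj v u) : c s(v, u) ∉ missing H k c v := fun hm => hm.2 ⟨u, h, rfl⟩
lemma missing_ne_of_adj {H : SimpleGraph V} {k : ℕ} {c : Sym2 V → ℕ} {v u : V} {α : ℕ}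
    (h : H.Adj v u) (hm : α ∈ missing H k c v) : α ≠ c s(v, u) := by
  rintro rfl; exact not_missing_of_adj h hm
lemma missing_congr {H : SimpleGraph V} {k : ℕ} {c₁ c₂ : Sym2 V → ℕ} {t : V}
    (h : ∀ q, H.Adj t q → c₁ s(t, q) = c₂ s(t, q)) :
    missing H k c₁ t = missing H k c₂ t := by
  ext α
  simp only [mem_missing]
  constructor
  · rintro ⟨hI, hn⟩
    exact ⟨hI, fun ⟨q, hq, he⟩ => hn ⟨q, hq, by rw [h q hq]; exact he⟩⟩
  · rintro ⟨hI, hn⟩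
    exact ⟨hI, fun ⟨q, hq, he⟩ => hn ⟨q, hq, by rw [← h q hq]; exact he⟩⟩

lemma c_comm (c : Sym2 V → ℕ) (p q : V) : c s(p,q) = c s(q,p) := by rw [Sym2.eq_swap]

lemma edge_eq_of_mem {H : SimpleGraph V} {e : Sym2 V} {t : V}
    (he : e ∈ H.edgeSet) (ht : t ∈ e) : ∃ q, H.Adj t q ∧ e = s(t, q) := by
  induction e with
  | h x y =>
    rcases Sym2.mem_iff.mp ht with rfl | rfl
    · exact ⟨y, he, rfl⟩
    · exact ⟨x, (H.mem_edgeSet.mp he).symm, Sym2.eq_swap⟩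
lemma eq_of_same_color {H : SimpleGraph V} {k : ℕ} {c : Sym2 V → ℕ}
    (hc : IsProperEdgeColoring H k c) {t p q : V} (hp : H.Adj t p) (hq : H.Adj t q)
    (h : c s(t, p) = c s(t, q)) : p = q := by
  by_contra hne
  have hedge : s(t, p) ≠ s(t, q) := by
    intro h1
    rcases Sym2.eq_iff.mp h1 with ⟨_, rfl⟩ | ⟨h2, _⟩
    · exact hne rfl
    · exact H.ne_of_adj hq h2
  exact hc.2 _ hp _ hq hedge ⟨t, Sym2.mem_mk_left _ _, Sym2.mem_mk_left _ _⟩ h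

section ext
variable {G : SimpleGraph V} {k : ℕ} {u v : V} {c : Sym2 V → ℕ}

lemma mem_H_edgeSet {e : Sym2 V} :
    e ∈ (G.deleteEdges {s(u,v)}).edgeSet ↔ e ∈ G.edgeSet ∧ e ≠ s(u,v) := by
  rw [edgeSet_deleteEdges]; exact Iff.rfl

lemma H_adj {p q : V} :
    (G.deleteEdges {s(u,v)}).Adj p q ↔ G.Adj p q ∧ s(p,q) ≠ s(u,v) := by
  rw [deleteEdges_adj]; exact Iff.rfl

/-- Extension lemma: if some color is missing at both ends of the uncolored edge, G is
k-edge-colorable. -/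
lemma ext1 (hNC : ¬ EdgeColorable G k) (huv : G.Adj u v)
    (hc : IsProperEdgeColoring (G.deleteEdges {s(u,v)}) k c) {a : ℕ}
    (hau : a ∈ missing (G.deleteEdges {s(u,v)}) k c u)
    (hav : a ∈ missing (G.deleteEdges {s(u,v)}) k c v) : False := by
  set H := G.deleteEdges {s(u,v)} with hH
  apply hNC
  refine ⟨fun e => if e = s(u,v) then a else c e, ?_, ?_⟩
  · intro e he
    by_cases h : e = s(u,v)
    · simpa [h] using hau.1
    · simpa [h] using hc.1 e (mem_H_edgeSet.mpr ⟨he, h⟩)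
  · have key : ∀ f' ∈ G.edgeSet, f' ≠ s(u,v) → (∃ t, t ∈ s(u,v) ∧ t ∈ f') → c f' ≠ a := by
      rintro f' hf' hne ⟨t, ht1, ht2⟩
      have hfH : f' ∈ H.edgeSet := mem_H_edgeSet.mpr ⟨hf', hne⟩
      obtain ⟨q, hq, rfl⟩ := edge_eq_of_mem hfH ht2
      rcases Sym2.mem_iff.mp ht1 with rfl | rfl
      · exact fun h => hau.2 ⟨q, hq, h⟩
      · exact fun h => hav.2 ⟨q, hq, h⟩
    rintro e he f' hf' hne ⟨t, hte, htf⟩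
    by_cases he1 : e = s(u,v) <;> by_cases hf1 : f' = s(u,v)
    · exact absurd (he1.trans hf1.symm) hne
    · subst he1
      have h1 : (fun e => if e = s(u,v) then a else c e) s(u,v) = a := by simp
      have h2 : (fun e => if e = s(u,v) then a else c e) f' = c f' := by simp [hf1]
      rw [h1, h2]
      exact fun h => (key f' hf' hf1 ⟨t, hte, htf⟩) h.symm
    · subst hf1
      have h1 : (fun e => if e = s(u,v) then a else c e) s(u,v) = a := by simp
      have h2 : (fun e => if e = s(u,v) then a else c e) e = c e := by simp [he1]
      rw [h1, h2]
      exact key e he he1 ⟨t, htf, hte⟩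
    · have h1 : (fun e => if e = s(u,v) then a else c e) e = c e := by simp [he1]
      have h2 : (fun e => if e = s(u,v) then a else c e) f' = c f' := by simp [hf1]
      rw [h1, h2]
      exact hc.2 e (mem_H_edgeSet.mpr ⟨he, he1⟩) f' (mem_H_edgeSet.mpr ⟨hf', hf1⟩) hne
        ⟨t, hte, htf⟩

end ext
section ext2
variable {G : SimpleGraph V} {k : ℕ} {u v w : V} {c : Sym2 V → ℕ}

lemma edge_ne_edge {t x p q : V} (h1 : t ≠ p) (h2 : t ≠ q) : s(t,x) ≠ s(p,q) := by
  intro h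
  rcases Sym2.eq_iff.mp h with ⟨h3, _⟩ | ⟨h3, _⟩
  exacts [h1 h3, h2 h3]

lemma e1_ne_e2 (huv : G.Adj u v) (huw : u ≠ w) : s(u,v) ≠ s(v,w) := by
  intro h
  rcases Sym2.eq_iff.mp h with ⟨h3, _⟩ | ⟨h3, _⟩
  exacts [G.ne_of_adj huv h3, huw h3]

/-- P12-core: recolor `vw ↦ α`, `uv ↦ β` to get a full coloring; contradiction. -/
lemma ext2 (hNC : ¬ EdgeColorable G k) (huv : G.Adj u v) (hvw : G.Adj v w) (huw : u ≠ w)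
    (hc : IsProperEdgeColoring (G.deleteEdges {s(u,v)}) k c)
    (hβ : c s(v,w) ∈ missing (G.deleteEdges {s(u,v)}) k c u) {α : ℕ}
    (hαv : α ∈ missing (G.deleteEdges {s(u,v)}) k c v)
    (hαw : α ∈ missing (G.deleteEdges {s(u,v)}) k c w) : False := by
  set H := G.deleteEdges {s(u,v)} with hH
  set β := c s(v,w) with hβdef
  have h12 : s(u,v) ≠ s(v,w) := e1_ne_e2 huv huw
  have hvwH : H.Adj v w := H_adj.mpr ⟨hvw, fun h => h12 h.symm⟩
  have hαβ : α ≠ β := missing_ne_of_adj hvwH hαv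
  set c' : Sym2 V → ℕ := fun e => if e = s(u,v) then β else if e = s(v,w) then α else c e
    with hc'
  have hval1 : c' s(u,v) = β := by simp [hc']
  have hval2 : c' s(v,w) = α := by simp [hc', h12.symm]
  have hval3 : ∀ e, e ≠ s(u,v) → e ≠ s(v,w) → c' e = c e := by
    intro e h1 h2; simp [hc', h1, h2]
  have key1 : ∀ f' ∈ G.edgeSet, f' ≠ s(u,v) → f' ≠ s(v,w) →
      (∃ t, t ∈ s(u,v) ∧ t ∈ f') → c f' ≠ β := by
    rintro f' hf' hne1 hne2 ⟨t, ht1, ht2⟩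
    have hfH : f' ∈ H.edgeSet := mem_H_edgeSet.mpr ⟨hf', hne1⟩
    obtain ⟨q, hq, rfl⟩ := edge_eq_of_mem hfH ht2
    rcases Sym2.mem_iff.mp ht1 with rfl | rfl
    · exact fun h => hβ.2 ⟨q, hq, h⟩
    · intro h
      exact hne2 (by rw [eq_of_same_color hc hq hvwH h])
  have key2 : ∀ f' ∈ G.edgeSet, f' ≠ s(u,v) → f' ≠ s(v,w) →
      (∃ t, t ∈ s(v,w) ∧ t ∈ f') → c f' ≠ α := by
    rintro f' hf' hne1 hne2 ⟨t, ht1, ht2⟩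
    have hfH : f' ∈ H.edgeSet := mem_H_edgeSet.mpr ⟨hf', hne1⟩
    obtain ⟨q, hq, rfl⟩ := edge_eq_of_mem hfH ht2
    rcases Sym2.mem_iff.mp ht1 with rfl | rfl
    · exact fun h => hαv.2 ⟨q, hq, h⟩
    · exact fun h => hαw.2 ⟨q, hq, h⟩
  apply hNC
  refine ⟨c', ?_, ?_⟩
  · intro e he
    by_cases h1 : e = s(u,v)
    · rw [h1, hval1]; exact hβ.1
    · by_cases h2 : e = s(v,w)
      · rw [h2, hval2]; exact hαv.1
      · rw [hval3 e h1 h2]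
        exact hc.1 e (mem_H_edgeSet.mpr ⟨he, h1⟩)
  · rintro e he f' hf' hne ⟨t, hte, htf⟩
    by_cases he1 : e = s(u,v) <;> by_cases hf1 : f' = s(u,v)
    · exact absurd (he1.trans hf1.symm) hne
    · subst he1
      by_cases hf2 : f' = s(v,w)
      · subst hf2; rw [hval1, hval2]; exact fun h => hαβ (h.symm)
      · rw [hval1, hval3 f' hf1 hf2]
        exact fun h => (key1 f' hf' hf1 hf2 ⟨t, hte, htf⟩) h.symm
    · subst hf1
      by_cases he2 : e = s(v,w)
      · subst he2; rw [hval1, hval2]; exact fun h => hαβ h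
      · rw [hval1, hval3 e he1 he2]
        exact key1 e he he1 he2 ⟨t, htf, hte⟩
    · by_cases he2 : e = s(v,w) <;> by_cases hf2 : f' = s(v,w)
      · exact absurd (he2.trans hf2.symm) hne
      · subst he2
        rw [hval2, hval3 f' hf1 hf2]
        exact fun h => (key2 f' hf' hf1 hf2 ⟨t, hte, htf⟩) h.symm
      · subst hf2
        rw [hval2, hval3 e he1 he2]
        exact key2 e he he1 he2 ⟨t, htf, hte⟩
      · rw [hval3 e he1 he2, hval3 f' hf1 hf2]
        exact hc.2 e (mem_H_edgeSet.mpr ⟨he, he1⟩) f' (mem_H_edgeSet.mpr ⟨hf', hf1⟩) hne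
          ⟨t, hte, htf⟩

end ext2

section recolor
variable {H : SimpleGraph V} {k : ℕ} {p q : V} {c : Sym2 V → ℕ}

/-- Recoloring one edge with a color missing at both of its ends preserves properness. -/
lemma recolor_proper (hc : IsProperEdgeColoring H k c) (hpq : H.Adj p q) {α : ℕ}
    (hαp : α ∈ missing H k c p) (hαq : α ∈ missing H k c q) :
    IsProperEdgeColoring H k (fun e => if e = s(p,q) then α else c e) := by
  have key : ∀ f' ∈ H.edgeSet, f' ≠ s(p,q) → (∃ t, t ∈ s(p,q) ∧ t ∈ f') → c f' ≠ α := by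
    rintro f' hf' hne ⟨t, ht1, ht2⟩
    obtain ⟨r, hr, rfl⟩ := edge_eq_of_mem hf' ht2
    rcases Sym2.mem_iff.mp ht1 with rfl | rfl
    · exact fun h => hαp.2 ⟨r, hr, h⟩
    · exact fun h => hαq.2 ⟨r, hr, h⟩
  constructor
  · intro e he
    by_cases h1 : e = s(p,q)
    · simp only [if_pos h1]; exact hαp.1
    · simp only [if_neg h1]; exact hc.1 e he
  · rintro e he f' hf' hne ⟨t, hte, htf⟩
    by_cases he1 : e = s(p,q) <;> by_cases hf1 : f' = s(p,q)
    · exact absurd (he1.trans hf1.symm) hne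
    · subst he1
      simp only [if_pos rfl, if_neg hf1]
      exact fun h => (key f' hf' hf1 ⟨t, hte, htf⟩) h.symm
    · subst hf1
      simp only [if_pos rfl, if_neg he1]
      exact key e he he1 ⟨t, htf, hte⟩
    · simp only [if_neg he1, if_neg hf1]
      exact hc.2 e he f' hf' hne ⟨t, hte, htf⟩

/-- After recoloring edge `pq`, its old color becomes missing at `p`. -/
lemma recolor_missing_old (hc : IsProperEdgeColoring H k c) (hpq : H.Adj p q) {α : ℕ}
    (hαp : α ∈ missing H k c p) :
    c s(p,q) ∈ missing H k (fun e => if e = s(p,q) then α else c e) p := by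
  refine ⟨hc.1 _ hpq, ?_⟩
  rintro ⟨r, hr, hval⟩
  have hval' : (if s(p,r) = s(p,q) then α else c s(p,r)) = c s(p,q) := hval
  by_cases h1 : s(p,r) = s(p,q)
  · rw [if_pos h1] at hval'
    exact (missing_ne_of_adj hpq hαp) hval'
  · rw [if_neg h1] at hval'
    exact h1 (by rw [eq_of_same_color hc hr hpq hval'])

/-- Missing sets at vertices away from the recolored edge are unchanged. -/
lemma recolor_missing_other {t : V} (htp : t ≠ p) (htq : t ≠ q) {α : ℕ} :
    missing H k (fun e => if e = s(p,q) then α else c e) t = missing H k c t :=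
  missing_congr (fun r _ => by rw [if_neg (edge_ne_edge htp htq)])

end recolor

section swap
variable {H : SimpleGraph V} {k : ℕ} {c : Sym2 V → ℕ} {a b : ℕ} {v0 : V}

/-- The subgraph of edges colored `a` or `b`. -/
def abG (H : SimpleGraph V) (c : Sym2 V → ℕ) (a b : ℕ) : SimpleGraph V where
  Adj p q := H.Adj p q ∧ (c s(p,q) = a ∨ c s(p,q) = b)
  symm := by
    constructor
    intro p q ⟨h1, h2⟩
    refine ⟨h1.symm, ?_⟩
    rwa [Sym2.eq_swap]
  loopless := ⟨fun p h => H.loopless.irrefl p h.1⟩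

/-- Condition for an edge to be swapped. -/
def swpCond (H : SimpleGraph V) (c : Sym2 V → ℕ) (a b : ℕ) (v0 : V) (e : Sym2 V) : Prop :=
  e ∈ H.edgeSet ∧ (c e = a ∨ c e = b) ∧ ∃ p ∈ e, (abG H c a b).Reachable v0 p

/-- The Kempe-swapped coloring. -/
noncomputable def swp (H : SimpleGraph V) (c : Sym2 V → ℕ) (a b : ℕ) (v0 : V) :
    Sym2 V → ℕ := fun e =>
  if swpCond H c a b v0 e then (if c e = a then b else a) else c e

lemma swp_def (e : Sym2 V) : swp H c a b v0 e =
    if swpCond H c a b v0 e then (if c e = a then b else a) else c e := rfl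

lemma abG_reach_other {p q : V} (h1 : H.Adj p q) (h2 : c s(p,q) = a ∨ c s(p,q) = b)
    (h3 : (abG H c a b).Reachable v0 p) : (abG H c a b).Reachable v0 q :=
  h3.trans (SimpleGraph.Adj.reachable ⟨h1, h2⟩)

lemma reach_of_mem_swapped {e : Sym2 V} {t : V} (he : e ∈ H.edgeSet)
    (hab : c e = a ∨ c e = b) (hp : ∃ p ∈ e, (abG H c a b).Reachable v0 p) (ht : t ∈ e) :
    (abG H c a b).Reachable v0 t := by
  obtain ⟨p, hpe, hr⟩ := hp
  obtain ⟨q, hq, rfl⟩ := edge_eq_of_mem he hpe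
  have hrq : (abG H c a b).Reachable v0 q := abG_reach_other hq hab hr
  rcases Sym2.mem_iff.mp ht with rfl | rfl
  exacts [hr, hrq]

lemma swp_eq_of_ne {e : Sym2 V} (h1 : c e ≠ a) (h2 : c e ≠ b) : swp H c a b v0 e = c e := by
  rw [swp_def, if_neg]
  rintro ⟨_, h3 | h3, _⟩
  exacts [h1 h3, h2 h3]

lemma swp_at_unreachable {t q : V} (ht : ¬ (abG H c a b).Reachable v0 t) (hq : H.Adj t q) :
    swp H c a b v0 s(t,q) = c s(t,q) := by
  rw [swp_def, if_neg]
  rintro ⟨he, hab, hp⟩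
  exact ht (reach_of_mem_swapped he hab hp (Sym2.mem_mk_left _ _))

lemma swp_swapped_a {e : Sym2 V} (he : e ∈ H.edgeSet) (hcol : c e = a)
    (hp : ∃ p ∈ e, (abG H c a b).Reachable v0 p) : swp H c a b v0 e = b := by
  rw [swp_def, if_pos ⟨he, Or.inl hcol, hp⟩, if_pos hcol]

lemma swp_swapped_b (hab : a ≠ b) {e : Sym2 V} (he : e ∈ H.edgeSet) (hcol : c e = b)
    (hp : ∃ p ∈ e, (abG H c a b).Reachable v0 p) : swp H c a b v0 e = a := by
  rw [swp_def, if_pos ⟨he, Or.inr hcol, hp⟩, if_neg]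
  rw [hcol]
  exact fun h => hab h.symm

lemma swp_cases (e : Sym2 V) : swp H c a b v0 e = c e ∨
    (e ∈ H.edgeSet ∧ ((c e = a ∧ swp H c a b v0 e = b) ∨ (c e = b ∧ swp H c a b v0 e = a))) := by
  by_cases h : swpCond H c a b v0 e
  · rcases h.2.1 with h1 | h1
    · exact Or.inr ⟨h.1, Or.inl ⟨h1, by rw [swp_def, if_pos h, if_pos h1]⟩⟩
    · by_cases h2 : c e = a
      · exact Or.inr ⟨h.1, Or.inl ⟨h2, by rw [swp_def, if_pos h, if_pos h2]⟩⟩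
      · exact Or.inr ⟨h.1, Or.inr ⟨h1, by rw [swp_def, if_pos h, if_neg h2]⟩⟩
  · exact Or.inl (by rw [swp_def, if_neg h])

lemma swp_proper (hc : IsProperEdgeColoring H k c) (hab : a ≠ b)
    (haI : a ∈ Finset.Icc 1 k) (hbI : b ∈ Finset.Icc 1 k) :
    IsProperEdgeColoring H k (swp H c a b v0) := by
  constructor
  · intro e he
    rcases swp_cases e with h | ⟨_, ⟨_, h⟩ | ⟨_, h⟩⟩
    · rw [h]; exact hc.1 e he
    · rw [h]; exact hbI
    · rw [h]; exact haI
  · rintro e he f hf hne ⟨t, hte, htf⟩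
    by_cases hCe : swpCond H c a b v0 e <;> by_cases hCf : swpCond H c a b v0 f
    · -- both swapped
      have hcol : c e ≠ c f := hc.2 e he f hf hne ⟨t, hte, htf⟩
      rw [swp_def, if_pos hCe, swp_def, if_pos hCf]
      rcases hCe.2.1 with h1 | h1 <;> rcases hCf.2.1 with h2 | h2
      · exact absurd (h1.trans h2.symm) hcol
      · rw [if_pos h1, if_neg (by rw [h2]; exact fun h => hab h.symm)]
        exact fun h => hab h.symm
      · rw [if_neg (by rw [h1]; exact fun h => hab h.symm), if_pos h2]
        exact hab
      · exact absurd (h1.trans h2.symm) hcol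
    · -- e swapped, f not
      have hcf : ¬ (c f = a ∨ c f = b) := by
        intro hor
        exact hCf ⟨hf, hor, ⟨t, htf, reach_of_mem_swapped hCe.1 hCe.2.1 hCe.2.2 hte⟩⟩
      push_neg at hcf
      rw [swp_def, if_pos hCe, swp_def, if_neg hCf]
      by_cases h1 : c e = a
      · rw [if_pos h1]; exact fun h => hcf.2 h.symm
      · rw [if_neg h1]; exact fun h => hcf.1 h.symm
    · -- f swapped, e not
      have hce : ¬ (c e = a ∨ c e = b) := by
        intro hor
        exact hCe ⟨he, hor, ⟨t, hte, reach_of_mem_swapped hCf.1 hCf.2.1 hCf.2.2 htf⟩⟩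
      push_neg at hce
      rw [swp_def e, if_neg hCe, swp_def f, if_pos hCf]
      by_cases h1 : c f = a
      · rw [if_pos h1]; exact hce.2
      · rw [if_neg h1]; exact hce.1
    · rw [swp_def, if_neg hCe, swp_def, if_neg hCf]
      exact hc.2 e he f hf hne ⟨t, hte, htf⟩

/-- Missing colors other than `a,b` are unaffected by the swap (at every vertex). -/
lemma swp_missing_other {x : ℕ} (hxa : x ≠ a) (hxb : x ≠ b) (t : V) :
    x ∈ missing H k (swp H c a b v0) t ↔ x ∈ missing H k c t := by
  simp only [mem_missing]
  constructor
  · rintro ⟨hI, hn⟩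
    refine ⟨hI, ?_⟩
    rintro ⟨q, hq, hval⟩
    exact hn ⟨q, hq, by rw [swp_eq_of_ne (hval ▸ hxa) (hval ▸ hxb)]; exact hval⟩
  · rintro ⟨hI, hn⟩
    refine ⟨hI, ?_⟩
    rintro ⟨q, hq, hval⟩
    rcases swp_cases (H := H) (c := c) (a := a) (b := b) (v0 := v0) s(t,q) with
      h | ⟨_, ⟨_, h⟩ | ⟨_, h⟩⟩
    · exact hn ⟨q, hq, by rw [← h]; exact hval⟩
    · rw [h] at hval; exact hxb hval.symm
    · rw [h] at hval; exact hxa hval.symm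

/-- Missing sets at vertices not in the swapped component are unchanged. -/
lemma swp_missing_unreach {t : V} (ht : ¬ (abG H c a b).Reachable v0 t) :
    missing H k (swp H c a b v0) t = missing H k c t :=
  missing_congr (fun q hq => swp_at_unreachable ht hq)

/-- At a vertex in the swapped component, `a` is missing after iff `b` was missing before. -/
lemma swp_missing_reach (hc : IsProperEdgeColoring H k c) (hab : a ≠ b)
    (haI : a ∈ Finset.Icc 1 k) (hbI : b ∈ Finset.Icc 1 k) {t : V}
    (ht : (abG H c a b).Reachable v0 t) :
    a ∈ missing H k (swp H c a b v0) t ↔ b ∈ missing H k c t := by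
  constructor
  · intro h
    refine ⟨hbI, ?_⟩
    rintro ⟨q, hq, hval⟩
    have hs : swp H c a b v0 s(t,q) = a :=
      swp_swapped_b hab hq hval ⟨t, Sym2.mem_mk_left _ _, ht⟩
    exact h.2 ⟨q, hq, hs⟩
  · intro h
    refine ⟨haI, ?_⟩
    rintro ⟨q, hq, hval⟩
    rcases swp_cases (H := H) (c := c) (a := a) (b := b) (v0 := v0) s(t,q) with
      h1 | ⟨_, ⟨h1, h2⟩ | ⟨h1, h2⟩⟩
    · -- swp = c, so c s(t,q) = a; but then the edge satisfies the swap condition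
      have hca : c s(t,q) = a := by rw [← h1]; exact hval
      have : swp H c a b v0 s(t,q) = b :=
        swp_swapped_a hq hca ⟨t, Sym2.mem_mk_left _ _, ht⟩
      rw [hval] at this
      exact hab this
    · rw [h2] at hval; exact hab hval.symm
    · exact h.2 ⟨q, hq, h1⟩

/-- At a vertex in the swapped component, `b` is missing after iff `a` was missing before. -/
lemma swp_missing_reach' (hc : IsProperEdgeColoring H k c) (hab : a ≠ b)
    (haI : a ∈ Finset.Icc 1 k) (hbI : b ∈ Finset.Icc 1 k) {t : V}
    (ht : (abG H c a b).Reachable v0 t) :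
    b ∈ missing H k (swp H c a b v0) t ↔ a ∈ missing H k c t := by
  constructor
  · intro h
    refine ⟨haI, ?_⟩
    rintro ⟨q, hq, hval⟩
    have hs : swp H c a b v0 s(t,q) = b :=
      swp_swapped_a hq hval ⟨t, Sym2.mem_mk_left _ _, ht⟩
    exact h.2 ⟨q, hq, hs⟩
  · intro h
    refine ⟨hbI, ?_⟩
    rintro ⟨q, hq, hval⟩
    rcases swp_cases (H := H) (c := c) (a := a) (b := b) (v0 := v0) s(t,q) with
      h1 | ⟨_, ⟨h1, h2⟩ | ⟨h1, h2⟩⟩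
    · have hcb : c s(t,q) = b := by rw [← h1]; exact hval
      have : swp H c a b v0 s(t,q) = a :=
        swp_swapped_b hab hq hcb ⟨t, Sym2.mem_mk_left _ _, ht⟩
      rw [hval] at this
      exact hab this.symm
    · exact h.2 ⟨q, hq, h1⟩
    · rw [h2] at hval; exact hab hval

end swap

section structure_lemmas
variable {R : SimpleGraph V}

/-- In a graph with max degree ≤ 2, two internally-extendable paths from a common start... :
auxiliary induction for the "three ends" lemma. -/
lemma three_ends_aux
    (hdeg2 : ∀ t p q r, R.Adj t p → R.Adj t q → R.Adj t r → (p = q ∨ p = r ∨ q = r)) :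
    ∀ (n : ℕ) {s y z : V} (p : R.Walk s y) (q : R.Walk s z), p.length ≤ n →
    p.IsPath → q.IsPath → y ≠ z →
    (∀ p' q', R.Adj y p' → R.Adj y q' → p' = q') →
    (∀ p' q', R.Adj z p' → R.Adj z q' → p' = q') →
    (∃ x0, R.Adj s x0 ∧ x0 ∉ p.support ∧ x0 ∉ q.support) → False := by
  intro n
  induction n with
  | zero =>
    intro s y z p q hlen hp hq hyz hy hz hx0
    -- p has length 0, so s = y
    obtain ⟨x0, hadj, hx0p, hx0q⟩ := hx0
    cases p with
    | nil =>
      cases q with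
      | nil => exact hyz rfl
      | cons h q' =>
        rename_i d
        have hd : d ∈ (SimpleGraph.Walk.cons h q').support := by
          rw [SimpleGraph.Walk.support_cons]
          exact List.mem_cons_of_mem _ (SimpleGraph.Walk.start_mem_support q')
        have : d = x0 := hy d x0 h hadj
        exact hx0q (this ▸ hd)
    | cons h p' => simp [SimpleGraph.Walk.length_cons] at hlen
  | succ n ih =>
    intro s y z p q hlen hp hq hyz hy hz hx0
    obtain ⟨x0, hadj, hx0p, hx0q⟩ := hx0
    cases p with
    | nil =>
      cases q with
      | nil => exact hyz rfl
      | cons h q' =>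
        rename_i d
        have hd : d ∈ (SimpleGraph.Walk.cons h q').support := by
          rw [SimpleGraph.Walk.support_cons]
          exact List.mem_cons_of_mem _ (SimpleGraph.Walk.start_mem_support q')
        have : d = x0 := hy d x0 h hadj
        exact hx0q (this ▸ hd)
    | cons hsc p' =>
      rename_i c1
      cases q with
      | nil =>
        -- s = z ; the first edge of p plus x0 give two distinct neighbors of z
        have hc1 : c1 ∈ (SimpleGraph.Walk.cons hsc p').support := by
          rw [SimpleGraph.Walk.support_cons]
          exact List.mem_cons_of_mem _ (SimpleGraph.Walk.start_mem_support p')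
        have : c1 = x0 := hz c1 x0 hsc hadj
        exact hx0p (this ▸ hc1)
      | cons hsd q' =>
        rename_i d
        have hc1p : c1 ∈ (SimpleGraph.Walk.cons hsc p').support := by
          rw [SimpleGraph.Walk.support_cons]
          exact List.mem_cons_of_mem _ (SimpleGraph.Walk.start_mem_support p')
        have hdq : d ∈ (SimpleGraph.Walk.cons hsd q').support := by
          rw [SimpleGraph.Walk.support_cons]
          exact List.mem_cons_of_mem _ (SimpleGraph.Walk.start_mem_support q')
        have hcd : c1 = d := by
          rcases hdeg2 s c1 d x0 hsc hsd hadj with h | h | h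
          · exact h
          · exact absurd (h ▸ hc1p) hx0p
          · exact absurd (h ▸ hdq) hx0q
        subst hcd
        rw [SimpleGraph.Walk.cons_isPath_iff] at hp hq
        refine ih p' q' ?_ hp.1 hq.1 hyz hy hz ⟨s, hsc.symm, hp.2, hq.2⟩
        simpa [SimpleGraph.Walk.length_cons] using hlen

/-- Three distinct vertices of degree ≤ 1 cannot lie in a common connected component of a
graph of max degree ≤ 2. -/
lemma three_ends
    (hdeg2 : ∀ t p q r, R.Adj t p → R.Adj t q → R.Adj t r → (p = q ∨ p = r ∨ q = r))
    {x y z : V} (hxy : x ≠ y) (hxz : x ≠ z) (hyz : y ≠ z)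
    (hx : ∀ p' q', R.Adj x p' → R.Adj x q' → p' = q')
    (hy : ∀ p' q', R.Adj y p' → R.Adj y q' → p' = q')
    (hz : ∀ p' q', R.Adj z p' → R.Adj z q' → p' = q')
    (h1 : R.Reachable x y) (h2 : R.Reachable x z) : False := by
  classical
  obtain ⟨w1⟩ := h1
  obtain ⟨w2⟩ := h2
  obtain ⟨p, hp⟩ : ∃ p : R.Walk x y, p.IsPath := ⟨w1.toPath.1, w1.toPath.2⟩
  obtain ⟨q, hq⟩ : ∃ q : R.Walk x z, q.IsPath := ⟨w2.toPath.1, w2.toPath.2⟩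
  cases p with
  | nil => exact hxy rfl
  | cons hxc p' =>
    rename_i c1
    cases q with
    | nil => exact hxz rfl
    | cons hxd q' =>
      rename_i d
      have hcd : c1 = d := hx c1 d hxc hxd
      subst hcd
      rw [SimpleGraph.Walk.cons_isPath_iff] at hp hq
      exact three_ends_aux hdeg2 p'.length p' q' le_rfl hp.1 hq.1 hyz hy hz
        ⟨x, hxc.symm, hp.2, hq.2⟩

end structure_lemmas

section M3CK
variable {G : SimpleGraph V} {H : SimpleGraph V} {k : ℕ} {c : Sym2 V → ℕ} {a b : ℕ}

/-- Vertices missing `a` or `b` have degree ≤ 1 in the `ab`-subgraph. -/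
lemma deg1_of_missing (hc : IsProperEdgeColoring H k c) {t : V}
    (h : a ∈ missing H k c t ∨ b ∈ missing H k c t) :
    ∀ p' q', (abG H c a b).Adj t p' → (abG H c a b).Adj t q' → p' = q' := by
  intro p' q' hp hq
  have hcp := hp.2
  have hcq := hq.2
  rcases h with h | h
  · have h1 : c s(t,p') = b := by
      rcases hcp with h2 | h2
      · exact absurd h2.symm (missing_ne_of_adj hp.1 h)
      · exact h2
    have h2 : c s(t,q') = b := by
      rcases hcq with h2 | h2
      · exact absurd h2.symm (missing_ne_of_adj hq.1 h)
      · exact h2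
    exact eq_of_same_color hc hp.1 hq.1 (h1.trans h2.symm)
  · have h1 : c s(t,p') = a := by
      rcases hcp with h2 | h2
      · exact h2
      · exact absurd h2.symm (missing_ne_of_adj hp.1 h)
    have h2 : c s(t,q') = a := by
      rcases hcq with h2 | h2
      · exact h2
      · exact absurd h2.symm (missing_ne_of_adj hq.1 h)
    exact eq_of_same_color hc hp.1 hq.1 (h1.trans h2.symm)

/-- The `ab`-subgraph has max degree ≤ 2. -/
lemma abG_deg2 (hc : IsProperEdgeColoring H k c) :
    ∀ t p q r, (abG H c a b).Adj t p → (abG H c a b).Adj t q → (abG H c a b).Adj t r →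
      (p = q ∨ p = r ∨ q = r) := by
  intro t p q r hp hq hr
  by_contra hcon
  push_neg at hcon
  obtain ⟨hpq, hpr, hqr⟩ := hcon
  have h1 : c s(t,p) ≠ c s(t,q) := fun h => hpq (eq_of_same_color hc hp.1 hq.1 h)
  have h2 : c s(t,p) ≠ c s(t,r) := fun h => hpr (eq_of_same_color hc hp.1 hr.1 h)
  have h3 : c s(t,q) ≠ c s(t,r) := fun h => hqr (eq_of_same_color hc hq.1 hr.1 h)
  rcases hp.2 with h4 | h4 <;> rcases hq.2 with h5 | h5 <;> rcases hr.2 with h6 | h6 <;>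
    first
      | exact h1 (h4.trans h5.symm)
      | exact h2 (h4.trans h6.symm)
      | exact h3 (h5.trans h6.symm)

/-- M3: three distinct vertices each missing `a` or `b`, pairwise in the same
`ab`-component: impossible. -/
lemma M3 (hc : IsProperEdgeColoring H k c) {x y z : V}
    (hxy : x ≠ y) (hxz : x ≠ z) (hyz : y ≠ z)
    (hx : a ∈ missing H k c x ∨ b ∈ missing H k c x)
    (hy : a ∈ missing H k c y ∨ b ∈ missing H k c y)
    (hz : a ∈ missing H k c z ∨ b ∈ missing H k c z)
    (h1 : (abG H c a b).Reachable x y) (h2 : (abG H c a b).Reachable x z) : False :=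
  three_ends (abG_deg2 hc) hxy hxz hyz (deg1_of_missing hc hx) (deg1_of_missing hc hy)
    (deg1_of_missing hc hz) h1 h2

/-- CK: colors missing at the two ends of the uncolored edge lie on a common chain. -/
lemma CK {u v : V} (hNC : ¬ EdgeColorable G k) (huv : G.Adj u v)
    (hc : IsProperEdgeColoring (G.deleteEdges {s(u,v)}) k c) (hab : a ≠ b)
    (hau : a ∈ missing (G.deleteEdges {s(u,v)}) k c u)
    (hbv : b ∈ missing (G.deleteEdges {s(u,v)}) k c v) :
    (abG (G.deleteEdges {s(u,v)}) c a b).Reachable u v := by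
  set H := G.deleteEdges {s(u,v)} with hH
  by_contra hr
  have hprop := swp_proper (v0 := u) hc hab hau.1 hbv.1
  have h1 : b ∈ missing H k (swp H c a b u) u :=
    (swp_missing_reach' hc hab hau.1 hbv.1 (SimpleGraph.Reachable.refl u)).mpr hau
  have h2 : b ∈ missing H k (swp H c a b u) v := by
    rw [swp_missing_unreach hr]
    exact hbv
  exact ext1 hNC huv hprop h1 h2

/-- A vertex missing both chain colors is isolated in the `ab`-subgraph. -/
lemma isolated_reach (hc : IsProperEdgeColoring H k c) {u t : V}
    (hau : a ∈ missing H k c u) (hbu : b ∈ missing H k c u)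
    (hr : (abG H c a b).Reachable u t) : u = t := by
  have hiso : ∀ q, ¬ (abG H c a b).Adj u q := by
    rintro q ⟨h1, h2 | h2⟩
    · exact (missing_ne_of_adj h1 hau) h2.symm
    · exact (missing_ne_of_adj h1 hbu) h2.symm
  obtain ⟨w⟩ := hr
  cases w with
  | nil => rfl
  | cons h _ => exact absurd h (hiso _)

end M3CK

section existsmissing
variable {H : SimpleGraph V} {k : ℕ} {c : Sym2 V → ℕ}

lemma exists_missing (hc : IsProperEdgeColoring H k c) (t : V) (S : Finset V)
    (hS : ∀ q, H.Adj t q → q ∈ S) (hcard : S.card < k) :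
    ∃ a, a ∈ missing H k c t := by
  classical
  set T : Finset ℕ := S.image (fun q => c s(t,q)) with hT
  have hTcard : T.card < (Finset.Icc 1 k).card := by
    rw [Nat.card_Icc]
    exact lt_of_le_of_lt (Finset.card_image_le) (by omega)
  obtain ⟨a, haI, haT⟩ : ∃ a ∈ Finset.Icc 1 k, a ∉ T := by
    by_contra hcon
    push_neg at hcon
    exact absurd (Finset.card_le_card hcon) (not_le.mpr hTcard)
  refine ⟨a, haI, ?_⟩
  rintro ⟨q, hq, hval⟩
  exact haT (Finset.mem_image.mpr ⟨q, hS q hq, hval⟩)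

lemma exists_missing_ne (hc : IsProperEdgeColoring H k c) (t : V) (S : Finset V)
    (hS : ∀ q, H.Adj t q → q ∈ S) (hcard : S.card + 1 < k) (σ : ℕ) :
    ∃ a ∈ missing H k c t, a ≠ σ := by
  classical
  set T : Finset ℕ := insert σ (S.image (fun q => c s(t,q))) with hT
  have hTcard : T.card < (Finset.Icc 1 k).card := by
    rw [Nat.card_Icc]
    calc T.card ≤ (S.image (fun q => c s(t,q))).card + 1 := Finset.card_insert_le _ _
    _ ≤ S.card + 1 := by have := Finset.card_image_le (s := S) (f := fun q => c s(t,q)); omega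
    _ < k + 1 - 1 := by omega
  obtain ⟨a, haI, haT⟩ : ∃ a ∈ Finset.Icc 1 k, a ∉ T := by
    by_contra hcon
    push_neg at hcon
    exact absurd (Finset.card_le_card hcon) (not_le.mpr hTcard)
  refine ⟨a, ⟨haI, ?_⟩, fun h => haT (hT ▸ Finset.mem_insert_self σ _ |> (h ▸ ·))⟩
  rintro ⟨q, hq, hval⟩
  exact haT (Finset.mem_insert_of_mem (Finset.mem_image.mpr ⟨q, hS q hq, hval⟩))

end existsmissing

section anchored
variable [Fintype V] {G : SimpleGraph V} [DecidableRel G.Adj] {k : ℕ} {u v w : V}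
  {c : Sym2 V → ℕ}

lemma exists_missing_v (huv : G.Adj u v)
    (hc : IsProperEdgeColoring (G.deleteEdges {s(u,v)}) k c) (hdeg : G.degree v ≤ k) :
    ∃ δ, δ ∈ missing (G.deleteEdges {s(u,v)}) k c v := by
  classical
  have hu : u ∈ G.neighborFinset v := by
    rw [SimpleGraph.mem_neighborFinset]; exact huv.symm
  apply exists_missing hc v ((G.neighborFinset v).erase u)
  · intro q hq
    rw [H_adj] at hq
    refine Finset.mem_erase.mpr ⟨?_, by rw [SimpleGraph.mem_neighborFinset]; exact hq.1⟩
    rintro rfl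
    exact hq.2 Sym2.eq_swap
  · have h1 : ((G.neighborFinset v).erase u).card = G.degree v - 1 := by
      rw [Finset.card_erase_of_mem hu]; rfl
    have h2 : 1 ≤ G.degree v := Finset.card_pos.mpr ⟨u, hu⟩
    omega

lemma exists_missing_v_ne (huv : G.Adj u v)
    (hc : IsProperEdgeColoring (G.deleteEdges {s(u,v)}) k c) (hdeg : G.degree v < k)
    (σ : ℕ) : ∃ δ ∈ missing (G.deleteEdges {s(u,v)}) k c v, δ ≠ σ := by
  classical
  have hu : u ∈ G.neighborFinset v := by
    rw [SimpleGraph.mem_neighborFinset]; exact huv.symm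
  apply exists_missing_ne hc v ((G.neighborFinset v).erase u)
  · intro q hq
    rw [H_adj] at hq
    refine Finset.mem_erase.mpr ⟨?_, by rw [SimpleGraph.mem_neighborFinset]; exact hq.1⟩
    rintro rfl
    exact hq.2 Sym2.eq_swap
  · have h1 : ((G.neighborFinset v).erase u).card = G.degree v - 1 := by
      rw [Finset.card_erase_of_mem hu]; rfl
    have h2 : 1 ≤ G.degree v := Finset.card_pos.mpr ⟨u, hu⟩
    omega

lemma exists_missing_mid {x : V} (huv : G.Adj u v)
    (hc : IsProperEdgeColoring (G.deleteEdges {s(u,v)}) k c) (hdeg : G.degree x < k) :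
    ∃ τ, τ ∈ missing (G.deleteEdges {s(u,v)}) k c x := by
  classical
  apply exists_missing hc x (G.neighborFinset x)
  · intro q hq
    rw [H_adj] at hq
    rw [SimpleGraph.mem_neighborFinset]; exact hq.1
  · exact hdeg

/-- P02: the colors missing at `u` and at `w` are disjoint (anchored Kierstead triple). -/
lemma P02 (hNC : ¬ EdgeColorable G k) (huv : G.Adj u v) (hvw : G.Adj v w) (huw : u ≠ w)
    (hdegv : G.degree v ≤ k)
    (hc : IsProperEdgeColoring (G.deleteEdges {s(u,v)}) k c)
    (hβ : c s(v,w) ∈ missing (G.deleteEdges {s(u,v)}) k c u) {α : ℕ}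
    (hαu : α ∈ missing (G.deleteEdges {s(u,v)}) k c u)
    (hαw : α ∈ missing (G.deleteEdges {s(u,v)}) k c w) : False := by
  set H := G.deleteEdges {s(u,v)} with hH
  set β := c s(v,w) with hβdef
  have h12 : s(u,v) ≠ s(v,w) := e1_ne_e2 huv huw
  have hvwH : H.Adj v w := H_adj.mpr ⟨hvw, fun h => h12 h.symm⟩
  have hβI := hβ.1
  have hαI := hαu.1
  have hαβ : α ≠ β := by
    have h0 := missing_ne_of_adj hvwH.symm hαw
    rw [hβdef, c_comm c v w]
    exact h0
  obtain ⟨δ, hδ⟩ := exists_missing_v huv hc hdegv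
  have hδI := hδ.1
  have hδα : δ ≠ α := fun h => ext1 hNC huv hc hαu (h ▸ hδ)
  have hδβ : δ ≠ β := fun h => ext1 hNC huv hc hβ (h ▸ hδ)
  have hu_not : ¬ (abG H c α β).Reachable w u :=
    fun h => huw (isolated_reach hc hαu hβ h.symm)
  have hv_reach : (abG H c α β).Reachable w v :=
    SimpleGraph.Adj.reachable ⟨hvwH.symm, Or.inr (by rw [Sym2.eq_swap])⟩
  set ψ1 := swp H c α β w with hψ1def
  have hψ1 : IsProperEdgeColoring H k ψ1 := swp_proper hc hαβ hαI hβI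
  have hvw1 : ψ1 s(v,w) = α := by
    apply swp_swapped_b hαβ hvwH rfl
    exact ⟨w, Sym2.mem_mk_right _ _, SimpleGraph.Reachable.refl w⟩
  have hβw1 : β ∈ missing H k ψ1 w :=
    (swp_missing_reach' hc hαβ hαI hβI (SimpleGraph.Reachable.refl w)).mpr hαw
  have hαu1 : α ∈ missing H k ψ1 u := by
    rw [hψ1def, swp_missing_unreach hu_not]; exact hαu
  have hβu1 : β ∈ missing H k ψ1 u := by
    rw [hψ1def, swp_missing_unreach hu_not]; exact hβ
  have hδv1 : δ ∈ missing H k ψ1 v := (swp_missing_other hδα hδβ v).mpr hδ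
  have hwu : w ≠ u := huw.symm
  have hwv : w ≠ v := (G.ne_of_adj hvw).symm
  have huvne : u ≠ v := G.ne_of_adj huv
  by_cases hRu : (abG H ψ1 δ β).Reachable w u <;>
    by_cases hRv : (abG H ψ1 δ β).Reachable w v
  · exact M3 hψ1 hwu hwv huvne (Or.inr hβw1) (Or.inr hβu1) (Or.inl hδv1) hRu hRv
  · -- u in chain, v not: swap gives δ missing at u and v
    have h1 : δ ∈ missing H k (swp H ψ1 δ β w) u :=
      (swp_missing_reach hψ1 hδβ hδI hβI hRu).mpr hβu1
    have h2 : δ ∈ missing H k (swp H ψ1 δ β w) v := by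
      rw [swp_missing_unreach hRv]; exact hδv1
    exact ext1 hNC huv (swp_proper hψ1 hδβ hδI hβI) h1 h2
  · -- v in chain, u not: swap gives β missing at u and v
    have h1 : β ∈ missing H k (swp H ψ1 δ β w) v :=
      (swp_missing_reach' hψ1 hδβ hδI hβI hRv).mpr hδv1
    have h2 : β ∈ missing H k (swp H ψ1 δ β w) u := by
      rw [swp_missing_unreach hRu]; exact hβu1
    exact ext1 hNC huv (swp_proper hψ1 hδβ hδI hβI) h2 h1
  · -- neither: swap gives δ missing at v and w, anchor α at u: ext2
    have h1 : δ ∈ missing H k (swp H ψ1 δ β w) w :=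
      (swp_missing_reach hψ1 hδβ hδI hβI (SimpleGraph.Reachable.refl w)).mpr hβw1
    have h2 : δ ∈ missing H k (swp H ψ1 δ β w) v := by
      rw [swp_missing_unreach hRv]; exact hδv1
    have hanch : (swp H ψ1 δ β w) s(v,w) ∈ missing H k (swp H ψ1 δ β w) u := by
      have hval : (swp H ψ1 δ β w) s(v,w) = α := by
        have hne1 : ψ1 s(v,w) ≠ δ := by rw [hvw1]; exact hδα.symm
        have hne2 : ψ1 s(v,w) ≠ β := by rw [hvw1]; exact hαβ
        rw [swp_eq_of_ne hne1 hne2, hvw1]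
      rw [hval, swp_missing_unreach hRu]
      exact hαu1
    exact ext2 hNC huv hvw huw (swp_proper hψ1 hδβ hδI hβI) hanch h2 h1

end anchored

section quadruple
variable [Fintype V] {G : SimpleGraph V} [DecidableRel G.Adj] {k : ℕ} {u v w x : V}
  {c : Sym2 V → ℕ}

omit [Fintype V] [DecidableRel G.Adj] in
lemma missing_ne_rev {H : SimpleGraph V} {c : Sym2 V → ℕ} {p q : V} {τ : ℕ}
    (h : H.Adj p q) (hm : τ ∈ missing H k c q) : τ ≠ c s(p,q) := by
  have h0 := missing_ne_of_adj h.symm hm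
  rw [c_comm c p q]
  exact h0

/-- Q1: pair (w,x) of the Kierstead quadruple. -/
lemma Q1 (hNC : ¬ EdgeColorable G k) (huv : G.Adj u v) (hvw : G.Adj v w) (hwx : G.Adj w x)
    (huw : u ≠ w) (hxu : x ≠ u) (hxv : x ≠ v) (hdegv : G.degree v ≤ k)
    (hc : IsProperEdgeColoring (G.deleteEdges {s(u,v)}) k c)
    (hβ : c s(v,w) ∈ missing (G.deleteEdges {s(u,v)}) k c u)
    (hγ : c s(w,x) ∈ missing (G.deleteEdges {s(u,v)}) k c u ∪
      missing (G.deleteEdges {s(u,v)}) k c v) {α : ℕ}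
    (hαw : α ∈ missing (G.deleteEdges {s(u,v)}) k c w)
    (hαx : α ∈ missing (G.deleteEdges {s(u,v)}) k c x) : False := by
  set H := G.deleteEdges {s(u,v)} with hH
  have h13 : s(w,x) ≠ s(u,v) := edge_ne_edge huw.symm (G.ne_of_adj hvw).symm
  have h23 : s(v,w) ≠ s(w,x) := by
    intro h
    rcases Sym2.eq_iff.mp h with ⟨h1, _⟩ | ⟨h1, _⟩
    · exact G.ne_of_adj hvw h1
    · exact hxv h1.symm
  have hwxH : H.Adj w x := H_adj.mpr ⟨hwx, h13⟩
  have hc' : IsProperEdgeColoring H k (fun e => if e = s(w,x) then α else c e) :=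
    recolor_proper hc hwxH hαw hαx
  have hγw : c s(w,x) ∈ missing H k (fun e => if e = s(w,x) then α else c e) w :=
    recolor_missing_old hc hwxH hαw
  have hmu : missing H k (fun e => if e = s(w,x) then α else c e) u = missing H k c u :=
    recolor_missing_other huw hxu.symm
  have hmv : missing H k (fun e => if e = s(w,x) then α else c e) v = missing H k c v :=
    recolor_missing_other (G.ne_of_adj hvw) hxv.symm
  have hanch : (fun e => if e = s(w,x) then α else c e) s(v,w) ∈
      missing H k (fun e => if e = s(w,x) then α else c e) u := by
    have hval : (fun e => if e = s(w,x) then α else c e) s(v,w) = c s(v,w) := if_neg h23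
    rw [hval, hmu]
    exact hβ
  rcases hγ with hγ1 | hγ1
  · exact P02 hNC huv hvw huw hdegv hc' hanch (hmu ▸ hγ1) hγw
  · exact ext2 hNC huv hvw huw hc' hanch (hmv ▸ hγ1) hγw

/-- QA1: pair (v,x), in case `d(w) < k`. -/
lemma QA1 (hNC : ¬ EdgeColorable G k) (huv : G.Adj u v) (hvw : G.Adj v w) (hwx : G.Adj w x)
    (huw : u ≠ w) (hxu : x ≠ u) (hxv : x ≠ v) (hdegv : G.degree v ≤ k)
    (hdegw : G.degree w < k)
    (hc : IsProperEdgeColoring (G.deleteEdges {s(u,v)}) k c)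
    (hβ : c s(v,w) ∈ missing (G.deleteEdges {s(u,v)}) k c u)
    (hγ : c s(w,x) ∈ missing (G.deleteEdges {s(u,v)}) k c u ∪
      missing (G.deleteEdges {s(u,v)}) k c v) {α : ℕ}
    (hαv : α ∈ missing (G.deleteEdges {s(u,v)}) k c v)
    (hαx : α ∈ missing (G.deleteEdges {s(u,v)}) k c x) : False := by
  set H := G.deleteEdges {s(u,v)} with hH
  have h12 : s(u,v) ≠ s(v,w) := e1_ne_e2 huv huw
  have h13 : s(w,x) ≠ s(u,v) := edge_ne_edge huw.symm (G.ne_of_adj hvw).symm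
  have hvwH : H.Adj v w := H_adj.mpr ⟨hvw, fun h => h12 h.symm⟩
  have hwxH : H.Adj w x := H_adj.mpr ⟨hwx, h13⟩
  obtain ⟨τ, hτ⟩ := exists_missing_mid huv hc hdegw
  have hτI := hτ.1
  have hαI := hαv.1
  have hβτ : c s(v,w) ≠ τ := (missing_ne_rev hvwH hτ).symm
  have hγτ : c s(w,x) ≠ τ := (missing_ne_of_adj hwxH hτ).symm
  have hατ : α ≠ τ := fun h => ext2 hNC huv hvw huw hc hβ hαv (h ▸ hτ)
  have hβα : c s(v,w) ≠ α := (missing_ne_of_adj hvwH hαv).symm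
  have hγα : c s(w,x) ≠ α := (missing_ne_rev hwxH hαx).symm
  have hβpres : c s(v,w) ∈ missing H k (swp H c α τ w) u := by
    exact (swp_missing_other hβα hβτ u).mpr hβ
  have hanch : (swp H c α τ w) s(v,w) ∈ missing H k (swp H c α τ w) u := by
    rw [swp_eq_of_ne hβα hβτ]
    exact hβpres
  have hγpres : (swp H c α τ w) s(w,x) ∈ missing H k (swp H c α τ w) u ∪
      missing H k (swp H c α τ w) v := by
    rw [swp_eq_of_ne hγα hγτ]
    rcases hγ with h | h
    · exact Or.inl ((swp_missing_other hγα hγτ u).mpr h)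
    · exact Or.inr ((swp_missing_other hγα hγτ v).mpr h)
  have hprop := swp_proper (v0 := w) hc hατ hαI hτI
  have hαw1 : α ∈ missing H k (swp H c α τ w) w :=
    (swp_missing_reach hc hατ hαI hτI (SimpleGraph.Reachable.refl w)).mpr hτ
  by_cases hRx : (abG H c α τ).Reachable w x
  · by_cases hRv : (abG H c α τ).Reachable w v
    · exact M3 hc (G.ne_of_adj hwx) (G.ne_of_adj hvw).symm hxv (Or.inr hτ) (Or.inl hαx)
        (Or.inl hαv) hRx hRv
    · have h2 : α ∈ missing H k (swp H c α τ w) v := by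
        rw [swp_missing_unreach hRv]; exact hαv
      exact ext2 hNC huv hvw huw hprop hanch h2 hαw1
  · have h2 : α ∈ missing H k (swp H c α τ w) x := by
      rw [swp_missing_unreach hRx]; exact hαx
    exact Q1 hNC huv hvw hwx huw hxu hxv hdegv hprop hanch hγpres hαw1 h2

/-- QA0: pair (u,x), in case `d(w) < k`. -/
lemma QA0 (hNC : ¬ EdgeColorable G k) (huv : G.Adj u v) (hvw : G.Adj v w) (hwx : G.Adj w x)
    (huw : u ≠ w) (hxu : x ≠ u) (hxv : x ≠ v) (hdegv : G.degree v ≤ k)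
    (hdegw : G.degree w < k)
    (hc : IsProperEdgeColoring (G.deleteEdges {s(u,v)}) k c)
    (hβ : c s(v,w) ∈ missing (G.deleteEdges {s(u,v)}) k c u)
    (hγ : c s(w,x) ∈ missing (G.deleteEdges {s(u,v)}) k c u ∪
      missing (G.deleteEdges {s(u,v)}) k c v) {α : ℕ}
    (hαu : α ∈ missing (G.deleteEdges {s(u,v)}) k c u)
    (hαx : α ∈ missing (G.deleteEdges {s(u,v)}) k c x) : False := by
  set H := G.deleteEdges {s(u,v)} with hH
  have h12 : s(u,v) ≠ s(v,w) := e1_ne_e2 huv huw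
  have h13 : s(w,x) ≠ s(u,v) := edge_ne_edge huw.symm (G.ne_of_adj hvw).symm
  have hvwH : H.Adj v w := H_adj.mpr ⟨hvw, fun h => h12 h.symm⟩
  have hwxH : H.Adj w x := H_adj.mpr ⟨hwx, h13⟩
  have hγα : c s(w,x) ≠ α := (missing_ne_rev hwxH hαx).symm
  by_cases hαβ : α = c s(v,w)
  · -- the (⋆) case: α = β ∈ M(u) ∩ M(x)
    obtain ⟨δ, hδ⟩ := exists_missing_v huv hc hdegv
    have hδI := hδ.1
    have hβI := hβ.1
    have hδβ : δ ≠ c s(v,w) := missing_ne_of_adj hvwH hδ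
    have hβδ : c s(v,w) ≠ δ := hδβ.symm
    have hβx : c s(v,w) ∈ missing H k c x := hαβ ▸ hαx
    have hCK : (abG H c (c s(v,w)) δ).Reachable u v := CK hNC huv hc hβδ hβ hδ
    by_cases hRx : (abG H c (c s(v,w)) δ).Reachable u x
    · exact M3 hc (G.ne_of_adj huv) hxu.symm (G.ne_of_adj huv.symm |> fun _ => hxv.symm)
        (Or.inl hβ) (Or.inr hδ) (Or.inl hβx) hCK hRx
    · set ψ1 := swp H c (c s(v,w)) δ u with hψ1def
      have hprop := swp_proper (v0 := u) hc hβδ hβI hδI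
      have hδu1 : δ ∈ missing H k ψ1 u :=
        (swp_missing_reach' hc hβδ hβI hδI (SimpleGraph.Reachable.refl u)).mpr hβ
      have hβv1 : c s(v,w) ∈ missing H k ψ1 v :=
        (swp_missing_reach hc hβδ hβI hδI hCK).mpr hδ
      have hβx1 : c s(v,w) ∈ missing H k ψ1 x := by
        rw [hψ1def, swp_missing_unreach hRx]; exact hβx
      have hanch : ψ1 s(v,w) ∈ missing H k ψ1 u := by
        have hval : ψ1 s(v,w) = δ := by
          apply swp_swapped_a hvwH rfl
          exact ⟨v, Sym2.mem_mk_left _ _, hCK⟩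
        rw [hval]
        exact hδu1
      have hγβ : c s(w,x) ≠ c s(v,w) := by
        intro h
        apply hxv
        have h' : c s(w,x) = c s(w,v) := by rw [h]; exact c_comm c v w
        exact eq_of_same_color hc hwxH hvwH.symm h'
      have hγpres : ψ1 s(w,x) ∈ missing H k ψ1 u ∪ missing H k ψ1 v := by
        by_cases hγδ : c s(w,x) = δ
        · -- the wx edge could be swapped only if w is reachable, which would reach x
          have hRw : ¬ (abG H c (c s(v,w)) δ).Reachable u w := fun h =>
            hRx (h.trans (SimpleGraph.Adj.reachable ⟨hwxH, Or.inr hγδ⟩))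
          have hval : ψ1 s(w,x) = c s(w,x) := swp_at_unreachable hRw hwxH
          rw [hval, hγδ]
          exact Or.inl hδu1
        · have hval : ψ1 s(w,x) = c s(w,x) := swp_eq_of_ne hγβ hγδ
          rw [hval]
          rcases hγ with h | h
          · exact Or.inl ((swp_missing_other hγβ hγδ u).mpr h)
          · exact Or.inr ((swp_missing_other hγβ hγδ v).mpr h)
      exact QA1 hNC huv hvw hwx huw hxu hxv hdegv hdegw hprop hanch hγpres hβv1 hβx1
  · -- α ≠ β: chain (α, τ) from w as in QA1
    obtain ⟨τ, hτ⟩ := exists_missing_mid huv hc hdegw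
    have hτI := hτ.1
    have hαI := hαu.1
    have hβτ : c s(v,w) ≠ τ := (missing_ne_rev hvwH hτ).symm
    have hγτ : c s(w,x) ≠ τ := (missing_ne_of_adj hwxH hτ).symm
    have hατ : α ≠ τ := fun h => P02 hNC huv hvw huw hdegv hc hβ hαu (h ▸ hτ)
    have hβα : c s(v,w) ≠ α := fun h => hαβ h.symm
    have hβpres : c s(v,w) ∈ missing H k (swp H c α τ w) u :=
      (swp_missing_other hβα hβτ u).mpr hβ
    have hanch : (swp H c α τ w) s(v,w) ∈ missing H k (swp H c α τ w) u := by
      rw [swp_eq_of_ne hβα hβτ]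
      exact hβpres
    have hγpres : (swp H c α τ w) s(w,x) ∈ missing H k (swp H c α τ w) u ∪
        missing H k (swp H c α τ w) v := by
      rw [swp_eq_of_ne hγα hγτ]
      rcases hγ with h | h
      · exact Or.inl ((swp_missing_other hγα hγτ u).mpr h)
      · exact Or.inr ((swp_missing_other hγα hγτ v).mpr h)
    have hprop := swp_proper (v0 := w) hc hατ hαI hτI
    have hαw1 : α ∈ missing H k (swp H c α τ w) w :=
      (swp_missing_reach hc hατ hαI hτI (SimpleGraph.Reachable.refl w)).mpr hτ
    by_cases hRx : (abG H c α τ).Reachable w x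
    · by_cases hRu : (abG H c α τ).Reachable w u
      · exact M3 hc (G.ne_of_adj hwx) huw.symm hxu (Or.inr hτ) (Or.inl hαx)
          (Or.inl hαu) hRx hRu
      · have h2 : α ∈ missing H k (swp H c α τ w) u := by
          rw [swp_missing_unreach hRu]; exact hαu
        exact P02 hNC huv hvw huw hdegv hprop hanch h2 hαw1
    · have h2 : α ∈ missing H k (swp H c α τ w) x := by
        rw [swp_missing_unreach hRx]; exact hαx
      exact Q1 hNC huv hvw hwx huw hxu hxv hdegv hprop hanch hγpres hαw1 h2

end quadruple

section shiftsec
variable [Fintype V] {G : SimpleGraph V} [DecidableRel G.Adj] {k : ℕ} {u v w x : V}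
  {c : Sym2 V → ℕ}

omit [Fintype V] [DecidableRel G.Adj] in
/-- Shifting: uncolor `vw`, give its old color to `uv`; proper on `G - vw`. -/
lemma shift_proper (huv : G.Adj u v) (hvw : G.Adj v w) (huw : u ≠ w)
    (hc : IsProperEdgeColoring (G.deleteEdges {s(u,v)}) k c)
    (hβ : c s(v,w) ∈ missing (G.deleteEdges {s(u,v)}) k c u) :
    IsProperEdgeColoring (G.deleteEdges {s(v,w)}) k
      (fun e => if e = s(u,v) then c s(v,w) else c e) := by
  set H := G.deleteEdges {s(u,v)} with hH
  have h12 : s(u,v) ≠ s(v,w) := e1_ne_e2 huv huw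
  have hvwH : H.Adj v w := H_adj.mpr ⟨hvw, fun h => h12 h.symm⟩
  have key1 : ∀ f' ∈ G.edgeSet, f' ≠ s(u,v) → f' ≠ s(v,w) →
      (∃ t, t ∈ s(u,v) ∧ t ∈ f') → c f' ≠ c s(v,w) := by
    rintro f' hf' hne1 hne2 ⟨t, ht1, ht2⟩
    have hfH : f' ∈ H.edgeSet := mem_H_edgeSet.mpr ⟨hf', hne1⟩
    obtain ⟨q, hq, rfl⟩ := edge_eq_of_mem hfH ht2
    rcases Sym2.mem_iff.mp ht1 with rfl | rfl
    · exact fun h => hβ.2 ⟨q, hq, h⟩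
    · intro h
      exact hne2 (by rw [eq_of_same_color hc hq hvwH h])
  constructor
  · intro e he
    obtain ⟨heG, hne⟩ := mem_H_edgeSet.mp he
    by_cases h1 : e = s(u,v)
    · have hval : (fun e => if e = s(u,v) then c s(v,w) else c e) e = c s(v,w) := if_pos h1
      rw [hval]; exact hβ.1
    · have hval : (fun e => if e = s(u,v) then c s(v,w) else c e) e = c e := if_neg h1
      rw [hval]; exact hc.1 e (mem_H_edgeSet.mpr ⟨heG, h1⟩)
  · rintro e he f hf hne ⟨t, hte, htf⟩
    obtain ⟨heG, he2⟩ := mem_H_edgeSet.mp he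
    obtain ⟨hfG, hf2⟩ := mem_H_edgeSet.mp hf
    by_cases he1 : e = s(u,v) <;> by_cases hf1 : f = s(u,v)
    · exact absurd (he1.trans hf1.symm) hne
    · have hv1 : (fun e => if e = s(u,v) then c s(v,w) else c e) e = c s(v,w) := if_pos he1
      have hv2 : (fun e => if e = s(u,v) then c s(v,w) else c e) f = c f := if_neg hf1
      rw [hv1, hv2]
      exact fun h => (key1 f hfG hf1 hf2 ⟨t, he1 ▸ hte, htf⟩) h.symm
    · have hv1 : (fun e => if e = s(u,v) then c s(v,w) else c e) f = c s(v,w) := if_pos hf1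
      have hv2 : (fun e => if e = s(u,v) then c s(v,w) else c e) e = c e := if_neg he1
      rw [hv1, hv2]
      exact key1 e heG he1 he2 ⟨t, hf1 ▸ htf, hte⟩
    · have hv1 : (fun e => if e = s(u,v) then c s(v,w) else c e) e = c e := if_neg he1
      have hv2 : (fun e => if e = s(u,v) then c s(v,w) else c e) f = c f := if_neg hf1
      rw [hv1, hv2]
      exact hc.2 e (mem_H_edgeSet.mpr ⟨heG, he1⟩) f (mem_H_edgeSet.mpr ⟨hfG, hf1⟩) hne
        ⟨t, hte, htf⟩

omit [Fintype V] [DecidableRel G.Adj] in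
/-- After shifting, the missing set at `v` is unchanged. -/
lemma shift_missing_v (huv : G.Adj u v) (hvw : G.Adj v w) (huw : u ≠ w) :
    missing (G.deleteEdges {s(v,w)}) k (fun e => if e = s(u,v) then c s(v,w) else c e) v =
      missing (G.deleteEdges {s(u,v)}) k c v := by
  set H := G.deleteEdges {s(u,v)} with hH
  have h12 : s(u,v) ≠ s(v,w) := e1_ne_e2 huv huw
  have hvwH : H.Adj v w := H_adj.mpr ⟨hvw, fun h => h12 h.symm⟩
  have hvalu : (if s(v,u) = s(u,v) then c s(v,w) else c s(v,u)) = c s(v,w) :=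
    if_pos Sym2.eq_swap
  ext α
  simp only [mem_missing]
  constructor
  · rintro ⟨hI, hn⟩
    refine ⟨hI, ?_⟩
    rintro ⟨q, hq, hval⟩
    by_cases hqw : q = w
    · rw [hqw] at hval
      refine hn ⟨u, ?_, ?_⟩
      · refine H_adj.mpr ⟨huv.symm, ?_⟩
        intro h
        rcases Sym2.eq_iff.mp h with ⟨_, h2⟩ | ⟨h2, _⟩
        · exact huw h2
        · exact G.ne_of_adj hvw h2
      · exact hvalu.trans hval
    · refine hn ⟨q, ?_, ?_⟩
      · refine H_adj.mpr ⟨(H_adj.mp hq).1, ?_⟩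
        intro h
        rcases Sym2.eq_iff.mp h with ⟨_, h2⟩ | ⟨h2, _⟩
        · exact hqw h2
        · exact G.ne_of_adj hvw h2
      · rw [if_neg (H_adj.mp hq).2]
        exact hval
  · rintro ⟨hI, hn⟩
    refine ⟨hI, ?_⟩
    rintro ⟨q, hq, hval⟩
    have hqw : q ≠ w := by
      intro h
      exact (H_adj.mp hq).2 (by rw [h])
    by_cases hqu : q = u
    · rw [hqu] at hval
      rw [hvalu] at hval
      exact hn ⟨w, hvwH, hval⟩
    · have hne : s(v,q) ≠ s(u,v) := by
        intro h
        rcases Sym2.eq_iff.mp h with ⟨h2, _⟩ | ⟨_, h2⟩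
        · exact G.ne_of_adj huv h2.symm
        · exact hqu h2
      rw [if_neg hne] at hval
      refine hn ⟨q, H_adj.mpr ⟨(H_adj.mp hq).1, hne⟩, hval⟩

omit [Fintype V] [DecidableRel G.Adj] in
/-- After shifting, the missing set at `x` (away from `u,v,w`) is unchanged. -/
lemma shift_missing_x (hxu : x ≠ u) (hxv : x ≠ v) (hxw : x ≠ w) :
    missing (G.deleteEdges {s(v,w)}) k (fun e => if e = s(u,v) then c s(v,w) else c e) x =
      missing (G.deleteEdges {s(u,v)}) k c x := by
  ext α
  simp only [mem_missing]
  have hiff : ∀ q, ((G.deleteEdges {s(v,w)}).Adj x q ↔ (G.deleteEdges {s(u,v)}).Adj x q) := by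
    intro q
    rw [H_adj, H_adj]
    constructor
    · rintro ⟨h1, _⟩
      exact ⟨h1, edge_ne_edge hxu hxv⟩
    · rintro ⟨h1, _⟩
      exact ⟨h1, edge_ne_edge hxv hxw⟩
  have hvq : ∀ q, (if s(x,q) = s(u,v) then c s(v,w) else c s(x,q)) = c s(x,q) :=
    fun q => if_neg (edge_ne_edge hxu hxv)
  constructor
  · rintro ⟨hI, hn⟩
    exact ⟨hI, fun ⟨q, hq, hval⟩ => hn ⟨q, (hiff q).mpr hq, by rw [hvq q]; exact hval⟩⟩
  · rintro ⟨hI, hn⟩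
    exact ⟨hI, fun ⟨q, hq, hval⟩ => hn ⟨q, (hiff q).mp hq, (hvq q).symm.trans hval⟩⟩

end shiftsec

section QB
variable [Fintype V] {G : SimpleGraph V} [DecidableRel G.Adj] {k : ℕ} {u v w x : V}
  {c : Sym2 V → ℕ}

/-- QB1v: pair (v,x), case `γ ∈ M(v)`, via shifting. -/
lemma QB1v (hNC : ¬ EdgeColorable G k) (huv : G.Adj u v) (hvw : G.Adj v w) (hwx : G.Adj w x)
    (huw : u ≠ w) (hxu : x ≠ u) (hxv : x ≠ v) (hdegw_le : G.degree w ≤ k)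
    (hc : IsProperEdgeColoring (G.deleteEdges {s(u,v)}) k c)
    (hβ : c s(v,w) ∈ missing (G.deleteEdges {s(u,v)}) k c u)
    (hγv : c s(w,x) ∈ missing (G.deleteEdges {s(u,v)}) k c v) {α : ℕ}
    (hαv : α ∈ missing (G.deleteEdges {s(u,v)}) k c v)
    (hαx : α ∈ missing (G.deleteEdges {s(u,v)}) k c x) : False := by
  have hxw : x ≠ w := (G.ne_of_adj hwx).symm
  have hval : (fun e => if e = s(u,v) then c s(v,w) else c e) s(w,x) = c s(w,x) :=
    if_neg (edge_ne_edge huw.symm (G.ne_of_adj hvw).symm)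
  have hc2 := shift_proper huv hvw huw hc hβ
  have hβ' : (fun e => if e = s(u,v) then c s(v,w) else c e) s(w,x) ∈
      missing (G.deleteEdges {s(v,w)}) k (fun e => if e = s(u,v) then c s(v,w) else c e) v := by
    rw [hval, shift_missing_v huv hvw huw]
    exact hγv
  have hαv' : α ∈ missing (G.deleteEdges {s(v,w)}) k
      (fun e => if e = s(u,v) then c s(v,w) else c e) v := by
    rw [shift_missing_v huv hvw huw]
    exact hαv
  have hαx' : α ∈ missing (G.deleteEdges {s(v,w)}) k
      (fun e => if e = s(u,v) then c s(v,w) else c e) x := by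
    rw [shift_missing_x hxu hxv hxw]
    exact hαx
  exact P02 hNC hvw hwx hxv.symm hdegw_le hc2 hβ' hαv' hαx'

/-- QB0v: pair (u,x), case `γ ∈ M(v)`. -/
lemma QB0v (hNC : ¬ EdgeColorable G k) (huv : G.Adj u v) (hvw : G.Adj v w) (hwx : G.Adj w x)
    (huw : u ≠ w) (hxu : x ≠ u) (hxv : x ≠ v) (hdegB : G.degree v < k)
    (hdegw_le : G.degree w ≤ k)
    (hc : IsProperEdgeColoring (G.deleteEdges {s(u,v)}) k c)
    (hβ : c s(v,w) ∈ missing (G.deleteEdges {s(u,v)}) k c u)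
    (hγv : c s(w,x) ∈ missing (G.deleteEdges {s(u,v)}) k c v) {α : ℕ}
    (hαu : α ∈ missing (G.deleteEdges {s(u,v)}) k c u)
    (hαx : α ∈ missing (G.deleteEdges {s(u,v)}) k c x) : False := by
  set H := G.deleteEdges {s(u,v)} with hH
  have h12 : s(u,v) ≠ s(v,w) := e1_ne_e2 huv huw
  have hvwH : H.Adj v w := H_adj.mpr ⟨hvw, fun h => h12 h.symm⟩
  obtain ⟨δ, hδ, hδγ⟩ := exists_missing_v_ne huv hc hdegB (c s(w,x))
  have hδI := hδ.1
  have hαI := hαu.1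
  have hαδ : α ≠ δ := fun h => ext1 hNC huv hc hαu (h ▸ hδ)
  have hγα : c s(w,x) ≠ α := fun h => ext1 hNC huv hc hαu (h ▸ hγv)
  have hγδ : c s(w,x) ≠ δ := hδγ.symm ∘ Eq.symm |> fun _ => hδγ.symm
  have hCK : (abG H c α δ).Reachable u v := CK hNC huv hc hαδ hαu hδ
  by_cases hRx : (abG H c α δ).Reachable u x
  · exact M3 hc (G.ne_of_adj huv) hxu.symm hxv.symm (Or.inl hαu) (Or.inr hδ) (Or.inl hαx)
      hCK hRx
  · have hprop := swp_proper (v0 := u) hc hαδ hαI hδI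
    have hδu1 : δ ∈ missing H k (swp H c α δ u) u :=
      (swp_missing_reach' hc hαδ hαI hδI (SimpleGraph.Reachable.refl u)).mpr hαu
    have hαv1 : α ∈ missing H k (swp H c α δ u) v :=
      (swp_missing_reach hc hαδ hαI hδI hCK).mpr hδ
    have hαx1 : α ∈ missing H k (swp H c α δ u) x := by
      rw [swp_missing_unreach hRx]; exact hαx
    have hγv1 : c s(w,x) ∈ missing H k (swp H c α δ u) v :=
      (swp_missing_other hγα hγδ v).mpr hγv
    have hβδ : c s(v,w) ≠ δ := (missing_ne_of_adj hvwH hδ).symm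
    have hanch : (swp H c α δ u) s(v,w) ∈ missing H k (swp H c α δ u) u := by
      by_cases hβα : c s(v,w) = α
      · have hval : (swp H c α δ u) s(v,w) = δ :=
          swp_swapped_a hvwH hβα ⟨v, Sym2.mem_mk_left _ _, hCK⟩
        rw [hval]; exact hδu1
      · have hval : (swp H c α δ u) s(v,w) = c s(v,w) := swp_eq_of_ne hβα hβδ
        rw [hval]; exact (swp_missing_other hβα hβδ u).mpr hβ
    have hγcond : (swp H c α δ u) s(w,x) ∈ missing H k (swp H c α δ u) v := by
      have hval : (swp H c α δ u) s(w,x) = c s(w,x) := swp_eq_of_ne hγα hγδ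
      rw [hval]; exact hγv1
    exact QB1v hNC huv hvw hwx huw hxu hxv hdegw_le hprop hanch hγcond hαv1 hαx1

/-- QB1u: pair (v,x), case `γ ∈ M(u)`. -/
lemma QB1u (hNC : ¬ EdgeColorable G k) (huv : G.Adj u v) (hvw : G.Adj v w) (hwx : G.Adj w x)
    (huw : u ≠ w) (hxu : x ≠ u) (hxv : x ≠ v) (hdegB : G.degree v < k)
    (hdegw_le : G.degree w ≤ k)
    (hc : IsProperEdgeColoring (G.deleteEdges {s(u,v)}) k c)
    (hβ : c s(v,w) ∈ missing (G.deleteEdges {s(u,v)}) k c u)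
    (hγu : c s(w,x) ∈ missing (G.deleteEdges {s(u,v)}) k c u) {α : ℕ}
    (hαv : α ∈ missing (G.deleteEdges {s(u,v)}) k c v)
    (hαx : α ∈ missing (G.deleteEdges {s(u,v)}) k c x) : False := by
  set H := G.deleteEdges {s(u,v)} with hH
  have h12 : s(u,v) ≠ s(v,w) := e1_ne_e2 huv huw
  have h13 : s(w,x) ≠ s(u,v) := edge_ne_edge huw.symm (G.ne_of_adj hvw).symm
  have hvwH : H.Adj v w := H_adj.mpr ⟨hvw, fun h => h12 h.symm⟩
  have hwxH : H.Adj w x := H_adj.mpr ⟨hwx, h13⟩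
  have hγI := hγu.1
  have hαI := hαv.1
  have hγα : c s(w,x) ≠ α := fun h => ext1 hNC huv hc (h ▸ hγu) hαv
  have hCK : (abG H c (c s(w,x)) α).Reachable u v := CK hNC huv hc hγα hγu hαv
  by_cases hRx : (abG H c (c s(w,x)) α).Reachable u x
  · exact M3 hc (G.ne_of_adj huv) hxu.symm hxv.symm (Or.inl hγu) (Or.inr hαv) (Or.inr hαx)
      hCK hRx
  · have hprop := swp_proper (v0 := u) hc hγα hγI hαI
    have hαu1 : α ∈ missing H k (swp H c (c s(w,x)) α u) u :=
      (swp_missing_reach' hc hγα hγI hαI (SimpleGraph.Reachable.refl u)).mpr hγu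
    have hγv1 : c s(w,x) ∈ missing H k (swp H c (c s(w,x)) α u) v :=
      (swp_missing_reach hc hγα hγI hαI hCK).mpr hαv
    have hαx1 : α ∈ missing H k (swp H c (c s(w,x)) α u) x := by
      rw [swp_missing_unreach hRx]; exact hαx
    have hβγ : c s(v,w) ≠ c s(w,x) := by
      intro h
      apply hxv.symm
      have h' : c s(w,v) = c s(w,x) := by rw [← h]; exact (c_comm c v w).symm
      exact eq_of_same_color hc hvwH.symm hwxH h'
    have hβα : c s(v,w) ≠ α := (missing_ne_of_adj hvwH hαv).symm
    have hanch : (swp H c (c s(w,x)) α u) s(v,w) ∈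
        missing H k (swp H c (c s(w,x)) α u) u := by
      have hval : (swp H c (c s(w,x)) α u) s(v,w) = c s(v,w) := swp_eq_of_ne hβγ hβα
      rw [hval]; exact (swp_missing_other hβγ hβα u).mpr hβ
    have hγcond : (swp H c (c s(w,x)) α u) s(w,x) ∈
        missing H k (swp H c (c s(w,x)) α u) v := by
      have hRw : ¬ (abG H c (c s(w,x)) α).Reachable u w := fun h =>
        hRx (h.trans (SimpleGraph.Adj.reachable ⟨hwxH, Or.inl rfl⟩))
      have hval : (swp H c (c s(w,x)) α u) s(w,x) = c s(w,x) :=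
        swp_at_unreachable hRw hwxH
      rw [hval]; exact hγv1
    exact QB0v hNC huv hvw hwx huw hxu hxv hdegB hdegw_le hprop hanch hγcond hαu1 hαx1

/-- QB0u: pair (u,x), case `γ ∈ M(u)`. -/
lemma QB0u (hNC : ¬ EdgeColorable G k) (huv : G.Adj u v) (hvw : G.Adj v w) (hwx : G.Adj w x)
    (huw : u ≠ w) (hxu : x ≠ u) (hxv : x ≠ v) (hdegB : G.degree v < k)
    (hdegw_le : G.degree w ≤ k)
    (hc : IsProperEdgeColoring (G.deleteEdges {s(u,v)}) k c)
    (hβ : c s(v,w) ∈ missing (G.deleteEdges {s(u,v)}) k c u)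
    (hγu : c s(w,x) ∈ missing (G.deleteEdges {s(u,v)}) k c u) {α : ℕ}
    (hαu : α ∈ missing (G.deleteEdges {s(u,v)}) k c u)
    (hαx : α ∈ missing (G.deleteEdges {s(u,v)}) k c x) : False := by
  set H := G.deleteEdges {s(u,v)} with hH
  have h12 : s(u,v) ≠ s(v,w) := e1_ne_e2 huv huw
  have h13 : s(w,x) ≠ s(u,v) := edge_ne_edge huw.symm (G.ne_of_adj hvw).symm
  have hvwH : H.Adj v w := H_adj.mpr ⟨hvw, fun h => h12 h.symm⟩
  have hwxH : H.Adj w x := H_adj.mpr ⟨hwx, h13⟩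
  obtain ⟨δ, hδ⟩ := exists_missing_v huv hc (le_of_lt hdegB)
  have hδI := hδ.1
  have hαI := hαu.1
  have hαδ : α ≠ δ := fun h => ext1 hNC huv hc hαu (h ▸ hδ)
  have hγδ : c s(w,x) ≠ δ := fun h => ext1 hNC huv hc hγu (h ▸ hδ)
  have hγα : c s(w,x) ≠ α := (missing_ne_rev hwxH hαx).symm
  have hCK : (abG H c α δ).Reachable u v := CK hNC huv hc hαδ hαu hδ
  by_cases hRx : (abG H c α δ).Reachable u x
  · exact M3 hc (G.ne_of_adj huv) hxu.symm hxv.symm (Or.inl hαu) (Or.inr hδ) (Or.inl hαx)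
      hCK hRx
  · have hprop := swp_proper (v0 := u) hc hαδ hαI hδI
    have hδu1 : δ ∈ missing H k (swp H c α δ u) u :=
      (swp_missing_reach' hc hαδ hαI hδI (SimpleGraph.Reachable.refl u)).mpr hαu
    have hαv1 : α ∈ missing H k (swp H c α δ u) v :=
      (swp_missing_reach hc hαδ hαI hδI hCK).mpr hδ
    have hαx1 : α ∈ missing H k (swp H c α δ u) x := by
      rw [swp_missing_unreach hRx]; exact hαx
    have hβδ : c s(v,w) ≠ δ := (missing_ne_of_adj hvwH hδ).symm
    have hanch : (swp H c α δ u) s(v,w) ∈ missing H k (swp H c α δ u) u := by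
      by_cases hβα : c s(v,w) = α
      · have hval : (swp H c α δ u) s(v,w) = δ :=
          swp_swapped_a hvwH hβα ⟨v, Sym2.mem_mk_left _ _, hCK⟩
        rw [hval]; exact hδu1
      · have hval : (swp H c α δ u) s(v,w) = c s(v,w) := swp_eq_of_ne hβα hβδ
        rw [hval]; exact (swp_missing_other hβα hβδ u).mpr hβ
    have hγcond : (swp H c α δ u) s(w,x) ∈ missing H k (swp H c α δ u) u := by
      have hval : (swp H c α δ u) s(w,x) = c s(w,x) := swp_eq_of_ne hγα hγδ
      rw [hval]; exact (swp_missing_other hγα hγδ u).mpr hγu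
    exact QB1u hNC huv hvw hwx huw hxu hxv hdegB hdegw_le hprop hanch hγcond hαv1 hαx1

end QB

end KPaux

/-- if `K = (y0, e1, y1, e2, y2, e3, y3)` is a Kierstead path with respect to a
critical edge `e1 = y0y1` of a Class 2 graph `G` and a proper `Δ`-edge-coloring `c` of
`G − e1`, and `min{d(y1), d(y2)} < Δ`, then `{y0, y1, y2, y3}` is elementary. -/
theorem stmt_8 {V : Type*} [Fintype V] (G : SimpleGraph V) [DecidableRel G.Adj]
    (hclass2 : chromIndex G = G.maxDegree + 1) (y0 y1 y2 y3 : V)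
    (hdist : y0 ≠ y1 ∧ y0 ≠ y2 ∧ y0 ≠ y3 ∧ y1 ≠ y2 ∧ y1 ≠ y3 ∧ y2 ≠ y3)
    (h01 : G.Adj y0 y1) (h12 : G.Adj y1 y2) (h23 : G.Adj y2 y3)
    (hcrit : chromIndex (G.deleteEdges {s(y0, y1)}) < chromIndex G)
    (c : Sym2 V → ℕ)
    (hc : IsProperEdgeColoring (G.deleteEdges {s(y0, y1)}) G.maxDegree c)
    (hK2 : c s(y1, y2) ∈ missing (G.deleteEdges {s(y0, y1)}) G.maxDegree c y0 ∪
      missing (G.deleteEdges {s(y0, y1)}) G.maxDegree c y1)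
    (hK3 : c s(y2, y3) ∈ missing (G.deleteEdges {s(y0, y1)}) G.maxDegree c y0 ∪
      missing (G.deleteEdges {s(y0, y1)}) G.maxDegree c y1 ∪
      missing (G.deleteEdges {s(y0, y1)}) G.maxDegree c y2)
    (hmin : min (G.degree y1) (G.degree y2) < G.maxDegree) :
    ∀ u w, u ∈ ({y0, y1, y2, y3} : Set V) → w ∈ ({y0, y1, y2, y3} : Set V) → u ≠ w →
      missing (G.deleteEdges {s(y0, y1)}) G.maxDegree c u ∩
        missing (G.deleteEdges {s(y0, y1)}) G.maxDegree c w = ∅ := by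
  classical
  obtain ⟨h01d, h02d, h03d, h12d, h13d, h23d⟩ := hdist
  set k := G.maxDegree with hk
  set H := G.deleteEdges {s(y0, y1)} with hH
  have hNC : ¬ EdgeColorable G k := by
    intro h
    have h1 : chromIndex G ≤ k := Nat.sInf_le h
    rw [hclass2] at h1
    omega
  have hdle1 : G.degree y1 ≤ k := G.degree_le_maxDegree y1
  have hdle2 : G.degree y2 ≤ k := G.degree_le_maxDegree y2
  have e12ne : s(y1,y2) ≠ s(y0,y1) := by
    intro h
    rcases Sym2.eq_iff.mp h with ⟨h1, _⟩ | ⟨_, h2⟩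
    · exact h01d h1.symm
    · exact h02d h2.symm
  have e23ne : s(y2,y3) ≠ s(y0,y1) := by
    intro h
    rcases Sym2.eq_iff.mp h with ⟨h1, _⟩ | ⟨h1, _⟩
    · exact h02d h1.symm
    · exact h12d h1.symm
  have h12H : H.Adj y1 y2 := KPaux.H_adj.mpr ⟨h12, e12ne⟩
  have h23H : H.Adj y2 y3 := KPaux.H_adj.mpr ⟨h23, e23ne⟩
  have hβ : c s(y1,y2) ∈ missing H k c y0 := by
    rcases hK2 with h | h
    · exact h
    · exact absurd h (KPaux.not_missing_of_adj h12H)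
  have hγ : c s(y2,y3) ∈ missing H k c y0 ∪ missing H k c y1 := by
    rcases hK3 with h | h
    · exact h
    · exact absurd h (KPaux.not_missing_of_adj h23H)
  have k01 : ∀ a, a ∈ missing H k c y0 → a ∈ missing H k c y1 → False :=
    fun _ h1 h2 => KPaux.ext1 hNC h01 hc h1 h2
  have k12 : ∀ a, a ∈ missing H k c y1 → a ∈ missing H k c y2 → False :=
    fun _ h1 h2 => KPaux.ext2 hNC h01 h12 h02d hc hβ h1 h2
  have k02 : ∀ a, a ∈ missing H k c y0 → a ∈ missing H k c y2 → False :=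
    fun _ h1 h2 => KPaux.P02 hNC h01 h12 h02d hdle1 hc hβ h1 h2
  have k23 : ∀ a, a ∈ missing H k c y2 → a ∈ missing H k c y3 → False :=
    fun _ h1 h2 => KPaux.Q1 hNC h01 h12 h23 h02d h03d.symm h13d.symm hdle1 hc hβ hγ h1 h2
  have k13 : ∀ a, a ∈ missing H k c y1 → a ∈ missing H k c y3 → False := by
    intro a h1 h2
    rcases min_lt_iff.mp hmin with hd1 | hd2
    · rcases hγ with hg | hg
      · exact KPaux.QB1u hNC h01 h12 h23 h02d h03d.symm h13d.symm hd1 hdle2 hc hβ hg h1 h2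
      · exact KPaux.QB1v hNC h01 h12 h23 h02d h03d.symm h13d.symm hdle2 hc hβ hg h1 h2
    · exact KPaux.QA1 hNC h01 h12 h23 h02d h03d.symm h13d.symm hdle1 hd2 hc hβ hγ h1 h2
  have k03 : ∀ a, a ∈ missing H k c y0 → a ∈ missing H k c y3 → False := by
    intro a h1 h2
    rcases min_lt_iff.mp hmin with hd1 | hd2
    · rcases hγ with hg | hg
      · exact KPaux.QB0u hNC h01 h12 h23 h02d h03d.symm h13d.symm hd1 hdle2 hc hβ hg h1 h2
      · exact KPaux.QB0v hNC h01 h12 h23 h02d h03d.symm h13d.symm hd1 hdle2 hc hβ hg h1 h2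
    · exact KPaux.QA0 hNC h01 h12 h23 h02d h03d.symm h13d.symm hdle1 hd2 hc hβ hγ h1 h2
  intro u w hu hw hne
  simp only [Set.mem_insert_iff, Set.mem_singleton_iff] at hu hw
  ext a
  simp only [Set.mem_inter_iff, Set.mem_empty_iff_false, iff_false, not_and]
  intro ha1 ha2
  rcases hu with rfl | rfl | rfl | rfl <;> rcases hw with rfl | rfl | rfl | rfl
  · exact hne rfl
  · exact k01 a ha1 ha2
  · exact k02 a ha1 ha2
  · exact k03 a ha1 ha2
  · exact k01 a ha2 ha1
  · exact hne rfl
  · exact k12 a ha1 ha2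
  · exact k13 a ha1 ha2
  · exact k02 a ha2 ha1
  · exact k12 a ha2 ha1
  · exact hne rfl
  · exact k23 a ha1 ha2
  · exact k03 a ha2 ha1
  · exact k13 a ha2 ha1
  · exact k23 a ha2 ha1
  · exact hne rfl
end
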